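/- arXiv:1301.7464 — 7 statements merged into one kernel-verified Lean document; each statement's English description precedes it below -/
import Mathlib

section
/- Fix n ≥ 1 and an integer M ≥ 2. Let C_1, …, C_M be independent 𝒳^n-valued random vectors, each with i.i.d. coordinates of law P_X, and conditionally on C_1 = (x_1,…,x_n) let Y_1,…,Y_n be independent with Y_k distributed as W(·|x_k), with (C_2,…,C_M) independent of (C_1, Y^n). For x^n ∈ 𝒳^n, y^n ∈ 𝒴^n write i(x^n;y^n) = Σ_{k=1}^n i(x_k;y_k) and define g(x^n,y^n) = Σ_{x̄^n ∈ 𝒳^n} (∏_{k=1}^n P_X(x̄_k)) · 1{i(x̄^n;y^n) ≥ i(x^n;y^n)}. Then P[∃ j ∈ {2,…,M} : i(C_j;Y^n) ≥ i(C_1;Y^n)] ≤ E[min{1, (M−1)·g(C_1, Y^n)}] (the random coding union bound). -/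
open MeasureTheory ProbabilityTheory
open scoped Classical

/-- Output marginal `P_Y(y) = Σ_x P_X(x) W(y|x)`. -/
noncomputable def outDist {𝒳 𝒴 : Type*} [Fintype 𝒳] (pX : 𝒳 → ℝ) (W : 𝒳 → 𝒴 → ℝ)
    (y : 𝒴) : ℝ := ∑ x, pX x * W x y

/-- Information density `i(x;y) = log (W(y|x) / P_Y(y))`. -/
noncomputable def infoDen {𝒳 𝒴 : Type*} [Fintype 𝒳] (pX : 𝒳 → ℝ) (W : 𝒳 → 𝒴 → ℝ)
    (x : 𝒳) (y : 𝒴) : ℝ := Real.log (W x y / outDist pX W y)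

lemma aux_inner {J V : Type*} [DecidableEq J] [DecidableEq V] [Fintype J] [Fintype V] (p : V → ℝ) (hp : ∀ v, 0 ≤ p v)
    (hps : ∑ v, p v = 1) (cond : V → Prop) [DecidablePred cond] :
    ∑ c : J → V, (∏ j, p (c j)) * (if ∃ j, cond (c j) then (1:ℝ) else 0)
      ≤ min 1 ((Fintype.card J) * ∑ v, p v * (if cond v then (1:ℝ) else 0)) := by
  have hprodnn : ∀ c : J → V, (0:ℝ) ≤ ∏ j, p (c j) := fun c =>
    Finset.prod_nonneg fun j _ => hp _
  refine le_min ?_ ?_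
  · calc ∑ c : J → V, (∏ j, p (c j)) * (if ∃ j, cond (c j) then (1:ℝ) else 0)
        ≤ ∑ c : J → V, ∏ j, p (c j) := by
          refine Finset.sum_le_sum fun c _ => ?_
          exact mul_le_of_le_one_right (hprodnn c) (by split_ifs <;> norm_num)
      _ = ∏ j : J, ∑ v, p v := (Fintype.prod_sum _).symm
      _ = 1 := by simp [hps]
  · calc ∑ c : J → V, (∏ j, p (c j)) * (if ∃ j, cond (c j) then (1:ℝ) else 0)
        ≤ ∑ c : J → V, (∏ j, p (c j)) * ∑ j, (if cond (c j) then (1:ℝ) else 0) := by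
          refine Finset.sum_le_sum fun c _ => ?_
          refine mul_le_mul_of_nonneg_left ?_ (hprodnn c)
          split_ifs with h
          · obtain ⟨j0, hj0⟩ := h
            have h1 : (if cond (c j0) then (1:ℝ) else 0) = 1 := by simp [hj0]
            refine le_trans (le_of_eq h1.symm) ?_
            exact Finset.single_le_sum (f := fun j => if cond (c j) then (1:ℝ) else 0)
              (fun j _ => by by_cases h : cond (c j) <;> simp [h]) (Finset.mem_univ j0)
          · exact Finset.sum_nonneg fun j _ => by split_ifs <;> norm_num
      _ = ∑ j : J, ∑ c : J → V, (∏ j', p (c j')) * (if cond (c j) then (1:ℝ) else 0) := by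
          rw [Finset.sum_comm]
          congr 1; ext c
          rw [Finset.mul_sum]
      _ = ∑ j : J, ∑ v, p v * (if cond v then (1:ℝ) else 0) := by
          refine Finset.sum_congr rfl fun j _ => ?_
          have : ∀ c : J → V, (∏ j', p (c j')) * (if cond (c j) then (1:ℝ) else 0)
              = ∏ j', (p (c j') * (if j' = j then (if cond (c j') then (1:ℝ) else 0) else 1)) := by
            intro c
            rw [Finset.prod_mul_distrib, Finset.prod_ite_eq']
            simp
          simp_rw [this]
          rw [← Fintype.prod_sum
            (fun (j' : J) (v : V) => p v * if j' = j then (if cond v then (1:ℝ) else 0) else 1)]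
          rw [Finset.prod_eq_single j]
          · simp
          · intro j' _ hj'
            simp [hj', hps, ← Finset.sum_mul]
          · simp
      _ = (Fintype.card J) * ∑ v, p v * (if cond v then (1:ℝ) else 0) := by
          simp [Finset.sum_const, nsmul_eq_mul, Finset.card_univ]

set_option maxHeartbeats 2000000 in
/-- random coding union bound.  With `M ≥ 2` independent random
codewords `C₁, …, C_M` (here indexed by `Fin M`, with `C₁` the codeword of index `0`),
each with i.i.d. coordinates of law `P_X`, and `Y₁,…,Yₙ` the output of the channel with
input `C₁`, independent of the other codewords, one has
`P[∃ j ≠ 1, i(C_j;Yⁿ) ≥ i(C₁;Yⁿ)] ≤ E[min{1, (M−1)·g(C₁, Yⁿ)}]`. -/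
theorem stmt2 {𝒳 𝒴 : Type*} [Fintype 𝒳] [Nonempty 𝒳] [Fintype 𝒴] [Nonempty 𝒴]
    [MeasurableSpace 𝒳] [DiscreteMeasurableSpace 𝒳]
    [MeasurableSpace 𝒴] [DiscreteMeasurableSpace 𝒴]
    (pX : 𝒳 → ℝ) (hpXpos : ∀ x, 0 < pX x) (hpXsum : ∑ x, pX x = 1)
    (W : 𝒳 → 𝒴 → ℝ) (hWpos : ∀ x y, 0 < W x y) (hWsum : ∀ x, ∑ y, W x y = 1)
    {Ω : Type*} [MeasurableSpace Ω] (μ : Measure Ω) [IsProbabilityMeasure μ]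
    (n M : ℕ) (hn : 1 ≤ n) (hM : 2 ≤ M) [NeZero M]
    (C : Fin M → Ω → (Fin n → 𝒳)) (Y : Ω → Fin n → 𝒴)
    (hCm : ∀ j, Measurable (C j)) (hYm : Measurable Y)
    -- each codeword has i.i.d. coordinates of law `P_X`:
    (hClaw : ∀ j v, μ {ω | C j ω = v} = ENNReal.ofReal (∏ k, pX (v k)))
    -- conditionally on `C₁ = (x₁,…,xₙ)`, the `Y_k` are independent with law `W(·|x_k)`:
    (hC1Ylaw : ∀ v w, μ {ω | C 0 ω = v ∧ Y ω = w}
        = ENNReal.ofReal ((∏ k, pX (v k)) * ∏ k, W (v k) (w k)))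
    -- `C₁, …, C_M` are independent:
    (hCindep : iIndepFun C μ)
    -- `(C₂,…,C_M)` is independent of `(C₁, Yⁿ)`:
    (hcross : IndepFun (fun ω => (C 0 ω, Y ω))
        (fun ω (j : {j : Fin M // j ≠ 0}) => C j.1 ω) μ) :
    (μ {ω | ∃ j : Fin M, j ≠ 0 ∧
        (∑ k, infoDen pX W (C 0 ω k) (Y ω k)) ≤ ∑ k, infoDen pX W (C j ω k) (Y ω k)}).toReal
      ≤ ∫ ω, min 1 ((M - 1 : ℝ) *
          ∑ xbar : Fin n → 𝒳, (∏ k, pX (xbar k)) *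
            (if (∑ k, infoDen pX W (C 0 ω k) (Y ω k))
                ≤ ∑ k, infoDen pX W (xbar k) (Y ω k) then (1 : ℝ) else 0)) ∂μ := by
  -- abbreviations
  set p : (Fin n → 𝒳) → ℝ := fun v => ∏ k, pX (v k) with hp_def
  set q : (Fin n → 𝒳) → (Fin n → 𝒴) → ℝ := fun v w => ∏ k, W (v k) (w k) with hq_def
  set ff : (Fin n → 𝒳) → (Fin n → 𝒴) → ℝ :=
    fun v w => ∑ k, infoDen pX W (v k) (w k) with hff_def
  have hp0 : ∀ v, 0 ≤ p v := fun v => Finset.prod_nonneg fun k _ => (hpXpos _).le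
  have hq0 : ∀ v w, 0 ≤ q v w := fun v w => Finset.prod_nonneg fun k _ => (hWpos _ _).le
  have hpsum : ∑ v : Fin n → 𝒳, p v = 1 := by
    rw [show (∑ v : Fin n → 𝒳, p v) = ∑ v : Fin n → 𝒳, ∏ k, pX (v k) from rfl,
      ← Fintype.prod_sum fun (_ : Fin n) x => pX x]
    simp [hpXsum]
  -- the big product space
  set F : Ω → (Fin n → 𝒳) × (Fin n → 𝒴) × ({j : Fin M // j ≠ 0} → Fin n → 𝒳) :=
    fun ω => (C 0 ω, Y ω, fun j => C j.1 ω) with hF_def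
  have hFm : Measurable F :=
    (hCm 0).prodMk (hYm.prodMk (measurable_pi_lambda _ fun j => hCm j.1))
  -- factorization of the point masses of F
  have hfac : ∀ (v : Fin n → 𝒳) (w : Fin n → 𝒴) (c : {j : Fin M // j ≠ 0} → Fin n → 𝒳),
      μ (F ⁻¹' {(v, w, c)}) = ENNReal.ofReal ((p v * q v w) * ∏ j, p (c j)) := by
    intro v w c
    have hset : F ⁻¹' {(v, w, c)} =
        ((fun ω => (C 0 ω, Y ω)) ⁻¹' {(v, w)}) ∩
        ((fun ω (j : {j : Fin M // j ≠ 0}) => C j.1 ω) ⁻¹' {c}) := by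
      ext ω
      simp only [Set.mem_preimage, Set.mem_singleton_iff, Set.mem_inter_iff, hF_def,
        Prod.mk.injEq]
      tauto
    rw [hset, hcross.measure_inter_preimage_eq_mul _ _ (measurableSet_singleton _)
      (measurableSet_singleton _)]
    have h1 : μ ((fun ω => (C 0 ω, Y ω)) ⁻¹' {(v, w)}) = ENNReal.ofReal (p v * q v w) := by
      have : ((fun ω => (C 0 ω, Y ω)) ⁻¹' {(v, w)}) = {ω | C 0 ω = v ∧ Y ω = w} := by
        ext ω; simp [Prod.ext_iff]
      rw [this, hC1Ylaw]
    have h2 : μ ((fun ω (j : {j : Fin M // j ≠ 0}) => C j.1 ω) ⁻¹' {c}) = ∏ j : {j : Fin M // j ≠ 0}, ENNReal.ofReal (p (c j)) := by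
      set s : Fin M → Set Ω := fun i => (C i) ⁻¹' {v | ∀ h : i ≠ 0, v = c ⟨i, h⟩} with hs_def
      have hSset : ((fun ω (j : {j : Fin M // j ≠ 0}) => C j.1 ω) ⁻¹' {c})
          = ⋂ i ∈ Finset.univ.filter (· ≠ (0 : Fin M)), s i := by
        ext ω
        simp only [Set.mem_preimage, Set.mem_singleton_iff, Set.mem_iInter, Finset.mem_filter,
          Finset.mem_univ, true_and, hs_def, Set.mem_setOf_eq, funext_iff]
        constructor
        · intro h i hi hi'
          exact h ⟨i, hi'⟩
        · intro h j
          exact h j.1 j.2 j.2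
      rw [hSset, hCindep.meas_biInter (fun i _ => ?_)]
      · refine (Finset.prod_subtype (F := inferInstance) (Finset.univ.filter (· ≠ (0 : Fin M)))
          (p := fun j : Fin M => j ≠ 0) (fun i => by simp) (fun i => μ (s i))).trans ?_
        refine Finset.prod_congr rfl fun j _ => ?_
        have : s j.1 = {ω | C j.1 ω = c j} := by
          ext ω
          simp only [hs_def, Set.mem_preimage, Set.mem_setOf_eq]
          constructor
          · intro h; exact h j.2
          · intro h h'; exact h
        rw [this, hClaw]
      · exact MeasurableSpace.measurableSet_comap.mpr
          ⟨{v | ∀ h : i ≠ 0, v = c ⟨i, h⟩}, (Set.to_countable _).measurableSet, rfl⟩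
    rw [h1, h2, ← ENNReal.ofReal_prod_of_nonneg (fun j _ => hp0 _), ← ENNReal.ofReal_mul
      (mul_nonneg (hp0 _) (hq0 _ _))]
  -- nonnegativity of the point masses
  have hrnn : ∀ t : (Fin n → 𝒳) × (Fin n → 𝒴) × ({j : Fin M // j ≠ 0} → Fin n → 𝒳),
      0 ≤ (p t.1 * q t.1 t.2.1) * ∏ j, p (t.2.2 j) :=
    fun t => mul_nonneg (mul_nonneg (hp0 _) (hq0 _ _)) (Finset.prod_nonneg fun j _ => hp0 _)
  -- decompose the event into fibers of F
  set S : Finset ((Fin n → 𝒳) × (Fin n → 𝒴) × ({j : Fin M // j ≠ 0} → Fin n → 𝒳)) :=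
    Finset.univ.filter (fun t => ∃ j, ff t.1 t.2.1 ≤ ff (t.2.2 j) t.2.1) with hS_def
  have hA : {ω | ∃ j : Fin M, j ≠ 0 ∧
      (∑ k, infoDen pX W (C 0 ω k) (Y ω k)) ≤ ∑ k, infoDen pX W (C j ω k) (Y ω k)}
      = ⋃ t ∈ S, F ⁻¹' {t} := by
    ext ω
    simp only [Set.mem_setOf_eq, Set.mem_iUnion, Set.mem_preimage, Set.mem_singleton_iff,
      hS_def, Finset.mem_filter, Finset.mem_univ, true_and, exists_prop, hF_def]
    constructor
    · rintro ⟨j, hj, hle⟩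
      exact ⟨(C 0 ω, Y ω, fun j => C j.1 ω), ⟨⟨j, hj⟩, hle⟩, rfl⟩
    · rintro ⟨t, ⟨j, hle⟩, ht⟩
      rw [← ht] at hle
      exact ⟨j.1, j.2, hle⟩
  have hdisj : (↑S : Set ((Fin n → 𝒳) × (Fin n → 𝒴) × ({j : Fin M // j ≠ 0} → Fin n → 𝒳))).PairwiseDisjoint
      (fun t => F ⁻¹' {t}) :=
    fun a _ b _ hab => (Set.disjoint_singleton.mpr hab).preimage F
  have hmeas : ∀ t ∈ S, MeasurableSet (F ⁻¹' {t}) := fun t _ => hFm (measurableSet_singleton t)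
  have hterm : ∀ t ∈ S, μ (F ⁻¹' {t})
      = ENNReal.ofReal ((p t.1 * q t.1 t.2.1) * ∏ j, p (t.2.2 j)) :=
    fun t _ => hfac t.1 t.2.1 t.2.2
  rw [hA, measure_biUnion_finset hdisj hmeas, Finset.sum_congr rfl hterm,
    ← ENNReal.ofReal_sum_of_nonneg (fun t _ => hrnn t),
    ENNReal.toReal_ofReal (Finset.sum_nonneg fun t _ => hrnn t)]
  -- compute the right-hand side
  have hRHSint : (∫ ω, min 1 ((M - 1 : ℝ) *
          ∑ xbar : Fin n → 𝒳, (∏ k, pX (xbar k)) *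
            (if (∑ k, infoDen pX W (C 0 ω k) (Y ω k))
                ≤ ∑ k, infoDen pX W (xbar k) (Y ω k) then (1 : ℝ) else 0)) ∂μ)
      = ∑ v : Fin n → 𝒳, ∑ w : Fin n → 𝒴, (p v * q v w) *
          min 1 ((M - 1 : ℝ) * ∑ xbar : Fin n → 𝒳, p xbar *
            (if ff v w ≤ ff xbar w then (1:ℝ) else 0)) := by
    set G : Ω → (Fin n → 𝒳) × (Fin n → 𝒴) := fun ω => (C 0 ω, Y ω) with hG_def
    have hGm : Measurable G := (hCm 0).prodMk hYm
    set h : (Fin n → 𝒳) × (Fin n → 𝒴) → ℝ := fun z =>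
      min 1 ((M - 1 : ℝ) * ∑ xbar : Fin n → 𝒳, p xbar *
        (if ff z.1 z.2 ≤ ff xbar z.2 then (1:ℝ) else 0)) with hh_def
    have e1 : (∫ ω, min 1 ((M - 1 : ℝ) *
          ∑ xbar : Fin n → 𝒳, (∏ k, pX (xbar k)) *
            (if (∑ k, infoDen pX W (C 0 ω k) (Y ω k))
                ≤ ∑ k, infoDen pX W (xbar k) (Y ω k) then (1 : ℝ) else 0)) ∂μ)
        = ∫ z, h z ∂(μ.map G) :=
      (integral_map hGm.aemeasurable (measurable_of_countable h).aestronglyMeasurable).symm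
    rw [e1]
    haveI : IsProbabilityMeasure (μ.map G) := Measure.isProbabilityMeasure_map hGm.aemeasurable
    rw [integral_fintype (Integrable.of_finite)]
    have hmap : ∀ z : (Fin n → 𝒳) × (Fin n → 𝒴),
        μ.map G {z} = ENNReal.ofReal (p z.1 * q z.1 z.2) := by
      intro z
      rw [Measure.map_apply hGm (measurableSet_singleton z)]
      have : G ⁻¹' {z} = {ω | C 0 ω = z.1 ∧ Y ω = z.2} := by
        ext ω; simp [hG_def, Prod.ext_iff]
      rw [this, hC1Ylaw]
    rw [Fintype.sum_prod_type]
    refine Finset.sum_congr rfl fun v _ => Finset.sum_congr rfl fun w _ => ?_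
    rw [measureReal_def, hmap (v, w), ENNReal.toReal_ofReal (mul_nonneg (hp0 v) (hq0 v w)), smul_eq_mul]
  rw [hRHSint, hS_def, Finset.sum_filter, Fintype.sum_prod_type]
  simp_rw [Fintype.sum_prod_type]
  refine Finset.sum_le_sum fun v _ => Finset.sum_le_sum fun w _ => ?_
  have hinner : ∑ c : {j : Fin M // j ≠ 0} → Fin n → 𝒳,
      (if ∃ j, ff v w ≤ ff (c j) w then (p v * q v w) * ∏ j, p (c j) else 0)
      = (p v * q v w) * ∑ c : {j : Fin M // j ≠ 0} → Fin n → 𝒳,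
          (∏ j, p (c j)) * (if ∃ j, ff v w ≤ ff (c j) w then (1:ℝ) else 0) := by
    rw [Finset.mul_sum]
    refine Finset.sum_congr rfl fun c _ => ?_
    split_ifs <;> ring
  have hcard : ((Fintype.card {j : Fin M // j ≠ 0} : ℕ) : ℝ) = (M : ℝ) - 1 := by
    have : Fintype.card {j : Fin M // j ≠ 0} = M - 1 := by
      rw [Fintype.card_subtype_compl, Fintype.card_subtype_eq, Fintype.card_fin]
    rw [this, Nat.cast_sub (by omega), Nat.cast_one]
  have key := aux_inner (J := {j : Fin M // j ≠ 0}) p hp0 hpsum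
    (fun xbar => ff v w ≤ ff xbar w)
  rw [hcard] at key
  calc ∑ c : {j : Fin M // j ≠ 0} → Fin n → 𝒳,
      (if ∃ j, ff v w ≤ ff (c j) w then (p v * q v w) * ∏ j, p (c j) else 0)
      = (p v * q v w) * ∑ c : {j : Fin M // j ≠ 0} → Fin n → 𝒳,
          (∏ j, p (c j)) * (if ∃ j, ff v w ≤ ff (c j) w then (1:ℝ) else 0) := hinner
    _ ≤ (p v * q v w) * min 1 ((M - 1 : ℝ) * ∑ xbar : Fin n → 𝒳, p xbar *
          (if ff v w ≤ ff xbar w then (1:ℝ) else 0)) :=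
        mul_le_mul_of_nonneg_left key (mul_nonneg (hp0 v) (hq0 v w))
end

section
/- For every n ≥ 1 and every real M ≥ 1, defining g(x^n,y^n) = Σ_{x̄^n ∈ 𝒳^n} (∏_{k=1}^n P_X(x̄_k)) · 1{i(x̄^n;y^n) ≥ i(x^n;y^n)} where i(x^n;y^n) = Σ_{k=1}^n i(x_k;y_k), one has E[min{1, (M−1)·g((X_1,…,X_n),(Y_1,…,Y_n))}] ≤ E[exp(−[S_n − log M]^+)]. -/
open MeasureTheory ProbabilityTheory
open scoped Classical

/-- For every `n ≥ 1` and every real `M ≥ 1`, with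
`g(xⁿ,yⁿ) = Σ_{x̄ⁿ} (∏ₖ P_X(x̄ₖ)) 1{i(x̄ⁿ;yⁿ) ≥ i(xⁿ;yⁿ)}`, one has
`E[min{1, (M−1)·g(Xⁿ,Yⁿ)}] ≤ E[exp(−[Sₙ − log M]⁺)]`. -/
theorem stmt3 {𝒳 𝒴 : Type*} [Fintype 𝒳] [Nonempty 𝒳] [Fintype 𝒴] [Nonempty 𝒴]
    [MeasurableSpace 𝒳] [DiscreteMeasurableSpace 𝒳]
    [MeasurableSpace 𝒴] [DiscreteMeasurableSpace 𝒴]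
    (pX : 𝒳 → ℝ) (hpXpos : ∀ x, 0 < pX x) (hpXsum : ∑ x, pX x = 1)
    (W : 𝒳 → 𝒴 → ℝ) (hWpos : ∀ x y, 0 < W x y) (hWsum : ∀ x, ∑ y, W x y = 1)
    {Ω : Type*} [MeasurableSpace Ω] (μ : Measure Ω) [IsProbabilityMeasure μ]
    (X : ℕ → Ω → 𝒳) (Y : ℕ → Ω → 𝒴)
    (hXm : ∀ k, Measurable (X k)) (hYm : ∀ k, Measurable (Y k))
    -- `((X_k, Y_k))_k` is an i.i.d. sequence with law `P_{XY}`: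
    (hXYindep : iIndepFun (fun k ω => (X k ω, Y k ω)) μ)
    (hXYlaw : ∀ k x y, μ {ω | X k ω = x ∧ Y k ω = y} = ENNReal.ofReal (pX x * W x y))
    (n : ℕ) (hn : 1 ≤ n) (M : ℝ) (hM : 1 ≤ M) :
    ∫ ω, min 1 ((M - 1) *
        ∑ xbar : Fin n → 𝒳, (∏ k, pX (xbar k)) *
          (if (∑ k : Fin n, infoDen pX W (X k.1 ω) (Y k.1 ω))
              ≤ ∑ k : Fin n, infoDen pX W (xbar k) (Y k.1 ω) then (1 : ℝ) else 0)) ∂μ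
      ≤ ∫ ω, Real.exp (-(max ((∑ k ∈ Finset.range n, infoDen pX W (X k ω) (Y k ω))
          - Real.log M) 0)) ∂μ := by
  have hPYpos : ∀ y, 0 < outDist pX W y := fun y =>
    Finset.sum_pos (fun x _ => mul_pos (hpXpos x) (hWpos x y)) Finset.univ_nonempty
  have hMpos : (0 : ℝ) < M := lt_of_lt_of_le one_pos hM
  -- pointwise bound
  have hpt : ∀ ω,
      min 1 ((M - 1) *
        ∑ xbar : Fin n → 𝒳, (∏ k, pX (xbar k)) *
          (if (∑ k : Fin n, infoDen pX W (X k.1 ω) (Y k.1 ω))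
              ≤ ∑ k : Fin n, infoDen pX W (xbar k) (Y k.1 ω) then (1 : ℝ) else 0))
      ≤ Real.exp (-(max ((∑ k ∈ Finset.range n, infoDen pX W (X k ω) (Y k ω))
          - Real.log M) 0)) := by
    intro ω
    set S : ℝ := ∑ k : Fin n, infoDen pX W (X k.1 ω) (Y k.1 ω) with hS
    have hSrange : (∑ k ∈ Finset.range n, infoDen pX W (X k ω) (Y k ω)) = S := by
      rw [hS, Fin.sum_univ_eq_sum_range (fun k => infoDen pX W (X k ω) (Y k ω)) n]
    set g : ℝ := ∑ xbar : Fin n → 𝒳, (∏ k, pX (xbar k)) *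
          (if S ≤ ∑ k : Fin n, infoDen pX W (xbar k) (Y k.1 ω) then (1 : ℝ) else 0) with hg
    have hgnonneg : 0 ≤ g := Finset.sum_nonneg fun xbar _ =>
      mul_nonneg (Finset.prod_nonneg fun k _ => (hpXpos _).le) (by positivity)
    have hgle : g ≤ Real.exp (-S) := by
      have step1 : g ≤ ∑ xbar : Fin n → 𝒳, (∏ k, pX (xbar k)) *
          Real.exp ((∑ k : Fin n, infoDen pX W (xbar k) (Y k.1 ω)) - S) := by
        apply Finset.sum_le_sum
        intro xbar _
        by_cases h : S ≤ ∑ k : Fin n, infoDen pX W (xbar k) (Y k.1 ω)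
        · rw [if_pos h, mul_one]
          exact le_mul_of_one_le_right
            (Finset.prod_nonneg fun k _ => (hpXpos _).le)
            (Real.one_le_exp (by linarith))
        · rw [if_neg h, mul_zero]
          exact mul_nonneg (Finset.prod_nonneg fun k _ => (hpXpos _).le) (Real.exp_pos _).le
      have step2 : (∑ xbar : Fin n → 𝒳, (∏ k, pX (xbar k)) *
          Real.exp ((∑ k : Fin n, infoDen pX W (xbar k) (Y k.1 ω)) - S))
          = Real.exp (-S) := by
        have hterm : ∀ xbar : Fin n → 𝒳,
            (∏ k, pX (xbar k)) *
              Real.exp ((∑ k : Fin n, infoDen pX W (xbar k) (Y k.1 ω)) - S)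
            = Real.exp (-S) *
              ∏ k : Fin n, pX (xbar k) * (W (xbar k) (Y k.1 ω) / outDist pX W (Y k.1 ω)) := by
          intro xbar
          rw [sub_eq_add_neg, Real.exp_add, Real.exp_sum]
          have : ∀ k : Fin n, Real.exp (infoDen pX W (xbar k) (Y k.1 ω))
              = W (xbar k) (Y k.1 ω) / outDist pX W (Y k.1 ω) := fun k =>
            Real.exp_log (div_pos (hWpos _ _) (hPYpos _))
          simp_rw [this, Finset.prod_mul_distrib]
          ring
        simp_rw [hterm, ← Finset.mul_sum]
        have : (∑ xbar : Fin n → 𝒳,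
            ∏ k : Fin n, pX (xbar k) * (W (xbar k) (Y k.1 ω) / outDist pX W (Y k.1 ω))) = 1 := by
          rw [← Fintype.prod_sum
            (fun (k : Fin n) (x : 𝒳) => pX x * (W x (Y k.1 ω) / outDist pX W (Y k.1 ω)))]
          apply Finset.prod_eq_one
          intro k _
          have : (∑ x : 𝒳, pX x * (W x (Y k.1 ω) / outDist pX W (Y k.1 ω)))
              = (∑ x : 𝒳, pX x * W x (Y k.1 ω)) / outDist pX W (Y k.1 ω) := by
            rw [Finset.sum_div]
            exact Finset.sum_congr rfl fun x _ => by ring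
          rw [this]
          exact div_self (hPYpos _).ne'
        rw [this, mul_one]
      exact step1.trans step2.le
    rw [hSrange]
    have hrhs : Real.exp (-(max (S - Real.log M) 0)) = min 1 (M * Real.exp (-S)) := by
      have h1 : -(max (S - Real.log M) 0) = min (-(S - Real.log M)) (-0) :=
        (min_neg_neg _ _).symm
      rw [h1, Real.exp_monotone.map_min, neg_zero, Real.exp_zero, neg_sub,
        Real.exp_sub, Real.exp_log hMpos, min_comm, div_eq_mul_inv, ← Real.exp_neg]
    calc min 1 ((M - 1) * g) ≤ min 1 (M * Real.exp (-S)) :=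
          min_le_min le_rfl (by nlinarith [Real.exp_pos (-S)])
      _ = Real.exp (-(max (S - Real.log M) 0)) := hrhs.symm
  have hmeas : Measurable (fun ω => Real.exp (-(max
      ((∑ k ∈ Finset.range n, infoDen pX W (X k ω) (Y k ω)) - Real.log M) 0))) := by
    have h1 : Measurable (fun ω => ∑ k ∈ Finset.range n, infoDen pX W (X k ω) (Y k ω)) := by
      apply Finset.measurable_sum
      intro k _
      exact (Measurable.of_discrete (f := fun p : 𝒳 × 𝒴 => infoDen pX W p.1 p.2)).comp
        ((hXm k).prodMk (hYm k))
    exact (((h1.sub measurable_const).max measurable_const).neg).exp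
  refine integral_mono_of_nonneg ?_ ?_ (Filter.Eventually.of_forall hpt)
  · filter_upwards with ω
    refine le_min zero_le_one (mul_nonneg (by linarith) ?_)
    exact Finset.sum_nonneg fun xbar _ =>
      mul_nonneg (Finset.prod_nonneg fun k _ => (hpXpos _).le) (by positivity)
  · refine Integrable.mono' (integrable_const 1) hmeas.aestronglyMeasurable ?_
    filter_upwards with ω
    rw [Real.norm_eq_abs, abs_of_pos (Real.exp_pos _)]
    exact Real.exp_le_one_iff.mpr (neg_nonpos.2 (le_max_right _ _))
end

section
/- For every n ≥ 1, one has E[exp(−[S_n]^+)] = P[S_n ≤ 0] + P[S̄_n > 0]. -/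
open MeasureTheory ProbabilityTheory

section Finite

variable {𝒳 𝒴 : Type*} [Fintype 𝒳] [Nonempty 𝒳] [Fintype 𝒴]
  (pX : 𝒳 → ℝ) (W : 𝒳 → 𝒴 → ℝ) {n : ℕ}

lemma outDist_pos (hpXpos : ∀ x, 0 < pX x) (hWpos : ∀ x y, 0 < W x y) (y : 𝒴) :
    0 < outDist pX W y :=
  Finset.sum_pos (fun x _ => mul_pos (hpXpos x) (hWpos x y)) Finset.univ_nonempty

lemma keyFinite (hpXpos : ∀ x, 0 < pX x) (hpXsum : ∑ x, pX x = 1)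
    (hWpos : ∀ x y, 0 < W x y) (n : ℕ) :
    ∑ u : (Fin n → 𝒳 × 𝒴) × (Fin n → 𝒳),
        ((∏ k, pX (u.1 k).1 * W (u.1 k).1 (u.1 k).2) * ∏ k, pX (u.2 k)) *
          Real.exp (-(max (∑ k, infoDen pX W (u.1 k).1 (u.1 k).2) 0))
      = (∑ u : (Fin n → 𝒳 × 𝒴) × (Fin n → 𝒳),
          if (∑ k, infoDen pX W (u.1 k).1 (u.1 k).2) ≤ 0 then
            ((∏ k, pX (u.1 k).1 * W (u.1 k).1 (u.1 k).2) * ∏ k, pX (u.2 k)) else 0)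
        + ∑ u : (Fin n → 𝒳 × 𝒴) × (Fin n → 𝒳),
          if 0 < (∑ k, infoDen pX W (u.2 k) (u.1 k).2) then
            ((∏ k, pX (u.1 k).1 * W (u.1 k).1 (u.1 k).2) * ∏ k, pX (u.2 k)) else 0 := by
  classical
  set PY : 𝒴 → ℝ := outDist pX W with hPY
  have hPYpos : ∀ y, 0 < PY y := outDist_pos pX W hpXpos hWpos
  -- pointwise split of exp(-max s 0)
  have hsplit : ∀ (s : ℝ) (a : ℝ), a * Real.exp (-(max s 0))
      = (if s ≤ 0 then a else 0) + (if 0 < s then a * Real.exp (-s) else 0) := by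
    intro s a
    rcases le_or_gt s 0 with h | h
    · rw [if_pos h, if_neg (not_lt.2 h), max_eq_right h]
      simp
    · rw [if_neg (not_le.2 h), if_pos h, max_eq_left h.le]
      simp
  rw [Finset.sum_congr rfl (fun u _ => hsplit _ _), Finset.sum_add_distrib]
  congr 1
  -- remains: tilting identity
  -- sum over v of ∏ pX (v k) is 1
  have hQ : ∑ v : Fin n → 𝒳, ∏ k, pX (v k) = 1 := by
    rw [← Fintype.piFinset_univ, ← Finset.prod_univ_sum]
    simp [hpXsum]
  -- exp(-S) * P = ∏ pX * PY
  have htilt : ∀ z : Fin n → 𝒳 × 𝒴,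
      (∏ k, pX (z k).1 * W (z k).1 (z k).2) *
        Real.exp (-(∑ k, infoDen pX W (z k).1 (z k).2))
      = ∏ k, pX (z k).1 * PY (z k).2 := by
    intro z
    rw [← Finset.sum_neg_distrib, Real.exp_sum, ← Finset.prod_mul_distrib]
    refine Finset.prod_congr rfl fun k _ => ?_
    rw [infoDen, Real.exp_neg, Real.exp_log
      (div_pos (hWpos _ _) (hPYpos _))]
    field_simp [(hWpos (z k).1 (z k).2).ne']
  -- Change of measure / symmetry argument
  have hPYprod : ∀ y : Fin n → 𝒴,
      ∑ x : Fin n → 𝒳, ∏ k, pX (x k) * W (x k) (y k) = ∏ k, PY (y k) := by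
    intro y
    rw [← Fintype.piFinset_univ,
      Finset.sum_prod_piFinset Finset.univ (fun k a => pX a * W a (y k))]
    rfl
  calc
    ∑ u : (Fin n → 𝒳 × 𝒴) × (Fin n → 𝒳),
        (if 0 < ∑ k, infoDen pX W (u.1 k).1 (u.1 k).2 then
          ((∏ k, pX (u.1 k).1 * W (u.1 k).1 (u.1 k).2) * ∏ k, pX (u.2 k)) *
            Real.exp (-(∑ k, infoDen pX W (u.1 k).1 (u.1 k).2)) else 0)
      = ∑ z : Fin n → 𝒳 × 𝒴, (if 0 < ∑ k, infoDen pX W (z k).1 (z k).2 then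
          ∏ k, pX (z k).1 * PY (z k).2 else 0) := by
        rw [Fintype.sum_prod_type]
        refine Finset.sum_congr rfl fun z _ => ?_
        by_cases h : 0 < ∑ k, infoDen pX W (z k).1 (z k).2
        · simp only [if_pos h]
          have harr : ∀ v : Fin n → 𝒳,
              ((∏ k, pX (z k).1 * W (z k).1 (z k).2) * ∏ k, pX (v k)) *
                Real.exp (-(∑ k, infoDen pX W (z k).1 (z k).2))
              = ((∏ k, pX (z k).1 * W (z k).1 (z k).2) *
                  Real.exp (-(∑ k, infoDen pX W (z k).1 (z k).2))) * ∏ k, pX (v k) :=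
            fun v => by ring
          rw [Finset.sum_congr rfl fun v _ => harr v, ← Finset.mul_sum, hQ, mul_one, htilt z]
        · simp [h]
    _ = ∑ p : (Fin n → 𝒳) × (Fin n → 𝒴), (if 0 < ∑ k, infoDen pX W (p.1 k) (p.2 k) then
          ∏ k, pX (p.1 k) * PY (p.2 k) else 0) :=
        Fintype.sum_equiv (Equiv.arrowProdEquivProdArrow (Fin n) (fun _ => 𝒳) (fun _ => 𝒴)) _ _ (fun z => rfl)
    _ = ∑ y : Fin n → 𝒴, ∑ x : Fin n → 𝒳, (if 0 < ∑ k, infoDen pX W (x k) (y k) then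
          (∏ k, PY (y k)) * ∏ k, pX (x k) else 0) := by
        rw [Fintype.sum_prod_type]
        rw [Finset.sum_comm]
        refine Finset.sum_congr rfl fun y _ => Finset.sum_congr rfl fun x _ => ?_
        rw [Finset.prod_mul_distrib, mul_comm]
    _ = ∑ y : Fin n → 𝒴, ∑ v : Fin n → 𝒳, (if 0 < ∑ k, infoDen pX W (v k) (y k) then
          (∑ x : Fin n → 𝒳, ∏ k, pX (x k) * W (x k) (y k)) * ∏ k, pX (v k) else 0) := by
        refine Finset.sum_congr rfl fun y _ => Finset.sum_congr rfl fun x _ => ?_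
        rw [hPYprod]
    _ = ∑ y : Fin n → 𝒴, ∑ v : Fin n → 𝒳, ∑ x : Fin n → 𝒳,
          (if 0 < ∑ k, infoDen pX W (v k) (y k) then
            (∏ k, pX (x k) * W (x k) (y k)) * ∏ k, pX (v k) else 0) := by
        refine Finset.sum_congr rfl fun y _ => Finset.sum_congr rfl fun v _ => ?_
        by_cases h : 0 < ∑ k, infoDen pX W (v k) (y k)
        · simp only [if_pos h, Finset.sum_mul]
        · simp [h]
    _ = ∑ p : (Fin n → 𝒳) × (Fin n → 𝒴), ∑ v : Fin n → 𝒳,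
          (if 0 < ∑ k, infoDen pX W (v k) (p.2 k) then
            (∏ k, pX (p.1 k) * W (p.1 k) (p.2 k)) * ∏ k, pX (v k) else 0) := by
        rw [Fintype.sum_prod_type]
        rw [Finset.sum_congr rfl fun y (_ : y ∈ Finset.univ) => (Finset.sum_comm ..)]
        exact Finset.sum_comm
    _ = ∑ u : (Fin n → 𝒳 × 𝒴) × (Fin n → 𝒳),
          (if 0 < ∑ k, infoDen pX W (u.2 k) (u.1 k).2 then
            ((∏ k, pX (u.1 k).1 * W (u.1 k).1 (u.1 k).2) * ∏ k, pX (u.2 k)) else 0) := by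
        exact ((Fintype.sum_equiv (Equiv.arrowProdEquivProdArrow (Fin n) (fun _ => 𝒳) (fun _ => 𝒴)) _ _
            (fun z => rfl)).symm).trans
          (Fintype.sum_prod_type (fun u : (Fin n → 𝒳 × 𝒴) × (Fin n → 𝒳) =>
            if 0 < ∑ k, infoDen pX W (u.2 k) (u.1 k).2 then
              (∏ k, pX (u.1 k).1 * W (u.1 k).1 (u.1 k).2) * ∏ k, pX (u.2 k) else 0)).symm
end Finite


/-- For every `n ≥ 1`,
`E[exp(−[Sₙ]⁺)] = P[Sₙ ≤ 0] + P[S̄ₙ > 0]`. -/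
theorem stmt4 {𝒳 𝒴 : Type*} [Fintype 𝒳] [Nonempty 𝒳] [Fintype 𝒴] [Nonempty 𝒴]
    [MeasurableSpace 𝒳] [DiscreteMeasurableSpace 𝒳]
    [MeasurableSpace 𝒴] [DiscreteMeasurableSpace 𝒴]
    (pX : 𝒳 → ℝ) (hpXpos : ∀ x, 0 < pX x) (hpXsum : ∑ x, pX x = 1)
    (W : 𝒳 → 𝒴 → ℝ) (hWpos : ∀ x y, 0 < W x y) (hWsum : ∀ x, ∑ y, W x y = 1)
    {Ω : Type*} [MeasurableSpace Ω] (μ : Measure Ω) [IsProbabilityMeasure μ]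
    (X : ℕ → Ω → 𝒳) (Y : ℕ → Ω → 𝒴) (Xbar : ℕ → Ω → 𝒳)
    (hXm : ∀ k, Measurable (X k)) (hYm : ∀ k, Measurable (Y k))
    (hXbarm : ∀ k, Measurable (Xbar k))
    -- `((X_k, Y_k))_k` is an i.i.d. sequence with law `P_{XY}`:
    (hXYindep : iIndepFun (fun k ω => (X k ω, Y k ω)) μ)
    (hXYlaw : ∀ k x y, μ {ω | X k ω = x ∧ Y k ω = y} = ENNReal.ofReal (pX x * W x y))
    -- `(X̄_k)_k` is an i.i.d. sequence with law `P_X`: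
    (hXbarindep : iIndepFun Xbar μ)
    (hXbarlaw : ∀ k x, μ {ω | Xbar k ω = x} = ENNReal.ofReal (pX x))
    -- independent of `((X_k, Y_k))_k`:
    (hcross : IndepFun (fun ω (k : ℕ) => (X k ω, Y k ω)) (fun ω (k : ℕ) => Xbar k ω) μ)
    (n : ℕ) (hn : 1 ≤ n) :
    ∫ ω, Real.exp (-(max (∑ k ∈ Finset.range n, infoDen pX W (X k ω) (Y k ω)) 0)) ∂μ
      = (μ {ω | (∑ k ∈ Finset.range n, infoDen pX W (X k ω) (Y k ω)) ≤ 0}).toReal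
        + (μ {ω | 0 < ∑ k ∈ Finset.range n, infoDen pX W (Xbar k ω) (Y k ω)}).toReal := by
  classical
  set T : Ω → (Fin n → 𝒳 × 𝒴) × (Fin n → 𝒳) :=
    fun ω => (fun k => (X k ω, Y k ω), fun k => Xbar k ω) with hT
  have hTm : Measurable T := by
    refine Measurable.prodMk ?_ ?_ <;> refine measurable_pi_lambda _ fun k => ?_
    · exact (hXm k).prodMk (hYm k)
    · exact hXbarm k
  -- weight function
  set wt : (Fin n → 𝒳 × 𝒴) × (Fin n → 𝒳) → ℝ :=
    fun u => (∏ k, pX (u.1 k).1 * W (u.1 k).1 (u.1 k).2) * ∏ k, pX (u.2 k) with hwt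
  have hwtnn : ∀ u, 0 ≤ wt u := by
    intro u
    refine mul_nonneg (Finset.prod_nonneg fun k _ => ?_) (Finset.prod_nonneg fun k _ => ?_)
    · exact (mul_pos (hpXpos _) (hWpos _ _)).le
    · exact (hpXpos _).le
  -- law of T on singletons
  have hsingle : ∀ u : (Fin n → 𝒳 × 𝒴) × (Fin n → 𝒳),
      μ (T ⁻¹' {u}) = ENNReal.ofReal (wt u) := by
    rintro ⟨z, v⟩
    -- express as intersection of two preimages
    have c0 : 𝒳 × 𝒴 := Classical.arbitrary _
    set sA : ℕ → Set Ω := fun k =>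
      (fun ω => (X k ω, Y k ω)) ⁻¹' {if h : k < n then z ⟨k, h⟩ else Classical.arbitrary _} with hsA
    set sB : ℕ → Set Ω := fun k =>
      (Xbar k) ⁻¹' {if h : k < n then v ⟨k, h⟩ else Classical.arbitrary _} with hsB
    have hsetA : ((fun ω (k : ℕ) => (X k ω, Y k ω)) ⁻¹'
        {f : ℕ → 𝒳 × 𝒴 | ∀ k : Fin n, f k = z k}) = ⋂ k ∈ Finset.range n, sA k := by
      ext ω
      simp only [Set.mem_preimage, Set.mem_setOf_eq, Set.mem_iInter, Finset.mem_range, hsA,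
        Set.mem_singleton_iff]
      constructor
      · intro h k hk; rw [dif_pos hk]; exact h ⟨k, hk⟩
      · intro h k; have := h k k.2; rwa [dif_pos k.2] at this
    have hsetB : ((fun ω (k : ℕ) => Xbar k ω) ⁻¹'
        {f : ℕ → 𝒳 | ∀ k : Fin n, f k = v k}) = ⋂ k ∈ Finset.range n, sB k := by
      ext ω
      simp only [Set.mem_preimage, Set.mem_setOf_eq, Set.mem_iInter, Finset.mem_range, hsB,
        Set.mem_singleton_iff]
      constructor
      · intro h k hk; rw [dif_pos hk]; exact h ⟨k, hk⟩
      · intro h k; have := h k k.2; rwa [dif_pos k.2] at this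
    have hTset : T ⁻¹' {(z, v)}
        = ((fun ω (k : ℕ) => (X k ω, Y k ω)) ⁻¹' {f : ℕ → 𝒳 × 𝒴 | ∀ k : Fin n, f k = z k})
          ∩ ((fun ω (k : ℕ) => Xbar k ω) ⁻¹' {f : ℕ → 𝒳 | ∀ k : Fin n, f k = v k}) := by
      ext ω
      simp only [Set.mem_preimage, Set.mem_singleton_iff, Prod.ext_iff, funext_iff, hT,
        Set.mem_inter_iff, Set.mem_setOf_eq]
    have hmA : MeasurableSet {f : ℕ → 𝒳 × 𝒴 | ∀ k : Fin n, f k = z k} := by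
      have : {f : ℕ → 𝒳 × 𝒴 | ∀ k : Fin n, f k = z k}
          = ⋂ k : Fin n, (fun f : ℕ → 𝒳 × 𝒴 => f k) ⁻¹' {z k} := by
        ext f; simp
      rw [this]
      exact MeasurableSet.iInter fun k =>
        (measurable_pi_apply (k : ℕ)) (measurableSet_singleton _)
    have hmB : MeasurableSet {f : ℕ → 𝒳 | ∀ k : Fin n, f k = v k} := by
      have : {f : ℕ → 𝒳 | ∀ k : Fin n, f k = v k}
          = ⋂ k : Fin n, (fun f : ℕ → 𝒳 => f k) ⁻¹' {v k} := by
        ext f; simp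
      rw [this]
      exact MeasurableSet.iInter fun k =>
        (measurable_pi_apply (k : ℕ)) (measurableSet_singleton _)
    rw [hTset, hcross.measure_inter_preimage_eq_mul _ _ hmA hmB, hsetA, hsetB]
    -- first factor
    have hA : μ (⋂ k ∈ Finset.range n, sA k)
        = ENNReal.ofReal (∏ k, pX (z k).1 * W (z k).1 (z k).2) := by
      rw [hXYindep.meas_biInter (fun k hk => ?_)]
      · have : ∀ k ∈ Finset.range n, μ (sA k)
            = ENNReal.ofReal (if h : k < n then pX (z ⟨k, h⟩).1 * W (z ⟨k, h⟩).1 (z ⟨k, h⟩).2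
                else 1) := by
          intro k hk
          rw [Finset.mem_range] at hk
          rw [dif_pos hk]
          have : sA k = {ω | X k ω = (z ⟨k, hk⟩).1 ∧ Y k ω = (z ⟨k, hk⟩).2} := by
            ext ω
            simp only [hsA, Set.mem_preimage, Set.mem_singleton_iff, dif_pos hk, Prod.ext_iff,
              Set.mem_setOf_eq]
          rw [this, hXYlaw]
        rw [Finset.prod_congr rfl this, ← ENNReal.ofReal_prod_of_nonneg]
        · congr 1
          rw [← Fin.prod_univ_eq_prod_range
            (fun k => if h : k < n then pX (z ⟨k, h⟩).1 * W (z ⟨k, h⟩).1 (z ⟨k, h⟩).2 else 1) n]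
          exact Finset.prod_congr rfl fun k _ => by rw [dif_pos k.2]
        · intro k hk
          rw [Finset.mem_range] at hk
          rw [dif_pos hk]
          exact (mul_pos (hpXpos _) (hWpos _ _)).le
      · exact ⟨_, measurableSet_singleton _, rfl⟩
    have hB : μ (⋂ k ∈ Finset.range n, sB k) = ENNReal.ofReal (∏ k, pX (v k)) := by
      rw [hXbarindep.meas_biInter (fun k hk => ?_)]
      · have : ∀ k ∈ Finset.range n, μ (sB k)
            = ENNReal.ofReal (if h : k < n then pX (v ⟨k, h⟩) else 1) := by
          intro k hk
          rw [Finset.mem_range] at hk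
          rw [dif_pos hk]
          have : sB k = {ω | Xbar k ω = v ⟨k, hk⟩} := by
            ext ω
            simp only [hsB, Set.mem_preimage, Set.mem_singleton_iff, dif_pos hk,
              Set.mem_setOf_eq]
          rw [this, hXbarlaw]
        rw [Finset.prod_congr rfl this, ← ENNReal.ofReal_prod_of_nonneg]
        · congr 1
          rw [← Fin.prod_univ_eq_prod_range (fun k => if h : k < n then pX (v ⟨k, h⟩) else 1) n]
          exact Finset.prod_congr rfl fun k _ => by rw [dif_pos k.2]
        · intro k hk
          rw [Finset.mem_range] at hk
          rw [dif_pos hk]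
          exact (hpXpos _).le
      · exact ⟨_, measurableSet_singleton _, rfl⟩
    rw [hA, hB, ← ENNReal.ofReal_mul (Finset.prod_nonneg fun k _ =>
      (mul_pos (hpXpos _) (hWpos _ _)).le)]
  -- measure of preimage sets as finite sums
  have hνset : ∀ s : Set ((Fin n → 𝒳 × 𝒴) × (Fin n → 𝒳)),
      (μ (T ⁻¹' s)).toReal = ∑ u ∈ s.toFinset, wt u := by
    intro s
    have h1 : T ⁻¹' s = ⋃ u ∈ s.toFinset, T ⁻¹' {u} := by
      ext ω; simp
    rw [h1, measure_biUnion_finset ?_ (fun u _ => hTm (measurableSet_singleton u))]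
    · rw [Finset.sum_congr rfl fun u _ => hsingle u, ← ENNReal.ofReal_sum_of_nonneg
        (fun u _ => hwtnn u), ENNReal.toReal_ofReal (Finset.sum_nonneg fun u _ => hwtnn u)]
    · intro a _ b _ hab
      refine Set.disjoint_left.2 fun ω h1 h2 => hab ?_
      simp only [Set.mem_preimage, Set.mem_singleton_iff] at h1 h2
      rw [← h1, ← h2]
  -- identify the three quantities with sums
  have hset1 : {ω | (∑ k ∈ Finset.range n, infoDen pX W (X k ω) (Y k ω)) ≤ 0}
      = T ⁻¹' {u | (∑ k, infoDen pX W (u.1 k).1 (u.1 k).2) ≤ 0} := by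
    ext ω
    simp only [Set.mem_setOf_eq, Set.mem_preimage, hT]
    rw [Fin.sum_univ_eq_sum_range (fun k => infoDen pX W (X k ω) (Y k ω)) n]
  have hset2 : {ω | 0 < ∑ k ∈ Finset.range n, infoDen pX W (Xbar k ω) (Y k ω)}
      = T ⁻¹' {u | 0 < ∑ k, infoDen pX W (u.2 k) (u.1 k).2} := by
    ext ω
    simp only [Set.mem_setOf_eq, Set.mem_preimage, hT]
    rw [Fin.sum_univ_eq_sum_range (fun k => infoDen pX W (Xbar k ω) (Y k ω)) n]
  have hfun : (fun ω => Real.exp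
      (-(max (∑ k ∈ Finset.range n, infoDen pX W (X k ω) (Y k ω)) 0)))
      = fun ω => Real.exp (-(max (∑ k : Fin n,
          infoDen pX W ((T ω).1 k).1 ((T ω).1 k).2) 0)) := by
    funext ω
    simp only [hT]
    rw [Fin.sum_univ_eq_sum_range (fun k => infoDen pX W (X k ω) (Y k ω)) n]
  haveI : IsProbabilityMeasure (μ.map T) := Measure.isProbabilityMeasure_map hTm.aemeasurable
  have hint : ∫ ω, Real.exp
      (-(max (∑ k ∈ Finset.range n, infoDen pX W (X k ω) (Y k ω)) 0)) ∂μ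
      = ∑ u : (Fin n → 𝒳 × 𝒴) × (Fin n → 𝒳),
          wt u * Real.exp (-(max (∑ k, infoDen pX W (u.1 k).1 (u.1 k).2) 0)) := by
    rw [hfun, ← integral_map hTm.aemeasurable
      (Measurable.of_discrete (f := fun u : (Fin n → 𝒳 × 𝒴) × (Fin n → 𝒳) =>
        Real.exp (-(max (∑ k, infoDen pX W (u.1 k).1 (u.1 k).2) 0)))).aestronglyMeasurable,
      integral_fintype (Integrable.of_finite)]
    refine Finset.sum_congr rfl fun u _ => ?_
    rw [measureReal_def, Measure.map_apply hTm (measurableSet_singleton u), hsingle,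
      ENNReal.toReal_ofReal (hwtnn u), smul_eq_mul]
  rw [hint, hset1, hset2, hνset, hνset,
    show ({u : (Fin n → 𝒳 × 𝒴) × (Fin n → 𝒳) |
        (∑ k, infoDen pX W (u.1 k).1 (u.1 k).2) ≤ 0}).toFinset
      = Finset.univ.filter (fun u => (∑ k, infoDen pX W (u.1 k).1 (u.1 k).2) ≤ 0) from
      Set.toFinset_setOf _,
    show ({u : (Fin n → 𝒳 × 𝒴) × (Fin n → 𝒳) |
        0 < ∑ k, infoDen pX W (u.2 k) (u.1 k).2}).toFinset
      = Finset.univ.filter (fun u => 0 < ∑ k, infoDen pX W (u.2 k) (u.1 k).2) from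
      Set.toFinset_setOf _,
    Finset.sum_filter, Finset.sum_filter]
  simp only [hwt]
  exact keyFinite pX W hpXpos hpXsum hWpos n
end

section
/- There exists ρ ∈ (0,1) such that for all n ≥ 1, both P[S_n ≤ 0] ≤ ρ^n and P[S̄_n > 0] ≤ ρ^n. -/
open MeasureTheory ProbabilityTheory

lemma sqrt_mul_le_half {a b : ℝ} (ha : 0 ≤ a) (hb : 0 ≤ b) :
    Real.sqrt (a * b) ≤ (a + b) / 2 := by
  rw [Real.sqrt_mul ha]
  nlinarith [Real.sq_sqrt ha, Real.sq_sqrt hb, sq_nonneg (Real.sqrt a - Real.sqrt b)]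

lemma sqrt_mul_lt_half {a b : ℝ} (ha : 0 ≤ a) (hb : 0 ≤ b) (hab : a ≠ b) :
    Real.sqrt (a * b) < (a + b) / 2 := by
  have h : Real.sqrt a ≠ Real.sqrt b := by
    intro h
    exact hab (by rw [← Real.sq_sqrt ha, ← Real.sq_sqrt hb, h])
  rw [Real.sqrt_mul ha]
  have := sub_ne_zero.2 h
  nlinarith [Real.sq_sqrt ha, Real.sq_sqrt hb, sq_pos_of_ne_zero this]

lemma exp_half_log {a : ℝ} (ha : 0 < a) : Real.exp (Real.log a / 2) = Real.sqrt a := by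
  rw [Real.sqrt_eq_rpow, Real.rpow_def_of_pos ha]
  ring_nf

lemma step_exp_neg {w q : ℝ} (hw : 0 < w) (hq : 0 < q) :
    w * Real.exp (-Real.log (w / q) / 2) = Real.sqrt (w * q) := by
  rw [Real.log_div hw.ne' hq.ne']
  have h1 : -(Real.log w - Real.log q) / 2 = Real.log q / 2 - Real.log w / 2 := by ring
  rw [h1, Real.exp_sub, exp_half_log hq, exp_half_log hw, Real.sqrt_mul hw.le]
  have h2 : w * (Real.sqrt q / Real.sqrt w) = Real.sqrt q * (w / Real.sqrt w) := by ring
  rw [h2, Real.div_sqrt, mul_comm]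

lemma step_exp_pos {w q : ℝ} (hw : 0 < w) (hq : 0 < q) :
    q * Real.exp (Real.log (w / q) / 2) = Real.sqrt (w * q) := by
  rw [Real.log_div hw.ne' hq.ne', sub_div, Real.exp_sub, exp_half_log hq, exp_half_log hw,
    Real.sqrt_mul hw.le]
  have h2 : q * (Real.sqrt w / Real.sqrt q) = Real.sqrt w * (q / Real.sqrt q) := by ring
  rw [h2, Real.div_sqrt]

lemma chernoff_bound {α : Type*} [Fintype α] {Ω : Type*} [MeasurableSpace Ω]
    (μ : Measure Ω) (n : ℕ) (Z : ℕ → Ω → α) (p g : α → ℝ) (hp : ∀ a, 0 ≤ p a)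
    (hjoint : ∀ c : Fin n → α,
      μ {ω | ∀ k : Fin n, Z (k : ℕ) ω = c k} ≤ ENNReal.ofReal (∏ k, p (c k)))
    (E : Set Ω) (hE : ∀ ω ∈ E, 0 ≤ ∑ k : Fin n, g (Z (k : ℕ) ω)) :
    μ E ≤ ENNReal.ofReal ((∑ a, p a * Real.exp (g a)) ^ n) := by
  classical
  set S : (Fin n → α) → Set Ω := fun c => {ω | ∀ k : Fin n, Z (k : ℕ) ω = c k} with hS
  have hEsub : E ⊆ ⋃ c, S c ∩ E := fun ω hω =>
    Set.mem_iUnion.2 ⟨fun k => Z (k : ℕ) ω, ⟨fun k => rfl, hω⟩⟩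
  calc μ E ≤ μ (⋃ c, S c ∩ E) := measure_mono hEsub
    _ ≤ ∑ c : Fin n → α, μ (S c ∩ E) := measure_iUnion_fintype_le _ _
    _ ≤ ∑ c : Fin n → α, ENNReal.ofReal (∏ k, p (c k) * Real.exp (g (c k))) := by
        refine Finset.sum_le_sum fun c _ => ?_
        by_cases h : 0 ≤ ∑ k : Fin n, g (c k)
        · refine le_trans (measure_mono Set.inter_subset_left) (le_trans (hjoint c) ?_)
          refine ENNReal.ofReal_le_ofReal ?_
          rw [Finset.prod_mul_distrib, ← Real.exp_sum]
          have h1 : (1:ℝ) ≤ Real.exp (∑ k : Fin n, g (c k)) := Real.one_le_exp h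
          have h2 : (0:ℝ) ≤ ∏ k, p (c k) := Finset.prod_nonneg fun k _ => hp _
          nlinarith
        · have : S c ∩ E = ∅ := by
            ext ω
            simp only [Set.mem_inter_iff, Set.mem_empty_iff_false, iff_false, not_and]
            intro hSc hEω
            have h1 := hE ω hEω
            have h2 : ∑ k : Fin n, g (Z (k : ℕ) ω) = ∑ k : Fin n, g (c k) :=
              Finset.sum_congr rfl fun k _ => by rw [hSc k]
            rw [h2] at h1
            exact h h1
          simp [this]
    _ = ENNReal.ofReal (∑ c : Fin n → α, ∏ k, p (c k) * Real.exp (g (c k))) := by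
        rw [ENNReal.ofReal_sum_of_nonneg]
        exact fun c _ => Finset.prod_nonneg fun k _ =>
          mul_nonneg (hp _) (Real.exp_nonneg _)
    _ = ENNReal.ofReal ((∑ a, p a * Real.exp (g a)) ^ n) := by
        rw [Fintype.sum_pow (fun a => p a * Real.exp (g a)) n]

/-- There exists `ρ ∈ (0,1)` such that for all `n ≥ 1`,
`P[Sₙ ≤ 0] ≤ ρⁿ` and `P[S̄ₙ > 0] ≤ ρⁿ`. -/
theorem stmt5 {𝒳 𝒴 : Type*} [Fintype 𝒳] [Nonempty 𝒳] [Fintype 𝒴] [Nonempty 𝒴]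
    [MeasurableSpace 𝒳] [DiscreteMeasurableSpace 𝒳]
    [MeasurableSpace 𝒴] [DiscreteMeasurableSpace 𝒴]
    (pX : 𝒳 → ℝ) (hpXpos : ∀ x, 0 < pX x) (hpXsum : ∑ x, pX x = 1)
    (W : 𝒳 → 𝒴 → ℝ) (hWpos : ∀ x y, 0 < W x y) (hWsum : ∀ x, ∑ y, W x y = 1)
    -- `P_{XY} ≠ P_X ⊗ P_Y`, equivalently `C = E[i(X₁;Y₁)] > 0`:
    (hC : 0 < ∑ x, ∑ y, pX x * W x y * infoDen pX W x y)
    {Ω : Type*} [MeasurableSpace Ω] (μ : Measure Ω) [IsProbabilityMeasure μ]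
    (X : ℕ → Ω → 𝒳) (Y : ℕ → Ω → 𝒴) (Xbar : ℕ → Ω → 𝒳)
    (hXm : ∀ k, Measurable (X k)) (hYm : ∀ k, Measurable (Y k))
    (hXbarm : ∀ k, Measurable (Xbar k))
    -- `((X_k, Y_k))_k` is an i.i.d. sequence with law `P_{XY}`:
    (hXYindep : iIndepFun (fun k ω => (X k ω, Y k ω)) μ)
    (hXYlaw : ∀ k x y, μ {ω | X k ω = x ∧ Y k ω = y} = ENNReal.ofReal (pX x * W x y))
    -- `(X̄_k)_k` is an i.i.d. sequence with law `P_X`: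
    (hXbarindep : iIndepFun Xbar μ)
    (hXbarlaw : ∀ k x, μ {ω | Xbar k ω = x} = ENNReal.ofReal (pX x))
    -- independent of `((X_k, Y_k))_k`:
    (hcross : IndepFun (fun ω (k : ℕ) => (X k ω, Y k ω)) (fun ω (k : ℕ) => Xbar k ω) μ) :
    ∃ ρ : ℝ, 0 < ρ ∧ ρ < 1 ∧ ∀ n : ℕ, 1 ≤ n →
      μ {ω | (∑ k ∈ Finset.range n, infoDen pX W (X k ω) (Y k ω)) ≤ 0}
          ≤ ENNReal.ofReal (ρ ^ n)
      ∧ μ {ω | 0 < ∑ k ∈ Finset.range n, infoDen pX W (Xbar k ω) (Y k ω)}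
          ≤ ENNReal.ofReal (ρ ^ n) := by
  classical
  have hqpos : ∀ y, 0 < outDist pX W y := fun y =>
    Finset.sum_pos (fun x _ => mul_pos (hpXpos x) (hWpos x y)) Finset.univ_nonempty
  have hqsum : ∑ y, outDist pX W y = 1 := by
    unfold outDist
    rw [Finset.sum_comm]
    simp only [← Finset.mul_sum]
    rw [Finset.sum_congr rfl fun x _ => by rw [hWsum x, mul_one]]
    exact hpXsum
  have hYlaw : ∀ k y, μ {ω | Y k ω = y} = ENNReal.ofReal (outDist pX W y) := by
    intro k y
    have hU : {ω | Y k ω = y}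
        = ⋃ x ∈ (Finset.univ : Finset 𝒳), {ω | X k ω = x ∧ Y k ω = y} := by
      ext ω; simp
    have hdisj : ((Finset.univ : Finset 𝒳) : Set 𝒳).PairwiseDisjoint
        fun x => {ω | X k ω = x ∧ Y k ω = y} := by
      intro a _ b _ hab
      refine Set.disjoint_left.2 ?_
      rintro ω ⟨h1, _⟩ ⟨h2, _⟩
      exact hab (h1 ▸ h2 ▸ rfl)
    have hmeas : ∀ x ∈ (Finset.univ : Finset 𝒳),
        MeasurableSet {ω | X k ω = x ∧ Y k ω = y} := by
      intro x _
      have h : {ω | X k ω = x ∧ Y k ω = y} = X k ⁻¹' {x} ∩ Y k ⁻¹' {y} := rfl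
      rw [h]
      exact (hXm k (measurableSet_singleton x)).inter (hYm k (measurableSet_singleton y))
    rw [hU, measure_biUnion_finset hdisj hmeas,
      Finset.sum_congr rfl fun x _ => hXYlaw k x y,
      ← ENNReal.ofReal_sum_of_nonneg fun x _ => (mul_pos (hpXpos x) (hWpos x y)).le]
    rfl
  set ρ : ℝ := ∑ z : 𝒳 × 𝒴, pX z.1 * Real.sqrt (W z.1 z.2 * outDist pX W z.2) with hrho
  have hρpos : 0 < ρ :=
    Finset.sum_pos (fun z _ => mul_pos (hpXpos _)
      (Real.sqrt_pos.2 (mul_pos (hWpos _ _) (hqpos _)))) Finset.univ_nonempty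
  have hinner_eq : ∀ x : 𝒳, ∑ y, (W x y + outDist pX W y) / 2 = 1 := by
    intro x
    rw [← Finset.sum_div, Finset.sum_add_distrib, hWsum, hqsum]
    norm_num
  have hinner_le : ∀ x : 𝒳, ∑ y, Real.sqrt (W x y * outDist pX W y) ≤ 1 := fun x =>
    le_trans (Finset.sum_le_sum fun y _ => sqrt_mul_le_half (hWpos x y).le (hqpos y).le)
      (hinner_eq x).le
  have hne : ∃ x y, W x y ≠ outDist pX W y := by
    by_contra h
    push_neg at h
    have h0 : ∀ x y, infoDen pX W x y = 0 := fun x y => by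
      rw [infoDen, h, div_self (hqpos y).ne', Real.log_one]
    simp only [h0, mul_zero, Finset.sum_const_zero] at hC
    exact lt_irrefl 0 hC
  obtain ⟨x0, y0, hne0⟩ := hne
  have hρlt : ρ < 1 := by
    have hinner_lt : ∑ y, Real.sqrt (W x0 y * outDist pX W y) < 1 := by
      refine lt_of_lt_of_le (Finset.sum_lt_sum
        (fun y _ => sqrt_mul_le_half (hWpos x0 y).le (hqpos y).le)
        ⟨y0, Finset.mem_univ _, sqrt_mul_lt_half (hWpos x0 y0).le (hqpos y0).le hne0⟩)
        (hinner_eq x0).le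
    rw [hrho, Fintype.sum_prod_type]
    have hre : ∀ x : 𝒳, ∑ y, pX x * Real.sqrt (W x y * outDist pX W y)
        = pX x * ∑ y, Real.sqrt (W x y * outDist pX W y) := fun x =>
      (Finset.mul_sum _ _ _).symm
    rw [Finset.sum_congr rfl fun x _ => hre x]
    calc ∑ x, pX x * ∑ y, Real.sqrt (W x y * outDist pX W y)
        < ∑ x, pX x * 1 := by
          refine Finset.sum_lt_sum
            (fun x _ => mul_le_mul_of_nonneg_left (hinner_le x) (hpXpos x).le)
            ⟨x0, Finset.mem_univ _, mul_lt_mul_of_pos_left hinner_lt (hpXpos x0)⟩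
      _ = 1 := by simp [hpXsum]
  refine ⟨ρ, hρpos, hρlt, fun n _hn => ?_⟩
  constructor
  · -- first bound
    have hjoint : ∀ c : Fin n → 𝒳 × 𝒴,
        μ {ω | ∀ k : Fin n, (fun (i : ℕ) (ω : Ω) => (X i ω, Y i ω)) (k : ℕ) ω = c k}
          ≤ ENNReal.ofReal (∏ k, pX (c k).1 * W (c k).1 (c k).2) := by
      intro c
      set c' : ℕ → 𝒳 × 𝒴 := fun i => if h : i < n then c ⟨i, h⟩ else Classical.arbitrary _
        with hc'
      have hset : {ω | ∀ k : Fin n, (fun (i : ℕ) (ω : Ω) => (X i ω, Y i ω)) (k : ℕ) ω = c k}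
          = ⋂ i ∈ Finset.range n, (fun ω => (X i ω, Y i ω)) ⁻¹' {c' i} := by
        ext ω
        simp only [Set.mem_setOf_eq, Set.mem_iInter, Finset.mem_range, Set.mem_preimage,
          Set.mem_singleton_iff]
        constructor
        · intro h i hi
          simpa [hc', hi] using h ⟨i, hi⟩
        · intro h k
          have := h k k.isLt
          simpa [hc', k.isLt] using this
      have hmeas := hXYindep.measure_inter_preimage_eq_mul (Finset.range n)
        (sets := fun i => {c' i}) (fun i _ => measurableSet_singleton _)
      rw [hset, hmeas]
      have hlaw : ∀ i ∈ Finset.range n,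
          μ ((fun ω => (X i ω, Y i ω)) ⁻¹' {c' i})
            = ENNReal.ofReal (pX (c' i).1 * W (c' i).1 (c' i).2) := by
        intro i _
        have h : (fun ω => (X i ω, Y i ω)) ⁻¹' {c' i}
            = {ω | X i ω = (c' i).1 ∧ Y i ω = (c' i).2} := by
          ext ω; simp [Prod.ext_iff]
        rw [h, hXYlaw]
      rw [Finset.prod_congr rfl hlaw, ← ENNReal.ofReal_prod_of_nonneg
        (fun i _ => (mul_pos (hpXpos (c' i).1) (hWpos (c' i).1 (c' i).2)).le)]
      apply le_of_eq
      congr 1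
      rw [← Fin.prod_univ_eq_prod_range (fun i => pX (c' i).1 * W (c' i).1 (c' i).2) n]
      exact Finset.prod_congr rfl fun k _ => by simp [hc', k.isLt]
    have hb := chernoff_bound μ n (fun i ω => (X i ω, Y i ω))
      (fun z => pX z.1 * W z.1 z.2) (fun z => -infoDen pX W z.1 z.2 / 2)
      (fun z => (mul_pos (hpXpos _) (hWpos _ _)).le) hjoint
      {ω | (∑ k ∈ Finset.range n, infoDen pX W (X k ω) (Y k ω)) ≤ 0}
      (by
        intro ω hω
        simp only [Set.mem_setOf_eq] at hω
        have : ∑ k : Fin n, -infoDen pX W (X (k:ℕ) ω) (Y (k:ℕ) ω) / 2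
            = -(∑ k ∈ Finset.range n, infoDen pX W (X k ω) (Y k ω)) / 2 := by
          rw [Finset.sum_range fun i => infoDen pX W (X i ω) (Y i ω)]
          rw [← Finset.sum_div, ← Finset.sum_neg_distrib]
        rw [this]
        linarith)
    have hsum_eq : ∑ z : 𝒳 × 𝒴, pX z.1 * W z.1 z.2 * Real.exp (-infoDen pX W z.1 z.2 / 2)
        = ρ := by
      rw [hrho]
      refine Finset.sum_congr rfl fun z _ => ?_
      rw [mul_assoc, infoDen, step_exp_neg (hWpos _ _) (hqpos _)]
    rw [hsum_eq] at hb
    exact hb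
  · -- second bound
    have hjoint : ∀ c : Fin n → 𝒳 × 𝒴,
        μ {ω | ∀ k : Fin n, (fun (i : ℕ) (ω : Ω) => (Xbar i ω, Y i ω)) (k : ℕ) ω = c k}
          ≤ ENNReal.ofReal (∏ k, pX (c k).1 * outDist pX W (c k).2) := by
      intro c
      set c' : ℕ → 𝒳 × 𝒴 := fun i => if h : i < n then c ⟨i, h⟩ else Classical.arbitrary _
        with hc'
      set SA : Set (ℕ → 𝒳 × 𝒴) :=
        ⋂ i ∈ Finset.range n, (fun u : ℕ → 𝒳 × 𝒴 => u i) ⁻¹' (Prod.snd ⁻¹' {(c' i).2}) with hSA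
      set SB : Set (ℕ → 𝒳) :=
        ⋂ i ∈ Finset.range n, (fun v : ℕ → 𝒳 => v i) ⁻¹' {(c' i).1} with hSB
      have hSAm : MeasurableSet SA :=
        MeasurableSet.biInter (Finset.range n).countable_toSet fun i _ =>
          (measurable_snd.comp (measurable_pi_apply i)) (measurableSet_singleton _)
      have hSBm : MeasurableSet SB :=
        MeasurableSet.biInter (Finset.range n).countable_toSet fun i _ =>
          (measurable_pi_apply i) (measurableSet_singleton _)
      have hset : {ω | ∀ k : Fin n, (fun (i : ℕ) (ω : Ω) => (Xbar i ω, Y i ω)) (k : ℕ) ω = c k}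
          = ((fun ω (k : ℕ) => (X k ω, Y k ω)) ⁻¹' SA)
              ∩ ((fun ω (k : ℕ) => Xbar k ω) ⁻¹' SB) := by
        ext ω
        simp only [hSA, hSB, Set.mem_setOf_eq, Set.mem_inter_iff, Set.mem_preimage,
          Set.mem_iInter, Finset.mem_range, Set.mem_singleton_iff, Prod.ext_iff]
        constructor
        · intro h
          refine ⟨fun i hi => ?_, fun i hi => ?_⟩
          · simpa [hc', hi] using (h ⟨i, hi⟩).2
          · simpa [hc', hi] using (h ⟨i, hi⟩).1
        · rintro ⟨h1, h2⟩ k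
          exact ⟨by simpa [hc', k.isLt] using h2 k k.isLt,
            by simpa [hc', k.isLt] using h1 k k.isLt⟩
      rw [hset, hcross.measure_inter_preimage_eq_mul SA SB hSAm hSBm]
      have hA : μ ((fun ω (k : ℕ) => (X k ω, Y k ω)) ⁻¹' SA)
          = ∏ i ∈ Finset.range n, ENNReal.ofReal (outDist pX W (c' i).2) := by
        have hpre : (fun ω (k : ℕ) => (X k ω, Y k ω)) ⁻¹' SA
            = ⋂ i ∈ Finset.range n,
                (fun ω => (X i ω, Y i ω)) ⁻¹' (Prod.snd ⁻¹' {(c' i).2}) := by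
          ext ω; simp [hSA]
        rw [hpre, hXYindep.measure_inter_preimage_eq_mul (Finset.range n)
          (sets := fun i => Prod.snd ⁻¹' {(c' i).2})
          (fun i _ => measurable_snd (measurableSet_singleton _))]
        refine Finset.prod_congr rfl fun i _ => ?_
        have h : (fun ω => (X i ω, Y i ω)) ⁻¹' (Prod.snd ⁻¹' {(c' i).2})
            = {ω | Y i ω = (c' i).2} := by
          ext ω; simp
        rw [h, hYlaw]
      have hB : μ ((fun ω (k : ℕ) => Xbar k ω) ⁻¹' SB)
          = ∏ i ∈ Finset.range n, ENNReal.ofReal (pX (c' i).1) := by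
        have hpre : (fun ω (k : ℕ) => Xbar k ω) ⁻¹' SB
            = ⋂ i ∈ Finset.range n, Xbar i ⁻¹' {(c' i).1} := by
          ext ω; simp [hSB]
        rw [hpre, hXbarindep.measure_inter_preimage_eq_mul (Finset.range n)
          (sets := fun i => {(c' i).1}) (fun i _ => measurableSet_singleton _)]
        refine Finset.prod_congr rfl fun i _ => ?_
        have h : Xbar i ⁻¹' {(c' i).1} = {ω | Xbar i ω = (c' i).1} := by ext ω; simp
        rw [h, hXbarlaw]
      rw [hA, hB, ← Finset.prod_mul_distrib]
      apply le_of_eq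
      have hterm : ∀ i ∈ Finset.range n,
          ENNReal.ofReal (outDist pX W (c' i).2) * ENNReal.ofReal (pX (c' i).1)
            = ENNReal.ofReal (pX (c' i).1 * outDist pX W (c' i).2) := fun i _ => by
        rw [← ENNReal.ofReal_mul (hqpos _).le, mul_comm]
      rw [Finset.prod_congr rfl hterm,
        ← ENNReal.ofReal_prod_of_nonneg (fun i _ => (mul_pos (hpXpos _) (hqpos _)).le)]
      congr 1
      rw [← Fin.prod_univ_eq_prod_range (fun i => pX (c' i).1 * outDist pX W (c' i).2) n]
      exact Finset.prod_congr rfl fun k _ => by simp [hc', k.isLt]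
    have hb := chernoff_bound μ n (fun i ω => (Xbar i ω, Y i ω))
      (fun z => pX z.1 * outDist pX W z.2) (fun z => infoDen pX W z.1 z.2 / 2)
      (fun z => (mul_pos (hpXpos _) (hqpos _)).le) hjoint
      {ω | 0 < ∑ k ∈ Finset.range n, infoDen pX W (Xbar k ω) (Y k ω)}
      (by
        intro ω hω
        simp only [Set.mem_setOf_eq] at hω
        have : ∑ k : Fin n, infoDen pX W (Xbar (k:ℕ) ω) (Y (k:ℕ) ω) / 2
            = (∑ k ∈ Finset.range n, infoDen pX W (Xbar k ω) (Y k ω)) / 2 := by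
          rw [Finset.sum_range fun i => infoDen pX W (Xbar i ω) (Y i ω), ← Finset.sum_div]
        rw [this]
        linarith)
    have hsum_eq : ∑ z : 𝒳 × 𝒴,
        pX z.1 * outDist pX W z.2 * Real.exp (infoDen pX W z.1 z.2 / 2) = ρ := by
      rw [hrho]
      refine Finset.sum_congr rfl fun z _ => ?_
      rw [mul_assoc, infoDen, step_exp_pos (hWpos _ _) (hqpos _)]
    rw [hsum_eq] at hb
    exact hb
end

section
/- For every real γ ≥ 0 and every integer N ≥ 1, the truncated hitting time τ' = min( inf{n ≥ 1 : S_n ≥ γ}, N ) satisfies E[τ'] ≤ (γ + B)/C. -/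
open MeasureTheory ProbabilityTheory

/-- For every real `γ ≥ 0` and integer `N ≥ 1`, the truncated hitting
time `τ' = min(inf{n ≥ 1 : Sₙ ≥ γ}, N)` satisfies `E[τ'] ≤ (γ + B)/C`, where
`C = E[i(X₁;Y₁)] > 0` and `B = max_{x,y} |i(x;y)|`. -/
theorem stmt8 {𝒳 𝒴 : Type*} [Fintype 𝒳] [Nonempty 𝒳] [Fintype 𝒴] [Nonempty 𝒴]
    [MeasurableSpace 𝒳] [DiscreteMeasurableSpace 𝒳]
    [MeasurableSpace 𝒴] [DiscreteMeasurableSpace 𝒴]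
    (pX : 𝒳 → ℝ) (hpXpos : ∀ x, 0 < pX x) (hpXsum : ∑ x, pX x = 1)
    (W : 𝒳 → 𝒴 → ℝ) (hWpos : ∀ x y, 0 < W x y) (hWsum : ∀ x, ∑ y, W x y = 1)
    (C B : ℝ)
    (hCdef : C = ∑ x, ∑ y, pX x * W x y * infoDen pX W x y)
    -- `P_{XY} ≠ P_X ⊗ P_Y`, equivalently `C > 0`:
    (hC : 0 < C)
    (hBdef : B = ⨆ x : 𝒳, ⨆ y : 𝒴, |infoDen pX W x y|)
    {Ω : Type*} [MeasurableSpace Ω] (μ : Measure Ω) [IsProbabilityMeasure μ]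
    (X : ℕ → Ω → 𝒳) (Y : ℕ → Ω → 𝒴)
    (hXm : ∀ k, Measurable (X k)) (hYm : ∀ k, Measurable (Y k))
    -- `((X_k, Y_k))_k` is an i.i.d. sequence with law `P_{XY}`:
    (hXYindep : iIndepFun (fun k ω => (X k ω, Y k ω)) μ)
    (hXYlaw : ∀ k x y, μ {ω | X k ω = x ∧ Y k ω = y} = ENNReal.ofReal (pX x * W x y))
    (γ : ℝ) (hγ : 0 ≤ γ) (N : ℕ) (hN : 1 ≤ N) :
    ∫ ω, ((sInf ({n : ℕ | 1 ≤ n ∧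
        γ ≤ ∑ k ∈ Finset.range n, infoDen pX W (X k ω) (Y k ω)} ∪ {N}) : ℕ) : ℝ) ∂μ
      ≤ (γ + B) / C := by
  classical
  let Z : ℕ → Ω → 𝒳 × 𝒴 := fun k ω => (X k ω, Y k ω)
  let f : ℕ → Ω → ℝ := fun k ω => infoDen pX W (X k ω) (Y k ω)
  let S : ℕ → Ω → ℝ := fun n ω => ∑ k ∈ Finset.range n, f k ω
  let τ : Ω → ℕ := fun ω => sInf ({n : ℕ | 1 ≤ n ∧ γ ≤ S n ω} ∪ {N})
  have hZm : ∀ k, Measurable (Z k) := fun k => (hXm k).prodMk (hYm k)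
  have hfm : ∀ k, Measurable (f k) := fun k =>
    (measurable_of_countable (fun p : 𝒳 × 𝒴 => infoDen pX W p.1 p.2)).comp (hZm k)
  have hSm : ∀ n, Measurable (S n) := fun n => Finset.measurable_sum _ (fun k _ => hfm k)
  -- bound B
  have hB : ∀ x y, |infoDen pX W x y| ≤ B := by
    intro x y
    have h1 : |infoDen pX W x y| ≤ ⨆ y, |infoDen pX W x y| :=
      le_ciSup (f := fun y => |infoDen pX W x y|) (Set.Finite.bddAbove (Set.finite_range _)) y
    have h2 : (⨆ y, |infoDen pX W x y|) ≤ B := by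
      rw [hBdef]
      exact le_ciSup (f := fun x => ⨆ y, |infoDen pX W x y|)
        (Set.Finite.bddAbove (Set.finite_range _)) x
    exact h1.trans h2
  have hB0 : 0 ≤ B :=
    le_trans (abs_nonneg _) (hB (Classical.arbitrary _) (Classical.arbitrary _))
  have hfB : ∀ k ω, |f k ω| ≤ B := fun k ω => hB _ _
  -- basic facts about τ
  have hτmem : ∀ ω, τ ω ∈ ({n : ℕ | 1 ≤ n ∧ γ ≤ S n ω} ∪ {N}) := fun ω =>
    Nat.sInf_mem ⟨N, Set.mem_union_right _ rfl⟩
  have hτleN : ∀ ω, τ ω ≤ N := fun ω => Nat.sInf_le (Set.mem_union_right _ rfl)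
  have hτpos : ∀ ω, 1 ≤ τ ω := by
    intro ω
    rcases hτmem ω with h | h
    · exact h.1
    · simp only [Set.mem_singleton_iff] at h
      omega
  -- Step A : S_(τ ω) ω ≤ γ + B
  have hSτ : ∀ ω, S (τ ω) ω ≤ γ + B := by
    intro ω
    by_cases hhit : γ ≤ S (τ ω) ω
    · obtain ⟨m, hm⟩ : ∃ m, τ ω = m + 1 := ⟨τ ω - 1, by have := hτpos ω; omega⟩
      have hlt : m < τ ω := by omega
      have hnot : m ∉ ({n : ℕ | 1 ≤ n ∧ γ ≤ S n ω} ∪ {N}) := Nat.notMem_of_lt_sInf hlt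
      have hnotL : ¬(1 ≤ m ∧ γ ≤ S m ω) := fun h => hnot (Set.mem_union_left _ h)
      have hSmle : S m ω ≤ γ := by
        rcases Nat.eq_zero_or_pos m with h0 | h0
        · have : S m ω = 0 := by simp [S, h0]
          linarith
        · by_contra hcon
          exact hnotL ⟨h0, le_of_lt (lt_of_not_ge hcon)⟩
      have hsplit : S (τ ω) ω = S m ω + f m ω := by
        rw [hm]
        exact Finset.sum_range_succ _ _
      have hfmB : f m ω ≤ B := le_trans (le_abs_self _) (hfB m ω)
      rw [hsplit]
      linarith
    · push_neg at hhit
      linarith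
  -- extension of sums to range N
  have hkey : ∀ (g : ℕ → ℝ) (t : ℕ), t ≤ N →
      ∑ k ∈ Finset.range t, g k = ∑ k ∈ Finset.range N, (if k < t then g k else 0) := by
    intro g t ht
    have h1 : ∑ k ∈ Finset.range t, (if k < t then g k else 0) = ∑ k ∈ Finset.range t, g k :=
      Finset.sum_congr rfl (fun k hk => if_pos (Finset.mem_range.mp hk))
    rw [← h1]
    exact Finset.sum_subset (Finset.range_subset_range.mpr ht)
      (fun k _ hk => if_neg (fun h => hk (Finset.mem_range.mpr h)))
  -- integrability of bounded measurable functions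
  have hint : ∀ (g : Ω → ℝ) (c : ℝ), Measurable g → (∀ ω, |g ω| ≤ c) → Integrable g μ := by
    intro g c hg hgc
    exact (integrable_const c).mono' hg.aestronglyMeasurable
      (Filter.Eventually.of_forall (fun ω => by simpa [Real.norm_eq_abs] using hgc ω))
  -- characterization of the event {τ > k}
  have hAk_iff : ∀ k, k < N → ∀ ω, (k < τ ω ↔ ∀ n, 1 ≤ n → n ≤ k → S n ω < γ) := by
    intro k hk ω
    constructor
    · intro h n h1 h2
      by_contra hc
      push_neg at hc
      have : τ ω ≤ n := Nat.sInf_le (Set.mem_union_left _ ⟨h1, hc⟩)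
      omega
    · intro h
      by_contra hc
      push_neg at hc
      rcases hτmem ω with hm | hm
      · exact absurd hm.2 (not_le.mpr (h _ hm.1 hc))
      · simp only [Set.mem_singleton_iff] at hm
        omega
  have hAmeas : ∀ k, k < N → MeasurableSet {ω | k < τ ω} := by
    intro k hk
    have hset : {ω | k < τ ω} = ⋂ n, ⋂ (_ : 1 ≤ n ∧ n ≤ k), {ω | S n ω < γ} := by
      ext ω
      simp only [Set.mem_setOf_eq, Set.mem_iInter]
      rw [hAk_iff k hk ω]
      exact ⟨fun h n hn => h n hn.1 hn.2, fun h n h1 h2 => h n ⟨h1, h2⟩⟩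
    rw [hset]
    exact MeasurableSet.iInter fun n => MeasurableSet.iInter fun _ =>
      measurableSet_lt (hSm n) measurable_const
  -- expectation of f k is C
  have hEf : ∀ k, ∫ ω, f k ω ∂μ = C := by
    intro k
    have hrw : ∀ ω, f k ω = ∑ p : 𝒳 × 𝒴,
        Set.indicator (Z k ⁻¹' {p}) (fun _ => infoDen pX W p.1 p.2) ω := by
      intro ω
      have h1 : ∀ p : 𝒳 × 𝒴,
          Set.indicator (Z k ⁻¹' {p}) (fun _ => infoDen pX W p.1 p.2) ω
            = if Z k ω = p then infoDen pX W p.1 p.2 else 0 := by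
        intro p
        by_cases h : Z k ω = p <;> simp [Set.indicator_apply, h]
      rw [Finset.sum_congr rfl (fun p _ => h1 p), Finset.sum_ite_eq Finset.univ (Z k ω)]
      simp [Z, f]
    calc ∫ ω, f k ω ∂μ
        = ∑ p : 𝒳 × 𝒴, ∫ ω,
            Set.indicator (Z k ⁻¹' {p}) (fun _ => infoDen pX W p.1 p.2) ω ∂μ := by
          simp only [hrw]
          exact integral_finset_sum _ (fun p _ =>
            (integrable_const _).indicator ((hZm k) (measurableSet_singleton p)))
      _ = ∑ p : 𝒳 × 𝒴, pX p.1 * W p.1 p.2 * infoDen pX W p.1 p.2 := by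
          refine Finset.sum_congr rfl fun p _ => ?_
          rw [integral_indicator ((hZm k) (measurableSet_singleton p)), setIntegral_const]
          have hμ : μ (Z k ⁻¹' {p}) = ENNReal.ofReal (pX p.1 * W p.1 p.2) := by
            rw [← hXYlaw k p.1 p.2]
            congr 1
            ext ω
            simp [Z, Prod.ext_iff]
          rw [measureReal_def, hμ, ENNReal.toReal_ofReal (le_of_lt (mul_pos (hpXpos _) (hWpos _ _))),
            smul_eq_mul]
      _ = C := by rw [hCdef, Fintype.sum_prod_type]
  -- Wald's step
  have hWald : ∀ k, k < N →
      ∫ ω, (if k < τ ω then f k ω else 0) ∂μ = C * (μ {ω | k < τ ω}).toReal := by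
    intro k hk
    have hdisj : Disjoint ({k} : Finset ℕ) (Finset.range k) := by
      simp [Finset.disjoint_left]
    have hind := hXYindep.indepFun_finset {k} (Finset.range k) hdisj hZm
    let ext : (↥(Finset.range k) → 𝒳 × 𝒴) → ℕ → 𝒳 × 𝒴 := fun v j =>
      if h : j ∈ Finset.range k then v ⟨j, h⟩ else Classical.arbitrary _
    let φ : (↥(Finset.range k) → 𝒳 × 𝒴) → ℝ := fun v =>
      if ∀ n, 1 ≤ n → n ≤ k →
          (∑ j ∈ Finset.range n, infoDen pX W (ext v j).1 (ext v j).2) < γ then 1 else 0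
    let ψ : (↥({k} : Finset ℕ) → 𝒳 × 𝒴) → ℝ := fun v =>
      infoDen pX W (v ⟨k, Finset.mem_singleton_self k⟩).1 (v ⟨k, Finset.mem_singleton_self k⟩).2
    have hφm : Measurable φ := measurable_of_countable φ
    have hψm : Measurable ψ := measurable_of_countable ψ
    have hcomp := hind.comp hψm hφm
    have hψZ : (ψ ∘ fun a (i : ↥({k} : Finset ℕ)) => Z i a) = f k := rfl
    have hφZ : (φ ∘ fun a (i : ↥(Finset.range k)) => Z i a)
        = fun ω => if k < τ ω then (1 : ℝ) else 0 := by
      funext ω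
      have hsum : ∀ n, n ≤ k →
          (∑ j ∈ Finset.range n,
            infoDen pX W (ext (fun i : ↥(Finset.range k) => Z i ω) j).1
              (ext (fun i : ↥(Finset.range k) => Z i ω) j).2) = S n ω := by
        intro n hn
        refine Finset.sum_congr rfl fun j hj => ?_
        have hjk : j ∈ Finset.range k :=
          Finset.mem_range.mpr (lt_of_lt_of_le (Finset.mem_range.mp hj) hn)
        have hjk' : j < k := Finset.mem_range.mp hjk
        simp [ext, hjk, hjk', Z, S, f]
      have hcond : (∀ n, 1 ≤ n → n ≤ k →
          (∑ j ∈ Finset.range n,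
            infoDen pX W (ext (fun i : ↥(Finset.range k) => Z i ω) j).1
              (ext (fun i : ↥(Finset.range k) => Z i ω) j).2) < γ) ↔ k < τ ω := by
        rw [hAk_iff k hk ω]
        constructor
        · intro h n h1 h2
          rw [← hsum n h2]
          exact h n h1 h2
        · intro h n h1 h2
          rw [hsum n h2]
          exact h n h1 h2
      show (if ∀ n, 1 ≤ n → n ≤ k →
          (∑ j ∈ Finset.range n,
            infoDen pX W (ext (fun i : ↥(Finset.range k) => Z i ω) j).1
              (ext (fun i : ↥(Finset.range k) => Z i ω) j).2) < γ then (1:ℝ) else 0)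
        = if k < τ ω then (1 : ℝ) else 0
      by_cases hc : k < τ ω
      · rw [if_pos (hcond.mpr hc), if_pos hc]
      · rw [if_neg (fun h => hc (hcond.mp h)), if_neg hc]
    rw [hψZ, hφZ] at hcomp
    have hfint : Integrable (f k) μ := hint _ B (hfm k) (hfB k)
    have hIint : Integrable (fun ω => if k < τ ω then (1 : ℝ) else 0) μ := by
      refine hint _ 1 (Measurable.ite (hAmeas k hk) measurable_const measurable_const) ?_
      intro ω
      by_cases h : k < τ ω <;> simp [h]
    have hmul : (fun ω => if k < τ ω then f k ω else 0)
        = fun ω => f k ω * (if k < τ ω then (1 : ℝ) else 0) := by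
      funext ω
      by_cases h : k < τ ω <;> simp [h]
    have hIval : ∫ ω, (if k < τ ω then (1 : ℝ) else 0) ∂μ = (μ {ω | k < τ ω}).toReal := by
      have : (fun ω => if k < τ ω then (1 : ℝ) else 0)
          = Set.indicator {ω | k < τ ω} (fun _ => (1 : ℝ)) := by
        funext ω
        by_cases h : k < τ ω <;> simp [Set.indicator_apply, h]
      rw [this, integral_indicator (hAmeas k hk), setIntegral_const, smul_eq_mul, mul_one, measureReal_def]
    rw [hmul,
      show (fun ω => f k ω * (if k < τ ω then (1 : ℝ) else 0))
        = f k * (fun ω => if k < τ ω then (1 : ℝ) else 0) from rfl,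
      IndepFun.integral_mul_eq_mul_integral (μ := μ) hcomp hfint.aestronglyMeasurable hIint.aestronglyMeasurable, hEf k, hIval]
  -- integrability of the truncated pieces
  have hite_int : ∀ k, k < N → Integrable (fun ω => if k < τ ω then f k ω else 0) μ := by
    intro k hk
    refine hint _ B (Measurable.ite (hAmeas k hk) (hfm k) measurable_const) ?_
    intro ω
    by_cases h : k < τ ω <;> simp [h, hfB k ω, hB0]
  have hIint' : ∀ k, k < N → Integrable (fun ω => if k < τ ω then (1 : ℝ) else 0) μ := by
    intro k hk
    refine hint _ 1 (Measurable.ite (hAmeas k hk) measurable_const measurable_const) ?_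
    intro ω
    by_cases h : k < τ ω <;> simp [h]
  -- E[τ] as a sum
  have hτint_eq : ∫ ω, (τ ω : ℝ) ∂μ
      = ∑ k ∈ Finset.range N, ∫ ω, (if k < τ ω then (1 : ℝ) else 0) ∂μ := by
    rw [← integral_finset_sum _ (fun k hk => hIint' k (Finset.mem_range.mp hk))]
    congr 1
    funext ω
    have h1 : (τ ω : ℝ) = ∑ k ∈ Finset.range (τ ω), (1 : ℝ) := by simp
    rw [h1]
    exact hkey (fun _ => 1) (τ ω) (hτleN ω)
  -- E[S_τ] as a sum
  have hrepr : (fun ω => S (τ ω) ω)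
      = fun ω => ∑ k ∈ Finset.range N, (if k < τ ω then f k ω else 0) :=
    funext fun ω => hkey (fun j => f j ω) (τ ω) (hτleN ω)
  have hfτ_eq : ∫ ω, S (τ ω) ω ∂μ
      = ∑ k ∈ Finset.range N, ∫ ω, (if k < τ ω then f k ω else 0) ∂μ := by
    rw [hrepr]
    exact integral_finset_sum _ (fun k hk => hite_int k (Finset.mem_range.mp hk))
  have hSτint : Integrable (fun ω => S (τ ω) ω) μ := by
    rw [hrepr]
    exact integrable_finset_sum _ (fun k hk => hite_int k (Finset.mem_range.mp hk))
  -- Wald identity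
  have h1 : ∫ ω, S (τ ω) ω ∂μ = C * ∫ ω, (τ ω : ℝ) ∂μ := by
    rw [hfτ_eq, hτint_eq, Finset.mul_sum]
    refine Finset.sum_congr rfl fun k hk => ?_
    have hkN := Finset.mem_range.mp hk
    have hIval : ∫ ω, (if k < τ ω then (1 : ℝ) else 0) ∂μ = (μ {ω | k < τ ω}).toReal := by
      have : (fun ω => if k < τ ω then (1 : ℝ) else 0)
          = Set.indicator {ω | k < τ ω} (fun _ => (1 : ℝ)) := by
        funext ω
        by_cases h : k < τ ω <;> simp [Set.indicator_apply, h]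
      rw [this, integral_indicator (hAmeas k hkN), setIntegral_const, smul_eq_mul, mul_one, measureReal_def]
    rw [hWald k hkN, hIval]
  have h2 : ∫ ω, S (τ ω) ω ∂μ ≤ γ + B := by
    calc ∫ ω, S (τ ω) ω ∂μ ≤ ∫ _, (γ + B) ∂μ :=
          integral_mono hSτint (integrable_const _) hSτ
      _ = γ + B := by simp
  show ∫ ω, (τ ω : ℝ) ∂μ ≤ (γ + B) / C
  rw [le_div_iff₀ hC, mul_comm, ← h1]
  exact h2
end

section
/- There exists a finite constant K, depending only on P_X and W, such that for all integers n_1 ≥ 1 and I ≥ 1 and all real γ ≥ 0, setting n_j = n_1 + (j−1)I, one has n_1 + I · Σ_{j=1}^∞ E[exp(−[S_{n_j} − γ]^+)] ≤ γ/C + K·(n_1 + I). -/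
open MeasureTheory ProbabilityTheory
set_option linter.unusedSectionVars false
set_option maxHeartbeats 1000000

section Aux

variable {Ω E : Type*} [MeasurableSpace Ω] {μ : Measure Ω} [IsProbabilityMeasure μ]
  [MeasurableSpace E] [MeasurableSingletonClass E] [Fintype E] [Nonempty E]

lemma aux_integrable {h : Ω → ℝ} (hm : Measurable h) {M : ℝ} (hb : ∀ ω, |h ω| ≤ M) :
    Integrable h μ :=
  Integrable.mono' (integrable_const M) hm.aestronglyMeasurable
    (Filter.Eventually.of_forall fun ω => by simpa [Real.norm_eq_abs] using hb ω)

lemma aux_law (T : Ω → E) (hT : Measurable T) (q : E → ℝ) (hq : ∀ e, 0 ≤ q e)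
    (hlaw : ∀ e, μ {ω | T ω = e} = ENNReal.ofReal (q e)) (g : E → ℝ) :
    ∫ ω, g (T ω) ∂μ = ∑ e, q e * g e := by
  have h1 : ∀ ω, g (T ω) = ∑ e, Set.indicator {ω' | T ω' = e} (fun _ => g e) ω := by
    intro ω
    rw [Finset.sum_eq_single (T ω)]
    · simp [Set.indicator_apply]
    · intro e _ he
      simp [Set.indicator_apply]
      intro h; exact absurd h (Ne.symm he)
    · simp
  have hmeas : ∀ e : E, MeasurableSet {ω | T ω = e} := fun e => hT (measurableSet_singleton e)
  calc ∫ ω, g (T ω) ∂μ = ∫ ω, ∑ e, Set.indicator {ω' | T ω' = e} (fun _ => g e) ω ∂μ := by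
        simp_rw [← h1]
    _ = ∑ e, ∫ ω, Set.indicator {ω' | T ω' = e} (fun _ => g e) ω ∂μ := by
        apply integral_finset_sum
        intro e _
        exact (integrable_const (g e)).indicator (hmeas e)
    _ = ∑ e, q e * g e := by
        apply Finset.sum_congr rfl
        intro e _
        rw [integral_indicator_const _ (hmeas e), measureReal_def, hlaw e, ENNReal.toReal_ofReal (hq e),
          smul_eq_mul]

lemma aux_key (V : ℕ → Ω → E) (hV : ∀ k, Measurable (V k))
    (hind : iIndepFun V μ)
    (n k : ℕ) (hk : n ≤ k)
    (φ : (ℕ → E) → ℝ) (hφ : ∀ v w : ℕ → E, (∀ i, i < n → v i = w i) → φ v = φ w)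
    (g : E → ℝ) :
    ∫ ω, φ (fun i => V i ω) * g (V k ω) ∂μ
      = (∫ ω, φ (fun i => V i ω) ∂μ) * ∫ ω, g (V k ω) ∂μ := by
  classical
  have hdisj : Disjoint (Finset.range n) ({k} : Finset ℕ) := by
    simp [Finset.disjoint_left]
    omega
  have hIF := hind.indepFun_finset (Finset.range n) {k} hdisj hV
  set d : E := Classical.arbitrary E with hd
  let Φ : ({x // x ∈ Finset.range n} → E) → ℝ :=
    fun u => φ (fun i => if h : i ∈ Finset.range n then u ⟨i, h⟩ else d)
  let Ψ : ({x // x ∈ ({k} : Finset ℕ)} → E) → ℝ := fun u => g (u ⟨k, Finset.mem_singleton_self k⟩)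
  have hΦ : Measurable Φ := measurable_of_countable _
  have hΨ : Measurable Ψ := measurable_of_countable _
  have hcomp := hIF.comp hΦ hΨ
  have h1 : (fun ω => Φ (fun i : {x // x ∈ Finset.range n} => V i ω))
      = fun ω => φ (fun i => V i ω) := by
    funext ω
    apply hφ
    intro i hi
    simp [Finset.mem_range, hi]
  have h2 : (fun ω => Ψ (fun i : {x // x ∈ ({k} : Finset ℕ)} => V i ω))
      = fun ω => g (V k ω) := rfl
  have hcomp : IndepFun (fun ω => φ (fun i => V i ω)) (fun ω => g (V k ω)) μ := by
    rw [← h1, ← h2]; exact hcomp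
  have hm1 : Measurable (fun ω => φ (fun i => V i ω)) := by
    rw [← h1]
    exact hΦ.comp (measurable_pi_lambda _ (fun i => hV i))
  have hm2 : Measurable (fun ω => g (V k ω)) :=
    (measurable_of_countable g).comp (hV k)
  have := hcomp.integral_mul_eq_mul_integral hm1.aestronglyMeasurable hm2.aestronglyMeasurable
  simpa using this

end Aux


set_option linter.unusedSectionVars false

section Prob

variable {Ω E : Type*} [MeasurableSpace Ω] {μ : Measure Ω} [IsProbabilityMeasure μ]
  [MeasurableSpace E] [MeasurableSingletonClass E] [Fintype E] [Nonempty E]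

/-- the event "τ > n" as a set of trajectories -/
def Agt (f : E → ℝ) (γ : ℝ) (n : ℕ) : Set (ℕ → E) :=
  {v | ∀ l ≤ n, (∑ k ∈ Finset.range l, f (v k)) < γ}

/-- the event "τ = m" as a set of trajectories -/
def Aeq (f : E → ℝ) (γ : ℝ) (m : ℕ) : Set (ℕ → E) :=
  {v | γ ≤ (∑ k ∈ Finset.range m, f (v k)) ∧ ∀ l < m, (∑ k ∈ Finset.range l, f (v k)) < γ}

variable (V : ℕ → Ω → E) (f : E → ℝ) (γ : ℝ)

lemma indc (A : Set (ℕ → E)) :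
    (fun ω => A.indicator (fun _ => (1:ℝ)) (fun i => V i ω))
      = ((fun ω (i : ℕ) => V i ω) ⁻¹' A).indicator (fun _ => (1:ℝ)) := by
  funext ω
  by_cases h : (fun i => V i ω) ∈ A
  · rw [Set.indicator_of_mem h, Set.indicator_of_mem (show ω ∈ (fun ω (i:ℕ) => V i ω) ⁻¹' A from h)]
  · rw [Set.indicator_of_notMem h, Set.indicator_of_notMem (show ω ∉ (fun ω (i:ℕ) => V i ω) ⁻¹' A from h)]

variable (hV : ∀ k, Measurable (V k))
include hV

lemma measurable_S (n : ℕ) : Measurable (fun ω => ∑ k ∈ Finset.range n, f (V k ω)) :=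
  Finset.measurable_sum _ (fun k _ => (measurable_of_countable f).comp (hV k))

lemma measurable_Agt (n : ℕ) : MeasurableSet ((fun ω (i : ℕ) => V i ω) ⁻¹' Agt f γ n) := by
  have h : (fun ω (i : ℕ) => V i ω) ⁻¹' Agt f γ n
      = ⋂ (l : ℕ), ⋂ (_ : l ≤ n), {ω | (∑ k ∈ Finset.range l, f (V k ω)) < γ} := by
    ext ω; simp [Agt]
  rw [h]
  exact MeasurableSet.iInter fun l => MeasurableSet.iInter fun _ =>
    measurableSet_lt (measurable_S V f hV l) measurable_const

lemma measurable_Aeq (m : ℕ) : MeasurableSet ((fun ω (i : ℕ) => V i ω) ⁻¹' Aeq f γ m) := by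
  have h : (fun ω (i : ℕ) => V i ω) ⁻¹' Aeq f γ m
      = {ω | γ ≤ ∑ k ∈ Finset.range m, f (V k ω)}
        ∩ ⋂ (l : ℕ), ⋂ (_ : l < m), {ω | (∑ k ∈ Finset.range l, f (V k ω)) < γ} := by
    ext ω; simp [Aeq]
  rw [h]
  exact (measurableSet_le measurable_const (measurable_S V f hV m)).inter
    (MeasurableSet.iInter fun l => MeasurableSet.iInter fun _ =>
      measurableSet_lt (measurable_S V f hV l) measurable_const)

lemma int_ind (A : Set (ℕ → E)) (hA : MeasurableSet ((fun ω (i : ℕ) => V i ω) ⁻¹' A)) :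
    ∫ ω, A.indicator (fun _ => (1:ℝ)) (fun i => V i ω) ∂μ
      = (μ ((fun ω (i : ℕ) => V i ω) ⁻¹' A)).toReal := by
  rw [indc, integral_indicator_const _ hA, smul_eq_mul, mul_one, measureReal_def]

variable (hind : iIndepFun V μ)
  (q : E → ℝ) (hq : ∀ e, 0 ≤ q e)
  (hlaw : ∀ k e, μ {ω | V k ω = e} = ENNReal.ofReal (q e))

-- needs aux_key and aux_law from aux.lean (assume same file later)

include hind hq hlaw in
lemma wald {C b : ℝ} (hC : 0 < C) (hCval : ∑ e, q e * f e = C) (hb : ∀ e, |f e| ≤ b)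
    (hγ : 0 ≤ γ) (N : ℕ) :
    ∑ k ∈ Finset.range N, (μ ((fun ω (i : ℕ) => V i ω) ⁻¹' Agt f γ k)).toReal ≤ (γ + b) / C := by
  classical
  have hb0 : 0 ≤ b := le_trans (abs_nonneg _) (hb (Classical.arbitrary E))
  have hfm : Measurable f := measurable_of_countable f
  set ind : ℕ → Ω → ℝ :=
    fun k ω => (Agt f γ k).indicator (fun _ => (1:ℝ)) (fun i => V i ω) with hind'
  have hindmem : ∀ k ω, (fun i => V i ω) ∈ Agt f γ k → ind k ω = 1 := by
    intro k ω h; simp only [hind', Set.indicator_of_mem h]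
  have hindnot : ∀ k ω, (fun i => V i ω) ∉ Agt f γ k → ind k ω = 0 := by
    intro k ω h; simp only [hind', Set.indicator_of_notMem h]
  have hkey : ∀ k, ∫ ω, ind k ω * f (V k ω) ∂μ
      = (μ ((fun ω (i : ℕ) => V i ω) ⁻¹' Agt f γ k)).toReal * C := by
    intro k
    have hcyl : ∀ v w : ℕ → E, (∀ i, i < k → v i = w i) →
        (Agt f γ k).indicator (fun _ => (1:ℝ)) v = (Agt f γ k).indicator (fun _ => (1:ℝ)) w := by
      intro v w hvw
      have hmem : v ∈ Agt f γ k ↔ w ∈ Agt f γ k := by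
        have hs : ∀ l, l ≤ k → (∑ i ∈ Finset.range l, f (v i)) = ∑ i ∈ Finset.range l, f (w i) := by
          intro l hl
          apply Finset.sum_congr rfl
          intro i hi
          rw [hvw i (by simp only [Finset.mem_range] at hi; omega)]
        constructor
        · intro h l hl; rw [← hs l hl]; exact h l hl
        · intro h l hl; rw [hs l hl]; exact h l hl
      by_cases h : v ∈ Agt f γ k
      · rw [Set.indicator_of_mem h, Set.indicator_of_mem (hmem.mp h)]
      · rw [Set.indicator_of_notMem h, Set.indicator_of_notMem (fun hw => h (hmem.mpr hw))]
    have h1 := aux_key V hV hind k k le_rfl ((Agt f γ k).indicator (fun _ => (1:ℝ))) hcyl f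
    show ∫ ω, (Agt f γ k).indicator (fun _ => (1:ℝ)) (fun i => V i ω) * f (V k ω) ∂μ = _
    rw [h1, int_ind V hV (Agt f γ k) (measurable_Agt V f γ hV k),
      aux_law (V k) (hV k) q hq (hlaw k) f, hCval]
  have hindm : ∀ k, Measurable (ind k) := by
    intro k
    show Measurable (fun ω => (Agt f γ k).indicator (fun _ => (1:ℝ)) (fun i => V i ω))
    rw [indc]
    exact measurable_const.indicator (measurable_Agt V f γ hV k)
  have hint : ∀ k, Integrable (fun ω => ind k ω * f (V k ω)) μ := by
    intro k
    apply aux_integrable ((hindm k).mul (hfm.comp (hV k))) (M := b)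
    intro ω
    simp only [Pi.mul_apply, Function.comp_apply]
    rw [abs_mul]
    by_cases h : (fun i => V i ω) ∈ Agt f γ k
    · rw [hindmem k ω h]; simpa using hb (V k ω)
    · rw [hindnot k ω h]; simpa using hb0
  have hpath : ∀ ω, ∑ k ∈ Finset.range N, ind k ω * f (V k ω) ≤ γ + b := by
    intro ω
    by_cases hall : ∀ k, k < N → (fun i => V i ω) ∈ Agt f γ k
    · have heq : ∑ k ∈ Finset.range N, ind k ω * f (V k ω)
          = ∑ k ∈ Finset.range N, f (V k ω) := by
        apply Finset.sum_congr rfl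
        intro k hk
        rw [hindmem k ω (hall k (Finset.mem_range.mp hk)), one_mul]
      rw [heq]
      cases N with
      | zero => simp; linarith
      | succ M =>
        rw [Finset.sum_range_succ]
        have h1 : (∑ k ∈ Finset.range M, f (V k ω)) < γ := (hall M (by omega)) M le_rfl
        have h2 : f (V M ω) ≤ b := (abs_le.mp (hb _)).2
        linarith
    · push_neg at hall
      obtain ⟨k₀, hk₀N, hk₀⟩ := hall
      have hex : ∃ k, (fun i => V i ω) ∉ Agt f γ k := ⟨k₀, hk₀⟩
      have htspec := Nat.find_spec hex
      have htmin : ∀ l, l < Nat.find hex → (fun i => V i ω) ∈ Agt f γ l :=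
        fun l hl => not_not.mp (Nat.find_min hex hl)
      have htN : Nat.find hex < N := lt_of_le_of_lt (Nat.find_min' hex hk₀) hk₀N
      set t := Nat.find hex with ht'
      have hterm : ∀ k ∈ Finset.range N, ind k ω * f (V k ω)
          = if k < t then f (V k ω) else 0 := by
        intro k hk
        by_cases h : k < t
        · rw [if_pos h, hindmem k ω (htmin k h), one_mul]
        · rw [if_neg h]
          have hnot : (fun i => V i ω) ∉ Agt f γ k := by
            intro hmem
            exact htspec (fun l hl => hmem l (le_trans hl (by omega)))
          rw [hindnot k ω hnot, zero_mul]
      rw [Finset.sum_congr rfl hterm]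
      have hsum : ∑ k ∈ Finset.range N, (if k < t then f (V k ω) else 0)
          = ∑ k ∈ Finset.range t, f (V k ω) := by
        rw [← Finset.sum_subset (Finset.range_subset_range.mpr htN.le)
          (fun x _ hnx => if_neg (by simpa [Finset.mem_range] using hnx))]
        apply Finset.sum_congr rfl
        intro k hk
        rw [if_pos (Finset.mem_range.mp hk)]
      rw [hsum]
      cases ht : t with
      | zero => simp; linarith
      | succ s =>
        rw [Finset.sum_range_succ]
        have h1 : (∑ k ∈ Finset.range s, f (V k ω)) < γ := (htmin s (by omega)) s le_rfl
        have h2 : f (V s ω) ≤ b := (abs_le.mp (hb _)).2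
        linarith
  have hsum : ∑ k ∈ Finset.range N,
      (μ ((fun ω (i : ℕ) => V i ω) ⁻¹' Agt f γ k)).toReal * C
      = ∫ ω, ∑ k ∈ Finset.range N, ind k ω * f (V k ω) ∂μ := by
    rw [integral_finset_sum _ (fun k _ => hint k)]
    exact Finset.sum_congr rfl fun k _ => (hkey k).symm
  have hmono := integral_mono (integrable_finset_sum _ (fun k hk => hint k))
    (integrable_const (γ + b)) hpath
  rw [integral_const] at hmono
  simp only [probReal_univ, one_smul] at hmono
  rw [← Finset.sum_mul] at hsum
  rw [le_div_iff₀ hC]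
  linarith [hsum ▸ hmono]

include hind hq hlaw in
lemma prod_exp {ρ : ℝ} (hρval : ∑ e, q e * Real.exp (-f e / 2) = ρ) :
    ∀ m n, m ≤ n → ∫ ω, (Aeq f γ m).indicator (fun _ => (1:ℝ)) (fun i => V i ω)
        * ∏ k ∈ Finset.Ico m n, Real.exp (-f (V k ω) / 2) ∂μ
      = (μ ((fun ω (i:ℕ) => V i ω) ⁻¹' Aeq f γ m)).toReal * ρ ^ (n - m) := by
  intro m n hmn
  induction n, hmn using Nat.le_induction with
  | base =>
    simp only [Finset.Ico_self, Finset.prod_empty, mul_one, Nat.sub_self, pow_zero]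
    exact int_ind V hV (Aeq f γ m) (measurable_Aeq V f γ hV m)
  | succ n hmn ih =>
    have hcyl : ∀ v w : ℕ → E, (∀ i, i < n → v i = w i) →
        ((Aeq f γ m).indicator (fun _ => (1:ℝ)) v * ∏ k ∈ Finset.Ico m n, Real.exp (-f (v k) / 2))
        = ((Aeq f γ m).indicator (fun _ => (1:ℝ)) w
            * ∏ k ∈ Finset.Ico m n, Real.exp (-f (w k) / 2)) := by
      intro v w hvw
      have hvw' : ∀ i, i < m → v i = w i := fun i hi => hvw i (by omega)
      have hprod : (∏ k ∈ Finset.Ico m n, Real.exp (-f (v k) / 2))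
          = ∏ k ∈ Finset.Ico m n, Real.exp (-f (w k) / 2) := by
        apply Finset.prod_congr rfl
        intro k hk
        rw [hvw k (by simp only [Finset.mem_Ico] at hk; omega)]
      have hmem : v ∈ Aeq f γ m ↔ w ∈ Aeq f γ m := by
        have hs : ∀ l, l ≤ m → (∑ i ∈ Finset.range l, f (v i)) = ∑ i ∈ Finset.range l, f (w i) := by
          intro l hl
          apply Finset.sum_congr rfl
          intro i hi
          rw [hvw' i (by simp only [Finset.mem_range] at hi; omega)]
        constructor
        · rintro ⟨h1, h2⟩
          exact ⟨(hs m le_rfl) ▸ h1, fun l hl => (hs l (by omega)) ▸ h2 l hl⟩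
        · rintro ⟨h1, h2⟩
          exact ⟨(hs m le_rfl).symm ▸ h1, fun l hl => (hs l (by omega)).symm ▸ h2 l hl⟩
      rw [hprod]
      by_cases h : v ∈ Aeq f γ m
      · rw [Set.indicator_of_mem h, Set.indicator_of_mem (hmem.mp h)]
      · rw [Set.indicator_of_notMem h, Set.indicator_of_notMem (fun hw => h (hmem.mpr hw))]
    have hk := aux_key V hV hind n n le_rfl
      (fun v => (Aeq f γ m).indicator (fun _ => (1:ℝ)) v
        * ∏ k ∈ Finset.Ico m n, Real.exp (-f (v k) / 2)) hcyl
      (fun e => Real.exp (-f e / 2))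
    have hre : (fun ω => (Aeq f γ m).indicator (fun _ => (1:ℝ)) (fun i => V i ω)
        * ∏ k ∈ Finset.Ico m (n+1), Real.exp (-f (V k ω) / 2))
        = fun ω => ((Aeq f γ m).indicator (fun _ => (1:ℝ)) (fun i => V i ω)
          * ∏ k ∈ Finset.Ico m n, Real.exp (-f (V k ω) / 2)) * Real.exp (-f (V n ω) / 2) := by
      funext ω
      rw [Finset.prod_Ico_succ_top hmn, mul_assoc]
    calc ∫ ω, (Aeq f γ m).indicator (fun _ => (1:ℝ)) (fun i => V i ω)
          * ∏ k ∈ Finset.Ico m (n+1), Real.exp (-f (V k ω) / 2) ∂μ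
        = ∫ ω, ((Aeq f γ m).indicator (fun _ => (1:ℝ)) (fun i => V i ω)
            * ∏ k ∈ Finset.Ico m n, Real.exp (-f (V k ω) / 2)) * Real.exp (-f (V n ω) / 2) ∂μ := by
          rw [hre]
      _ = (∫ ω, (Aeq f γ m).indicator (fun _ => (1:ℝ)) (fun i => V i ω)
            * ∏ k ∈ Finset.Ico m n, Real.exp (-f (V k ω) / 2) ∂μ)
            * ∫ ω, Real.exp (-f (V n ω) / 2) ∂μ := by simpa using hk
      _ = (μ ((fun ω (i:ℕ) => V i ω) ⁻¹' Aeq f γ m)).toReal * ρ ^ (n + 1 - m) := by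
          rw [ih, aux_law (V n) (hV n) q hq (hlaw n) (fun e => Real.exp (-f e / 2)), hρval,
            show n + 1 - m = (n - m) + 1 from by omega, pow_succ, mul_assoc]

include hV in
lemma eqsum (M : ℕ) :
    ∑ m ∈ Finset.range M, (μ ((fun ω (i:ℕ) => V i ω) ⁻¹' Aeq f γ m)).toReal ≤ 1 := by
  classical
  have hmeas : ∀ m : ℕ, MeasurableSet ((fun ω (i:ℕ) => V i ω) ⁻¹' Aeq f γ m) :=
    fun m => measurable_Aeq V f γ hV m
  have hdisj : Set.PairwiseDisjoint ↑(Finset.range M)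
      (fun m => (fun ω (i:ℕ) => V i ω) ⁻¹' Aeq f γ m) := by
    intro i _ j _ hij
    have key : ∀ a c : ℕ, a < c →
        Disjoint ((fun ω (i:ℕ) => V i ω) ⁻¹' Aeq f γ a) ((fun ω (i:ℕ) => V i ω) ⁻¹' Aeq f γ c) := by
      intro a c hac
      rw [Set.disjoint_left]
      intro ω ha hc
      exact absurd (hc.2 a hac) (not_lt.mpr ha.1)
    rcases lt_or_gt_of_ne hij with h | h
    · exact key i j h
    · exact (key j i h).symm
  have hsum : ∑ m ∈ Finset.range M, μ ((fun ω (i:ℕ) => V i ω) ⁻¹' Aeq f γ m)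
      = μ (⋃ m ∈ Finset.range M, (fun ω (i:ℕ) => V i ω) ⁻¹' Aeq f γ m) :=
    (measure_biUnion_finset hdisj (fun m _ => hmeas m)).symm
  have h1 : (∑ m ∈ Finset.range M, μ ((fun ω (i:ℕ) => V i ω) ⁻¹' Aeq f γ m)).toReal
      = ∑ m ∈ Finset.range M, (μ ((fun ω (i:ℕ) => V i ω) ⁻¹' Aeq f γ m)).toReal :=
    ENNReal.toReal_sum (fun m _ => measure_ne_top μ _)
  rw [← h1, hsum]
  have h2 : μ (⋃ m ∈ Finset.range M, (fun ω (i:ℕ) => V i ω) ⁻¹' Aeq f γ m) ≤ 1 :=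
    prob_le_one
  exact ENNReal.toReal_mono ENNReal.one_ne_top h2 |>.trans_eq ENNReal.toReal_one

include hind hq hlaw in
lemma Tbound {ρ b : ℝ} (hρval : ∑ e, q e * Real.exp (-f e / 2) = ρ)
    (hb : ∀ e, |f e| ≤ b) (n : ℕ) :
    ∫ ω, Real.exp (-(max ((∑ k ∈ Finset.range n, f (V k ω)) - γ) 0)) ∂μ
      ≤ (μ ((fun ω (i:ℕ) => V i ω) ⁻¹' Agt f γ n)).toReal
        + ∑ m ∈ Finset.range (n+1),
            (μ ((fun ω (i:ℕ) => V i ω) ⁻¹' Aeq f γ m)).toReal * ρ ^ (n - m) := by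
  classical
  have hb0 : 0 ≤ b := le_trans (abs_nonneg _) (hb (Classical.arbitrary E))
  have hfm : Measurable f := measurable_of_countable f
  have hindGT01 : ∀ ω, 0 ≤ (Agt f γ n).indicator (fun _ => (1:ℝ)) (fun i => V i ω) ∧
      (Agt f γ n).indicator (fun _ => (1:ℝ)) (fun i => V i ω) ≤ 1 := by
    intro ω
    by_cases h : (fun i => V i ω) ∈ Agt f γ n <;>
      simp [Set.indicator_apply, h]
  have hprodpos : ∀ (m : ℕ) ω, 0 ≤ ∏ k ∈ Finset.Ico m n, Real.exp (-f (V k ω) / 2) :=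
    fun m ω => Finset.prod_nonneg (fun k _ => (Real.exp_pos _).le)
  have hterm_nonneg : ∀ (m : ℕ) ω,
      0 ≤ (Aeq f γ m).indicator (fun _ => (1:ℝ)) (fun i => V i ω)
        * ∏ k ∈ Finset.Ico m n, Real.exp (-f (V k ω) / 2) := by
    intro m ω
    apply mul_nonneg _ (hprodpos m ω)
    by_cases h : (fun i => V i ω) ∈ Aeq f γ m <;> simp [Set.indicator_apply, h]
  -- pathwise bound
  have hpath : ∀ ω, Real.exp (-(max ((∑ k ∈ Finset.range n, f (V k ω)) - γ) 0))
      ≤ (Agt f γ n).indicator (fun _ => (1:ℝ)) (fun i => V i ω)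
        + ∑ m ∈ Finset.range (n+1), (Aeq f γ m).indicator (fun _ => (1:ℝ)) (fun i => V i ω)
            * ∏ k ∈ Finset.Ico m n, Real.exp (-f (V k ω) / 2) := by
    intro ω
    have hexp1 : Real.exp (-(max ((∑ k ∈ Finset.range n, f (V k ω)) - γ) 0)) ≤ 1 := by
      rw [show (1:ℝ) = Real.exp 0 from (Real.exp_zero).symm]
      apply Real.exp_le_exp.mpr
      simp [le_max_right]
    by_cases hin : (fun i => V i ω) ∈ Agt f γ n
    · have h1 : (Agt f γ n).indicator (fun _ => (1:ℝ)) (fun i => V i ω) = 1 :=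
        Set.indicator_of_mem hin _
      rw [h1]
      have h2 : 0 ≤ ∑ m ∈ Finset.range (n+1), (Aeq f γ m).indicator (fun _ => (1:ℝ))
          (fun i => V i ω) * ∏ k ∈ Finset.Ico m n, Real.exp (-f (V k ω) / 2) :=
        Finset.sum_nonneg (fun m _ => hterm_nonneg m ω)
      linarith
    · -- there is a first passage time t ≤ n
      have hex : ∃ l, γ ≤ ∑ k ∈ Finset.range l, f (V k ω) := by
        simp only [Agt, Set.mem_setOf_eq, not_forall, not_lt] at hin
        obtain ⟨l, _, hl2⟩ := hin
        exact ⟨l, hl2⟩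
      have htspec := Nat.find_spec hex
      have htmin : ∀ l, l < Nat.find hex → (∑ k ∈ Finset.range l, f (V k ω)) < γ :=
        fun l hl => lt_of_not_ge (Nat.find_min hex hl)
      have htn : Nat.find hex ≤ n := by
        simp only [Agt, Set.mem_setOf_eq, not_forall, not_lt] at hin
        obtain ⟨l, hl1, hl2⟩ := hin
        exact le_trans (Nat.find_min' hex hl2) hl1
      set t := Nat.find hex with ht'
      have hmem : (fun i => V i ω) ∈ Aeq f γ t := ⟨htspec, htmin⟩
      -- the term at t
      have hval : (Aeq f γ t).indicator (fun _ => (1:ℝ)) (fun i => V i ω)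
          * ∏ k ∈ Finset.Ico t n, Real.exp (-f (V k ω) / 2)
          = Real.exp (-((∑ k ∈ Finset.range n, f (V k ω))
              - (∑ k ∈ Finset.range t, f (V k ω))) / 2) := by
        rw [Set.indicator_of_mem hmem, one_mul]
        rw [show (∏ k ∈ Finset.Ico t n, Real.exp (-f (V k ω) / 2))
            = Real.exp (∑ k ∈ Finset.Ico t n, (-f (V k ω) / 2)) from (Real.exp_sum _ _).symm]
        congr 1
        rw [show (∑ k ∈ Finset.Ico t n, (-f (V k ω) / 2))
            = -(∑ k ∈ Finset.Ico t n, f (V k ω)) / 2 from by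
          rw [← Finset.sum_neg_distrib, ← Finset.sum_div]]
        rw [Finset.sum_Ico_eq_sub _ htn]
      have hle : Real.exp (-(max ((∑ k ∈ Finset.range n, f (V k ω)) - γ) 0))
          ≤ Real.exp (-((∑ k ∈ Finset.range n, f (V k ω))
              - (∑ k ∈ Finset.range t, f (V k ω))) / 2) := by
        apply Real.exp_le_exp.mpr
        have hSt : γ ≤ ∑ k ∈ Finset.range t, f (V k ω) := htspec
        rcases le_or_gt γ (∑ k ∈ Finset.range n, f (V k ω)) with h | h
        · rw [max_eq_left (by linarith)]
          linarith
        · rw [max_eq_right (by linarith)]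
          linarith
      have hsingle : (Aeq f γ t).indicator (fun _ => (1:ℝ)) (fun i => V i ω)
          * ∏ k ∈ Finset.Ico t n, Real.exp (-f (V k ω) / 2)
          ≤ ∑ m ∈ Finset.range (n+1), (Aeq f γ m).indicator (fun _ => (1:ℝ)) (fun i => V i ω)
            * ∏ k ∈ Finset.Ico m n, Real.exp (-f (V k ω) / 2) :=
        Finset.single_le_sum (fun m _ => hterm_nonneg m ω)
          (Finset.mem_range.mpr (by omega))
      have hind0 : 0 ≤ (Agt f γ n).indicator (fun _ => (1:ℝ)) (fun i => V i ω) :=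
        (hindGT01 ω).1
      calc Real.exp (-(max ((∑ k ∈ Finset.range n, f (V k ω)) - γ) 0))
          ≤ Real.exp (-((∑ k ∈ Finset.range n, f (V k ω))
              - (∑ k ∈ Finset.range t, f (V k ω))) / 2) := hle
        _ = (Aeq f γ t).indicator (fun _ => (1:ℝ)) (fun i => V i ω)
            * ∏ k ∈ Finset.Ico t n, Real.exp (-f (V k ω) / 2) := hval.symm
        _ ≤ ∑ m ∈ Finset.range (n+1), (Aeq f γ m).indicator (fun _ => (1:ℝ)) (fun i => V i ω)
            * ∏ k ∈ Finset.Ico m n, Real.exp (-f (V k ω) / 2) := hsingle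
        _ ≤ _ := by linarith
  -- integrability
  have hmeasL : Measurable (fun ω => Real.exp
      (-(max ((∑ k ∈ Finset.range n, f (V k ω)) - γ) 0))) := by
    apply Real.measurable_exp.comp
    apply Measurable.neg
    exact Measurable.max ((measurable_S V f hV n).sub measurable_const) measurable_const
  have hintL : Integrable (fun ω => Real.exp
      (-(max ((∑ k ∈ Finset.range n, f (V k ω)) - γ) 0))) μ := by
    apply aux_integrable hmeasL (M := 1)
    intro ω
    rw [abs_of_pos (Real.exp_pos _)]
    rw [show (1:ℝ) = Real.exp 0 from (Real.exp_zero).symm]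
    apply Real.exp_le_exp.mpr
    simp [le_max_right]
  have hmeasprod : ∀ m : ℕ, Measurable (fun ω => ∏ k ∈ Finset.Ico m n,
      Real.exp (-f (V k ω) / 2)) := by
    intro m
    apply Finset.measurable_prod
    intro k _
    exact Real.measurable_exp.comp (((hfm.comp (hV k)).neg).div_const 2)
  have hmeasind : ∀ m : ℕ, Measurable (fun ω => (Aeq f γ m).indicator (fun _ => (1:ℝ))
      (fun i => V i ω)) := by
    intro m
    rw [indc]
    exact measurable_const.indicator (measurable_Aeq V f γ hV m)
  have hprodbd : ∀ (m : ℕ) ω, (∏ k ∈ Finset.Ico m n, Real.exp (-f (V k ω) / 2))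
      ≤ Real.exp (b / 2) ^ n := by
    intro m ω
    calc (∏ k ∈ Finset.Ico m n, Real.exp (-f (V k ω) / 2))
        ≤ ∏ k ∈ Finset.Ico m n, Real.exp (b / 2) := by
          apply Finset.prod_le_prod (fun k _ => (Real.exp_pos _).le)
          intro k _
          apply Real.exp_le_exp.mpr
          have := (abs_le.mp (hb (V k ω))).1
          linarith
      _ = Real.exp (b / 2) ^ (n - m) := by rw [Finset.prod_const, Nat.card_Ico]
      _ ≤ Real.exp (b / 2) ^ n :=
          pow_le_pow_right₀ (Real.one_le_exp (by linarith)) (by omega)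
  have hintterm : ∀ m ∈ Finset.range (n+1), Integrable (fun ω =>
      (Aeq f γ m).indicator (fun _ => (1:ℝ)) (fun i => V i ω)
        * ∏ k ∈ Finset.Ico m n, Real.exp (-f (V k ω) / 2)) μ := by
    intro m _
    apply aux_integrable ((hmeasind m).mul (hmeasprod m)) (M := Real.exp (b / 2) ^ n)
    intro ω
    simp only [Pi.mul_apply]
    rw [abs_mul]
    have h1 : |(Aeq f γ m).indicator (fun _ => (1:ℝ)) (fun i => V i ω)| ≤ 1 := by
      by_cases h : (fun i => V i ω) ∈ Aeq f γ m <;> simp [Set.indicator_apply, h]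
    have h2 : |∏ k ∈ Finset.Ico m n, Real.exp (-f (V k ω) / 2)| ≤ Real.exp (b / 2) ^ n := by
      rw [abs_of_nonneg (hprodpos m ω)]
      exact hprodbd m ω
    calc |(Aeq f γ m).indicator (fun _ => (1:ℝ)) (fun i => V i ω)|
          * |∏ k ∈ Finset.Ico m n, Real.exp (-f (V k ω) / 2)|
        ≤ 1 * (Real.exp (b / 2) ^ n) := by
          apply mul_le_mul h1 h2 (abs_nonneg _) zero_le_one
      _ = Real.exp (b / 2) ^ n := one_mul _
  have hintind : Integrable (fun ω => (Agt f γ n).indicator (fun _ => (1:ℝ))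
      (fun i => V i ω)) μ := by
    apply aux_integrable ?_ (M := 1)
    · intro ω
      by_cases h : (fun i => V i ω) ∈ Agt f γ n <;> simp [Set.indicator_apply, h]
    · rw [indc]
      exact measurable_const.indicator (measurable_Agt V f γ hV n)
  have hintR : Integrable (fun ω => (Agt f γ n).indicator (fun _ => (1:ℝ)) (fun i => V i ω)
      + ∑ m ∈ Finset.range (n+1), (Aeq f γ m).indicator (fun _ => (1:ℝ)) (fun i => V i ω)
          * ∏ k ∈ Finset.Ico m n, Real.exp (-f (V k ω) / 2)) μ :=
    hintind.add (integrable_finset_sum _ hintterm)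
  have hmono := integral_mono hintL hintR hpath
  refine le_trans hmono ?_
  rw [integral_add hintind (integrable_finset_sum _ hintterm),
    integral_finset_sum _ hintterm,
    int_ind V hV (Agt f γ n) (measurable_Agt V f γ hV n)]
  apply add_le_add le_rfl
  apply le_of_eq
  apply Finset.sum_congr rfl
  intro m hm
  exact prod_exp V f γ hV hind q hq hlaw hρval m n (by simpa using Nat.lt_succ_iff.mp (Finset.mem_range.mp hm))

end Prob



lemma geom_aux {ρ : ℝ} (h0 : 0 ≤ ρ) (h1 : ρ < 1) (F : Finset ℕ) (e : ℕ → ℕ)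
    (hinj : ∀ i ∈ F, ∀ j ∈ F, e i = e j → i = j) :
    ∑ j ∈ F, ρ ^ (e j) ≤ 1 / (1 - ρ) := by
  have himg : ∑ t ∈ F.image e, ρ ^ t = ∑ j ∈ F, ρ ^ e j := Finset.sum_image hinj
  rw [← himg]
  set N := (F.image e).sup id + 1 with hN
  have hsub : F.image e ⊆ Finset.range N := by
    intro t ht
    simp only [Finset.mem_range, hN]
    exact Nat.lt_succ_of_le (Finset.le_sup (f := id) ht)
  calc ∑ t ∈ F.image e, ρ ^ t ≤ ∑ t ∈ Finset.range N, ρ ^ t :=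
        Finset.sum_le_sum_of_subset_of_nonneg hsub (fun t _ _ => pow_nonneg h0 t)
    _ ≤ 1 / (1 - ρ) := by
        rw [geom_sum_eq (ne_of_lt h1)]
        have h2 : (ρ ^ N - 1) / (ρ - 1) = (1 - ρ ^ N) / (1 - ρ) := by
          rw [← neg_div_neg_eq]; ring_nf
        rw [h2]
        exact (div_le_div_iff_of_pos_right (by linarith : (0:ℝ) < 1 - ρ)).mpr
          (by nlinarith [pow_nonneg h0 N])

lemma regroupA {u : ℕ → ℝ} (hu0 : ∀ n, 0 ≤ u n) (hu1 : ∀ n, u n ≤ 1)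
    (hmono : ∀ m n, m ≤ n → u n ≤ u m) {B : ℝ} (hB : ∀ N, ∑ k ∈ Finset.range N, u k ≤ B)
    (n₁ I : ℕ) (hI : 1 ≤ I) :
    ∀ J, ∑ j ∈ Finset.range J, (I : ℝ) * u (n₁ + j * I) ≤ I + B := by
  have key : ∀ J, ∑ j ∈ Finset.range (J + 1), (I : ℝ) * u (n₁ + j * I)
      ≤ (I : ℝ) * u n₁ + ∑ k ∈ Finset.Ico (n₁ + 1) (n₁ + J * I + 1), u k := by
    intro J
    induction J with
    | zero => simp
    | succ J ih =>
      rw [Finset.sum_range_succ]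
      have hJI : (J + 1) * I = J * I + I := by ring
      have hcard : (Finset.Ico (n₁ + J * I + 1) (n₁ + (J + 1) * I + 1)).card = I := by
        rw [Nat.card_Ico, hJI]; omega
      have step : (I : ℝ) * u (n₁ + (J + 1) * I)
          ≤ ∑ k ∈ Finset.Ico (n₁ + J * I + 1) (n₁ + (J + 1) * I + 1), u k := by
        have h := Finset.card_nsmul_le_sum (Finset.Ico (n₁ + J * I + 1) (n₁ + (J + 1) * I + 1))
          u (u (n₁ + (J + 1) * I)) ?_
        · rw [hcard, nsmul_eq_mul] at h; exact h
        · intro k hk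
          simp only [Finset.mem_Ico] at hk
          exact hmono k (n₁ + (J + 1) * I) (by omega)
      have hmerge : ∑ k ∈ Finset.Ico (n₁ + 1) (n₁ + J * I + 1), u k
          + ∑ k ∈ Finset.Ico (n₁ + J * I + 1) (n₁ + (J + 1) * I + 1), u k
          = ∑ k ∈ Finset.Ico (n₁ + 1) (n₁ + (J + 1) * I + 1), u k :=
        Finset.sum_Ico_consecutive u (by omega) (by rw [hJI]; omega)
      linarith [add_le_add ih step]
  intro J
  cases J with
  | zero =>
    have hB0 := hB 0
    simp only [Finset.range_zero, Finset.sum_empty] at hB0 ⊢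
    have : (0:ℝ) ≤ I := Nat.cast_nonneg I
    linarith
  | succ J =>
    have h1 := key J
    have h2 : ∑ k ∈ Finset.Ico (n₁ + 1) (n₁ + J * I + 1), u k
        ≤ ∑ k ∈ Finset.range (n₁ + J * I + 1), u k := by
      apply Finset.sum_le_sum_of_subset_of_nonneg
      · intro k hk; simp only [Finset.mem_Ico] at hk; simp only [Finset.mem_range]; omega
      · intro k _ _; exact hu0 k
    have h3 : (I : ℝ) * u n₁ ≤ I * 1 := by
      apply mul_le_mul_of_nonneg_left (hu1 n₁) (Nat.cast_nonneg I)
    calc ∑ j ∈ Finset.range (J + 1), (I : ℝ) * u (n₁ + j * I)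
        ≤ (I : ℝ) * u n₁ + ∑ k ∈ Finset.Ico (n₁ + 1) (n₁ + J * I + 1), u k := h1
      _ ≤ (I : ℝ) * 1 + B := by linarith [(h2.trans (hB _))]
      _ = I + B := by ring

lemma partB {ρ : ℝ} (h0 : 0 ≤ ρ) (h1 : ρ < 1) (P : ℕ → ℝ) (hP0 : ∀ m, 0 ≤ P m)
    (hP1 : ∀ M, ∑ m ∈ Finset.range M, P m ≤ 1) (n₁ I : ℕ) (hI : 1 ≤ I) (J : ℕ) :
    ∑ j ∈ Finset.range J, (I : ℝ) * ∑ m ∈ Finset.range (n₁ + j * I + 1), P m * ρ ^ (n₁ + j * I - m)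
      ≤ I * (1 / (1 - ρ)) := by
  classical
  set NN := n₁ + J * I with hNN
  have hρpos : (0:ℝ) < 1 - ρ := by linarith
  have hρinv : (0:ℝ) ≤ 1 / (1 - ρ) := by positivity
  have hstep1 : ∀ j ∈ Finset.range J,
      (I : ℝ) * ∑ m ∈ Finset.range (n₁ + j * I + 1), P m * ρ ^ (n₁ + j * I - m)
      = ∑ m ∈ Finset.range (NN + 1),
          (I : ℝ) * (P m * if m ≤ n₁ + j * I then ρ ^ (n₁ + j * I - m) else 0) := by
    intro j hj
    simp only [Finset.mem_range] at hj
    rw [Finset.mul_sum]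
    have e1 : ∑ m ∈ Finset.range (n₁ + j * I + 1), (I:ℝ) * (P m * ρ ^ (n₁ + j * I - m))
        = ∑ m ∈ Finset.range (n₁ + j * I + 1),
            (I : ℝ) * (P m * if m ≤ n₁ + j * I then ρ ^ (n₁ + j * I - m) else 0) := by
      apply Finset.sum_congr rfl
      intro m hm
      simp only [Finset.mem_range] at hm
      rw [if_pos (by omega)]
    rw [e1]
    apply Finset.sum_subset
    · intro m hm
      simp only [Finset.mem_range] at hm ⊢
      have : j * I ≤ J * I := Nat.mul_le_mul_right I (by omega)
      omega
    · intro m _ hm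
      simp only [Finset.mem_range] at hm
      rw [if_neg (by omega)]
      ring
  rw [Finset.sum_congr rfl hstep1, Finset.sum_comm]
  have hinner : ∀ m ∈ Finset.range (NN + 1),
      ∑ j ∈ Finset.range J, (I : ℝ) * (P m * if m ≤ n₁ + j * I then ρ ^ (n₁ + j * I - m) else 0)
      ≤ (I : ℝ) * P m * (1 / (1 - ρ)) := by
    intro m _
    have heq : ∑ j ∈ Finset.range J,
        (I : ℝ) * (P m * if m ≤ n₁ + j * I then ρ ^ (n₁ + j * I - m) else 0)
        = (I : ℝ) * P m * ∑ j ∈ Finset.range J,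
            (if m ≤ n₁ + j * I then ρ ^ (n₁ + j * I - m) else 0) := by
      rw [Finset.mul_sum]
      apply Finset.sum_congr rfl
      intro j _
      split <;> ring
    rw [heq]
    have hPm := hP0 m
    have hgeo : ∑ j ∈ Finset.range J, (if m ≤ n₁ + j * I then ρ ^ (n₁ + j * I - m) else 0)
        ≤ 1 / (1 - ρ) := by
      rw [← Finset.sum_filter]
      apply geom_aux h0 h1
      intro i hi j hj hij
      simp only [Finset.mem_filter, Finset.mem_range] at hi hj
      by_contra hne
      rcases Nat.lt_or_ge i j with h | h
      · have : i * I < j * I := Nat.mul_lt_mul_of_lt_of_le h (le_refl I) (by omega)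
        omega
      · have h' : j < i := by omega
        have : j * I < i * I := Nat.mul_lt_mul_of_lt_of_le h' (le_refl I) (by omega)
        omega
    exact mul_le_mul_of_nonneg_left hgeo (mul_nonneg (Nat.cast_nonneg I) hPm)
  calc ∑ m ∈ Finset.range (NN + 1), ∑ j ∈ Finset.range J,
        (I : ℝ) * (P m * if m ≤ n₁ + j * I then ρ ^ (n₁ + j * I - m) else 0)
      ≤ ∑ m ∈ Finset.range (NN + 1), (I : ℝ) * P m * (1 / (1 - ρ)) :=
        Finset.sum_le_sum hinner
    _ = (I : ℝ) * (1 / (1 - ρ)) * ∑ m ∈ Finset.range (NN + 1), P m := by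
        rw [Finset.mul_sum]; apply Finset.sum_congr rfl; intro m _; ring
    _ ≤ (I : ℝ) * (1 / (1 - ρ)) * 1 := by
        apply mul_le_mul_of_nonneg_left (hP1 _) (by positivity)
    _ = I * (1 / (1 - ρ)) := by ring

lemma main_abstract {Ω E : Type*} [MeasurableSpace Ω] {μ : Measure Ω} [IsProbabilityMeasure μ]
    [MeasurableSpace E] [MeasurableSingletonClass E] [Fintype E] [Nonempty E]
    (V : ℕ → Ω → E) (hV : ∀ k, Measurable (V k))
    (hind : iIndepFun V μ)
    (q : E → ℝ) (hq : ∀ e, 0 ≤ q e)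
    (hlaw : ∀ k e, μ {ω | V k ω = e} = ENNReal.ofReal (q e))
    (f : E → ℝ) (C : ℝ) (hC : 0 < C) (hCval : ∑ e, q e * f e = C)
    (ρ : ℝ) (hρ0 : 0 ≤ ρ) (hρ1 : ρ < 1) (hρval : ∑ e, q e * Real.exp (-f e / 2) = ρ)
    (b : ℝ) (hb : ∀ e, |f e| ≤ b) :
    ∃ K : ℝ, ∀ n₁ I : ℕ, 1 ≤ n₁ → 1 ≤ I → ∀ γ : ℝ, 0 ≤ γ →
      Summable (fun j : ℕ => ∫ ω, Real.exp (-(max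
          ((∑ k ∈ Finset.range (n₁ + j * I), f (V k ω)) - γ) 0)) ∂μ)
      ∧ (n₁ : ℝ) + (I : ℝ) * ∑' j : ℕ, (∫ ω, Real.exp (-(max
            ((∑ k ∈ Finset.range (n₁ + j * I), f (V k ω)) - γ) 0)) ∂μ)
          ≤ γ / C + K * ((n₁ : ℝ) + (I : ℝ)) := by
  classical
  have hb0 : 0 ≤ b := le_trans (abs_nonneg _) (hb (Classical.arbitrary E))
  have hρpos : (0:ℝ) < 1 - ρ := by linarith
  have hδ : (0:ℝ) ≤ 1 / (1 - ρ) := by positivity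
  have hbC : (0:ℝ) ≤ b / C := div_nonneg hb0 hC.le
  refine ⟨2 + b / C + 1 / (1 - ρ), ?_⟩
  intro n₁ I hn₁ hI γ hγ
  have hIR : (1:ℝ) ≤ (I:ℝ) := by exact_mod_cast hI
  have hn₁R : (1:ℝ) ≤ (n₁:ℝ) := by exact_mod_cast hn₁
  have hIpos : (0:ℝ) < I := by linarith
  set T : ℕ → ℝ := fun j => ∫ ω, Real.exp (-(max
      ((∑ k ∈ Finset.range (n₁ + j * I), f (V k ω)) - γ) 0)) ∂μ with hT
  set PGT : ℕ → ℝ := fun n => (μ ((fun ω (i:ℕ) => V i ω) ⁻¹' Agt f γ n)).toReal with hPGT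
  set PEQ : ℕ → ℝ := fun m => (μ ((fun ω (i:ℕ) => V i ω) ⁻¹' Aeq f γ m)).toReal with hPEQ
  have hT0 : ∀ j, 0 ≤ T j := fun j => integral_nonneg (fun ω => (Real.exp_pos _).le)
  have hTb : ∀ j, T j ≤ PGT (n₁ + j * I)
      + ∑ m ∈ Finset.range (n₁ + j * I + 1), PEQ m * ρ ^ (n₁ + j * I - m) :=
    fun j => Tbound V f γ hV hind q hq hlaw hρval hb (n₁ + j * I)
  have hWald : ∀ N, ∑ k ∈ Finset.range N, PGT k ≤ (γ + b) / C :=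
    fun N => wald V f γ hV hind q hq hlaw hC hCval hb hγ N
  have hPGT0 : ∀ n, 0 ≤ PGT n := fun n => ENNReal.toReal_nonneg
  have hPGT1 : ∀ n, PGT n ≤ 1 := by
    intro n
    have := ENNReal.toReal_mono ENNReal.one_ne_top
      (prob_le_one (μ := μ) (s := (fun ω (i:ℕ) => V i ω) ⁻¹' Agt f γ n))
    simpa using this
  have hmono : ∀ m n, m ≤ n → PGT n ≤ PGT m := by
    intro m n hmn
    apply ENNReal.toReal_mono (measure_ne_top μ _)
    apply measure_mono
    apply Set.preimage_mono
    intro v hv l hl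
    exact hv l (le_trans hl hmn)
  have hPEQ0 : ∀ m, 0 ≤ PEQ m := fun m => ENNReal.toReal_nonneg
  have hPEQ1 : ∀ M, ∑ m ∈ Finset.range M, PEQ m ≤ 1 := fun M => eqsum V f γ hV M
  have hA := regroupA hPGT0 hPGT1 hmono hWald n₁ I hI
  have hB := partB hρ0 hρ1 PEQ hPEQ0 hPEQ1 n₁ I hI
  have hpartial : ∀ J, ∑ j ∈ Finset.range J, T j
      ≤ ((I:ℝ) + (γ + b) / C + I * (1 / (1 - ρ))) / I := by
    intro J
    have h1 : ∑ j ∈ Finset.range J, (I:ℝ) * T j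
        ≤ (I:ℝ) + (γ + b) / C + I * (1 / (1 - ρ)) := by
      calc ∑ j ∈ Finset.range J, (I:ℝ) * T j
          ≤ ∑ j ∈ Finset.range J, (I:ℝ) * (PGT (n₁ + j * I)
              + ∑ m ∈ Finset.range (n₁ + j * I + 1), PEQ m * ρ ^ (n₁ + j * I - m)) :=
            Finset.sum_le_sum (fun j _ =>
              mul_le_mul_of_nonneg_left (hTb j) (Nat.cast_nonneg I))
        _ = ∑ j ∈ Finset.range J, (I:ℝ) * PGT (n₁ + j * I)
            + ∑ j ∈ Finset.range J, (I:ℝ)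
              * ∑ m ∈ Finset.range (n₁ + j * I + 1), PEQ m * ρ ^ (n₁ + j * I - m) := by
            rw [← Finset.sum_add_distrib]
            apply Finset.sum_congr rfl
            intro j _
            ring
        _ ≤ ((I:ℝ) + (γ + b) / C) + I * (1 / (1 - ρ)) := add_le_add (hA J) (hB J)
        _ = (I:ℝ) + (γ + b) / C + I * (1 / (1 - ρ)) := by ring
    rw [← Finset.mul_sum] at h1
    exact (le_div_iff₀' hIpos).mpr h1
  have hsummable := summable_of_sum_range_le hT0 hpartial
  have htsum := Real.tsum_le_of_sum_range_le hT0 hpartial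
  refine ⟨hsummable, ?_⟩
  have h2 : (I:ℝ) * ∑' j, T j ≤ (I:ℝ) + (γ + b) / C + I * (1 / (1 - ρ)) := by
    calc (I:ℝ) * ∑' j, T j
        ≤ (I:ℝ) * (((I:ℝ) + (γ + b) / C + I * (1 / (1 - ρ))) / I) :=
          mul_le_mul_of_nonneg_left htsum (Nat.cast_nonneg I)
      _ = (I:ℝ) + (γ + b) / C + I * (1 / (1 - ρ)) := by
          field_simp
  have h3 : (γ + b) / C = γ / C + b / C := add_div _ _ _
  rw [h3] at h2
  nlinarith [mul_nonneg hbC (sub_nonneg.mpr hn₁R), mul_nonneg hbC (by linarith : (0:ℝ) ≤ (I:ℝ)),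
    mul_nonneg hδ (by linarith : (0:ℝ) ≤ (n₁:ℝ)), mul_nonneg hδ (by linarith : (0:ℝ) ≤ (I:ℝ))]

/-- There is a finite constant `K` (depending only on `P_X` and `W`)
such that for all integers `n₁ ≥ 1`, `I ≥ 1` and all reals `γ ≥ 0`, with
`n_j = n₁ + (j−1)·I` (here indexed so that `n_j = n₁ + j·I`, `j : ℕ`),
`n₁ + I · Σ_{j=1}^∞ E[exp(−[S_{n_j} − γ]⁺)] ≤ γ/C + K·(n₁ + I)`. -/
theorem stmt11 {𝒳 𝒴 : Type*} [Fintype 𝒳] [Nonempty 𝒳] [Fintype 𝒴] [Nonempty 𝒴]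
    [MeasurableSpace 𝒳] [DiscreteMeasurableSpace 𝒳]
    [MeasurableSpace 𝒴] [DiscreteMeasurableSpace 𝒴]
    (pX : 𝒳 → ℝ) (hpXpos : ∀ x, 0 < pX x) (hpXsum : ∑ x, pX x = 1)
    (W : 𝒳 → 𝒴 → ℝ) (hWpos : ∀ x y, 0 < W x y) (hWsum : ∀ x, ∑ y, W x y = 1)
    (C : ℝ) (hCdef : C = ∑ x, ∑ y, pX x * W x y * infoDen pX W x y)
    -- `P_{XY} ≠ P_X ⊗ P_Y`, equivalently `C > 0`:
    (hC : 0 < C)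
    {Ω : Type*} [MeasurableSpace Ω] (μ : Measure Ω) [IsProbabilityMeasure μ]
    (X : ℕ → Ω → 𝒳) (Y : ℕ → Ω → 𝒴)
    (hXm : ∀ k, Measurable (X k)) (hYm : ∀ k, Measurable (Y k))
    -- `((X_k, Y_k))_k` is an i.i.d. sequence with law `P_{XY}`:
    (hXYindep : iIndepFun (fun k ω => (X k ω, Y k ω)) μ)
    (hXYlaw : ∀ k x y, μ {ω | X k ω = x ∧ Y k ω = y} = ENNReal.ofReal (pX x * W x y)) :
    ∃ K : ℝ, ∀ n₁ I : ℕ, 1 ≤ n₁ → 1 ≤ I → ∀ γ : ℝ, 0 ≤ γ →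
      Summable (fun j : ℕ => ∫ ω, Real.exp (-(max
          ((∑ k ∈ Finset.range (n₁ + j * I), infoDen pX W (X k ω) (Y k ω)) - γ) 0)) ∂μ)
      ∧ (n₁ : ℝ) + (I : ℝ) * ∑' j : ℕ, (∫ ω, Real.exp (-(max
            ((∑ k ∈ Finset.range (n₁ + j * I), infoDen pX W (X k ω) (Y k ω)) - γ) 0)) ∂μ)
          ≤ γ / C + K * ((n₁ : ℝ) + (I : ℝ)) := by
  classical
  set V : ℕ → Ω → 𝒳 × 𝒴 := fun k ω => (X k ω, Y k ω) with hV'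
  set q : 𝒳 × 𝒴 → ℝ := fun p => pX p.1 * W p.1 p.2 with hq'
  set f : 𝒳 × 𝒴 → ℝ := fun p => infoDen pX W p.1 p.2 with hf'
  have hqpos : ∀ p, 0 < q p := fun p => mul_pos (hpXpos p.1) (hWpos p.1 p.2)
  have hq : ∀ p, 0 ≤ q p := fun p => (hqpos p).le
  have hVm : ∀ k, Measurable (V k) := fun k => (hXm k).prodMk (hYm k)
  have hlaw : ∀ k p, μ {ω | V k ω = p} = ENNReal.ofReal (q p) := by
    intro k p
    have hset : {ω | V k ω = p} = {ω | X k ω = p.1 ∧ Y k ω = p.2} := by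
      ext ω
      simp [hV', Prod.ext_iff]
    rw [hset, hXYlaw k p.1 p.2]
  have hCval : ∑ p, q p * f p = C := by
    rw [hCdef, Fintype.sum_prod_type]
  -- positivity of the output distribution
  have hPYpos : ∀ y, 0 < outDist pX W y := by
    intro y
    apply Finset.sum_pos (fun x _ => mul_pos (hpXpos x) (hWpos x y)) Finset.univ_nonempty
  have hqsum : ∑ p, q p = 1 := by
    rw [Fintype.sum_prod_type]
    have : ∀ x, ∑ y, q (x, y) = pX x := by
      intro x
      simp only [hq']
      rw [← Finset.mul_sum, hWsum x, mul_one]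
    rw [Finset.sum_congr rfl (fun x _ => this x), hpXsum]
  have hPYsum : ∑ y, outDist pX W y = 1 := by
    unfold outDist
    rw [Finset.sum_comm]
    have : ∀ x, ∑ y, pX x * W x y = pX x := by
      intro x
      rw [← Finset.mul_sum, hWsum x, mul_one]
    rw [Finset.sum_congr rfl (fun x _ => this x), hpXsum]
  have hexpf : ∀ p : 𝒳 × 𝒴, Real.exp (-f p) = outDist pX W p.2 / W p.1 p.2 := by
    intro p
    rw [hf']
    show Real.exp (-infoDen pX W p.1 p.2) = _
    unfold infoDen
    rw [Real.exp_neg, Real.exp_log (div_pos (hWpos p.1 p.2) (hPYpos p.2))]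
    rw [inv_div]
  have hsum2 : ∑ p, q p * Real.exp (-f p) = 1 := by
    have hterm : ∀ p : 𝒳 × 𝒴, q p * Real.exp (-f p) = pX p.1 * outDist pX W p.2 := by
      intro p
      have hW : W p.1 p.2 ≠ 0 := (hWpos p.1 p.2).ne'
      rw [hexpf p, hq']
      field_simp
    rw [Finset.sum_congr rfl (fun p _ => hterm p), Fintype.sum_prod_type]
    have : ∀ x, ∑ y, pX x * outDist pX W y = pX x := by
      intro x
      rw [← Finset.mul_sum, hPYsum, mul_one]
    rw [Finset.sum_congr rfl (fun x _ => this x), hpXsum]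
  -- the Chernoff quantity
  set ρ : ℝ := ∑ p, q p * Real.exp (-f p / 2) with hρ'
  have hρ0 : 0 ≤ ρ := Finset.sum_nonneg (fun p _ => mul_nonneg (hq p) (Real.exp_pos _).le)
  -- pointwise AM-GM
  have hptle : ∀ p : 𝒳 × 𝒴, q p * Real.exp (-f p / 2)
      ≤ q p * ((1 + Real.exp (-f p)) / 2) := by
    intro p
    apply mul_le_mul_of_nonneg_left _ (hq p)
    have hu : Real.exp (-f p) = Real.exp (-f p / 2) * Real.exp (-f p / 2) := by
      rw [← Real.exp_add]; ring_nf
    nlinarith [Real.exp_pos (-f p / 2), sq_nonneg (Real.exp (-f p / 2) - 1)]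
  have hp₀ : ∃ p : 𝒳 × 𝒴, f p ≠ 0 := by
    by_contra h
    push_neg at h
    have : C = 0 := by
      rw [← hCval]
      apply Finset.sum_eq_zero
      intro p _
      rw [h p, mul_zero]
    linarith
  obtain ⟨p₀, hp₀⟩ := hp₀
  have hstrict : q p₀ * Real.exp (-f p₀ / 2) < q p₀ * ((1 + Real.exp (-f p₀)) / 2) := by
    apply mul_lt_mul_of_pos_left _ (hqpos p₀)
    have hu : Real.exp (-f p₀) = Real.exp (-f p₀ / 2) * Real.exp (-f p₀ / 2) := by
      rw [← Real.exp_add]; ring_nf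
    have hne : Real.exp (-f p₀ / 2) ≠ 1 := by
      intro h
      rw [Real.exp_eq_one_iff] at h
      apply hp₀
      linarith
    nlinarith [Real.exp_pos (-f p₀ / 2), sq_pos_of_ne_zero (sub_ne_zero.mpr hne)]
  have hρ1 : ρ < 1 := by
    have h1 : ρ < ∑ p, q p * ((1 + Real.exp (-f p)) / 2) := by
      rw [hρ']
      apply Finset.sum_lt_sum (fun p _ => hptle p) ⟨p₀, Finset.mem_univ p₀, hstrict⟩
    have h2 : ∑ p, q p * ((1 + Real.exp (-f p)) / 2)
        = ((∑ p, q p) + ∑ p, q p * Real.exp (-f p)) / 2 := by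
      rw [← Finset.sum_add_distrib, Finset.sum_div]
      apply Finset.sum_congr rfl
      intro p _
      ring
    rw [h2, hqsum, hsum2] at h1
    norm_num at h1
    exact h1
  -- the bound on |f|
  set b : ℝ := ∑ p, |f p| with hb'
  have hb : ∀ p, |f p| ≤ b := by
    intro p
    exact Finset.single_le_sum (fun p' _ => abs_nonneg (f p')) (Finset.mem_univ p)
  obtain ⟨K, hK⟩ := main_abstract V hVm hXYindep q hq hlaw f C hC hCval ρ hρ0 hρ1 rfl b hb
  exact ⟨K, hK⟩
end

section
/- For all integers n_1 ≥ 1 and I ≥ 1 and all real γ ≥ 0, set n_j = n_1 + (j−1)I and τ_0 = inf{j ≥ 1 : S_{n_j} ≥ γ}. Then τ_0 < ∞ almost surely, n_{τ_0} is integrable, and E[n_{τ_0}] ≤ (γ + max(n_1, I)·B)/C. -/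
open MeasureTheory ProbabilityTheory

open scoped ENNReal NNReal

namespace Stmt12Aux

variable {Ω : Type*}

/-- partial sums -/
noncomputable def Ssum (f : ℕ → Ω → ℝ) (n : ℕ) (ω : Ω) : ℝ := ∑ k ∈ Finset.range n, f k ω

/-- hitting index -/
noncomputable def tau (f : ℕ → Ω → ℝ) (γ : ℝ) (n₁ I : ℕ) (ω : Ω) : ℕ :=
  sInf {j : ℕ | γ ≤ Ssum f (n₁ + j * I) ω}

/-- event that all decoding attempts up to `j` fail -/
def Eset (f : ℕ → Ω → ℝ) (γ : ℝ) (n₁ I : ℕ) (j : ℕ) : Set Ω :=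
  {ω | ∀ j' ≤ j, Ssum f (n₁ + j' * I) ω < γ}

noncomputable def chi (f : ℕ → Ω → ℝ) (γ : ℝ) (n₁ I : ℕ) (j : ℕ) : Ω → ℝ :=
  (Eset f γ n₁ I j).indicator fun _ => (1 : ℝ)

/-- block sums -/
noncomputable def Dblk (f : ℕ → Ω → ℝ) (n₁ I : ℕ) (j : ℕ) (ω : Ω) : ℝ :=
  ∑ k ∈ Finset.Ico (n₁ + j * I) (n₁ + (j + 1) * I), f k ω

end Stmt12Aux

lemma exp_le_quad {x : ℝ} (hx : |x| ≤ 1) : Real.exp x ≤ 1 + x + 3/4 * x^2 := by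
  have h := Real.exp_bound hx (n := 2) (by norm_num)
  have h2 : ∑ i ∈ Finset.range 2, x ^ i / (Nat.factorial i : ℝ) = 1 + x := by
    simp [Finset.sum_range_succ]
  rw [h2] at h
  have h4 := (abs_le.1 h).2
  have h3 : |x| ^ 2 = x ^ 2 := sq_abs x
  norm_num [Nat.factorial] at h4
  nlinarith [h4]

set_option maxHeartbeats 1600000 in
open Stmt12Aux Finset in
theorem wald_aux {Ω : Type*} [MeasurableSpace Ω] (μ : Measure Ω) [IsProbabilityMeasure μ]
    (f : ℕ → Ω → ℝ) (hmeas : ∀ k, Measurable (f k))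
    (hindep : iIndepFun f μ)
    (C B : ℝ) (hC : 0 < C) (hCB : C ≤ B)
    (hbd : ∀ k ω, |f k ω| ≤ B)
    (hmean : ∀ k, ∫ ω, f k ω ∂μ = C)
    (n₁ I : ℕ) (hn₁ : 1 ≤ n₁) (hI : 1 ≤ I) (γ : ℝ) (hγ : 0 ≤ γ) :
    μ {ω | ∀ j : ℕ, Ssum f (n₁ + j * I) ω < γ} = 0
    ∧ Integrable (fun ω => ((n₁ + tau f γ n₁ I ω * I : ℕ) : ℝ)) μ
    ∧ ∫ ω, ((n₁ + tau f γ n₁ I ω * I : ℕ) : ℝ) ∂μ ≤ (γ + (max n₁ I : ℕ) * B) / C := by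
  have hB : 0 < B := lt_of_lt_of_le hC hCB
  have hSmeas : ∀ n, Measurable (Ssum f n) := fun n =>
    Finset.measurable_sum _ fun k _ => hmeas k
  have hfint : ∀ k, Integrable (f k) μ := by
    intro k
    refine ⟨(hmeas k).aestronglyMeasurable, HasFiniteIntegral.of_bounded (C := B) ?_⟩
    exact Filter.Eventually.of_forall fun ω => by simpa [Real.norm_eq_abs] using hbd k ω
  have hSint : ∀ n, Integrable (Ssum f n) μ := fun n =>
    integrable_finset_sum _ fun k _ => hfint k
  have hSmean : ∀ n, ∫ ω, Ssum f n ω ∂μ = n * C := by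
    intro n
    simp only [Ssum]
    rw [integral_finset_sum _ fun k _ => hfint k]
    simp [hmean]
  have hSbd : ∀ n ω, |Ssum f n ω| ≤ n * B := by
    intro n ω
    calc |Ssum f n ω| ≤ ∑ k ∈ Finset.range n, |f k ω| :=
          Finset.abs_sum_le_sum_abs _ _
      _ ≤ ∑ k ∈ Finset.range n, B := Finset.sum_le_sum fun k _ => hbd k ω
      _ = n * B := by simp [mul_comm]
  -- Chernoff parameters
  obtain ⟨t, ht_def⟩ : ∃ t : ℝ, t = -(2 * C / (3 * B ^ 2)) := ⟨_, rfl⟩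
  have ht : t ≤ 0 := by
    rw [ht_def]
    have : (0:ℝ) ≤ 2 * C / (3 * B ^ 2) := by positivity
    linarith
  obtain ⟨ρ, hρ_def⟩ : ∃ ρ : ℝ, ρ = 1 - C ^ 2 / (3 * B ^ 2) := ⟨_, rfl⟩
  have hρ0 : 0 < ρ := by
    rw [hρ_def]
    have : C ^ 2 / (3 * B ^ 2) ≤ B ^ 2 / (3 * B ^ 2) := by
      have h : C ^ 2 ≤ B ^ 2 := by nlinarith
      gcongr
    have h2 : B ^ 2 / (3 * B ^ 2) = 1 / 3 := by field_simp
    linarith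
  have hρ1 : ρ < 1 := by
    rw [hρ_def]
    have : 0 < C ^ 2 / (3 * B ^ 2) := by positivity
    linarith
  have htf : ∀ k ω, |t * f k ω| ≤ 1 := by
    intro k ω
    rw [abs_mul]
    have h1 : |t| = 2 * C / (3 * B ^ 2) := by
      rw [ht_def, abs_neg, abs_of_nonneg (by positivity)]
    rw [h1]
    have h2 := hbd k ω
    have h3 : 2 * C / (3 * B ^ 2) * |f k ω| ≤ 2 * C / (3 * B ^ 2) * B := by
      gcongr
    refine h3.trans ?_
    rw [div_mul_eq_mul_div, div_le_one (by positivity)]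
    nlinarith
  -- mgf bound for a single variable
  have hmgf : ∀ k, mgf (f k) μ t ≤ ρ := by
    intro k
    have hptwise : ∀ ω, Real.exp (t * f k ω) ≤ 1 + t * f k ω + 3/4 * t^2 * B^2 := by
      intro ω
      refine (exp_le_quad (htf k ω)).trans ?_
      have h5 : f k ω ^ 2 ≤ B ^ 2 := by
        nlinarith [sq_abs (f k ω), hbd k ω, abs_nonneg (f k ω)]
      rw [mul_pow]
      nlinarith [sq_nonneg t, mul_nonneg (sq_nonneg t) (sub_nonneg.2 h5)]
    have hint0 : Integrable (fun ω => 1 + t * f k ω) μ := by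
      exact (integrable_const 1).add ((hfint k).const_mul t)
    have hint1 : Integrable (fun ω => 1 + t * f k ω + 3/4 * t^2 * B^2) μ := by
      exact hint0.add (integrable_const _)
    have hintexp : Integrable (fun ω => Real.exp (t * f k ω)) μ := by
      refine ⟨(((hmeas k).const_mul t).exp).aestronglyMeasurable,
        HasFiniteIntegral.of_bounded (C := 1 + |t| * B + 3/4 * t^2 * B^2) ?_⟩
      refine Filter.Eventually.of_forall fun ω => ?_
      rw [Real.norm_eq_abs, abs_of_pos (Real.exp_pos _)]
      refine (hptwise ω).trans ?_
      have h1 : t * f k ω ≤ |t * f k ω| := le_abs_self _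
      have h2 : |t * f k ω| ≤ |t| * B := by
        rw [abs_mul]
        exact mul_le_mul_of_nonneg_left (hbd k ω) (abs_nonneg t)
      linarith
    calc mgf (f k) μ t = ∫ ω, Real.exp (t * f k ω) ∂μ := rfl
      _ ≤ ∫ ω, (1 + t * f k ω + 3/4 * t^2 * B^2) ∂μ :=
          integral_mono hintexp hint1 hptwise
      _ = 1 + t * C + 3/4 * t^2 * B^2 := by
          rw [integral_add hint0 (integrable_const _),
            integral_add (integrable_const 1) (by exact (hfint k).const_mul t),
            integral_const, integral_const_mul, hmean]
          simp
      _ = ρ := by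
          rw [hρ_def, ht_def]
          field_simp
          ring
  have hexpSint : ∀ n, Integrable (fun ω => Real.exp (t * Ssum f n ω)) μ := by
    intro n
    refine ⟨((hSmeas n).const_mul t).exp.aestronglyMeasurable,
      HasFiniteIntegral.of_bounded (C := Real.exp (|t| * (n * B))) ?_⟩
    refine Filter.Eventually.of_forall fun ω => ?_
    rw [Real.norm_eq_abs, abs_of_pos (Real.exp_pos _)]
    apply Real.exp_le_exp.2
    calc t * Ssum f n ω ≤ |t * Ssum f n ω| := le_abs_self _
      _ = |t| * |Ssum f n ω| := abs_mul _ _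
      _ ≤ |t| * (n * B) := mul_le_mul_of_nonneg_left (hSbd n ω) (abs_nonneg t)
  have hchern : ∀ n, (μ {ω | Ssum f n ω ≤ γ}).toReal ≤ Real.exp (-t * γ) * ρ ^ n := by
    intro n
    refine (measure_le_le_exp_mul_mgf γ ht (hexpSint n)).trans ?_
    refine mul_le_mul_of_nonneg_left ?_ (Real.exp_pos _).le
    have hfun : Ssum f n = ∑ k ∈ Finset.range n, f k := by
      funext ω; simp [Ssum]
    rw [hfun, hindep.mgf_sum hmeas]
    calc ∏ k ∈ Finset.range n, mgf (f k) μ t ≤ ∏ k ∈ Finset.range n, ρ :=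
          Finset.prod_le_prod (fun k _ => mgf_nonneg) (fun k _ => hmgf k)
      _ = ρ ^ n := by simp
  -- geometric bounds on failure events
  have hEmeas : ∀ j, MeasurableSet (Eset f γ n₁ I j) := by
    intro j
    have h : Eset f γ n₁ I j = ⋂ (j' : ℕ) (_ : j' ≤ j), {ω | Ssum f (n₁ + j' * I) ω < γ} := by
      ext ω; simp [Eset]
    rw [h]
    exact MeasurableSet.iInter fun j' => MeasurableSet.iInter fun _ =>
      measurableSet_lt (hSmeas _) measurable_const
  have hEchern : ∀ j, (μ (Eset f γ n₁ I j)).toReal ≤ Real.exp (-t * γ) * ρ ^ (n₁ + j * I) := by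
    intro j
    refine le_trans ?_ (hchern (n₁ + j * I))
    refine ENNReal.toReal_mono (measure_ne_top μ _) (measure_mono ?_)
    intro ω hω
    exact (hω j le_rfl).le
  have hgeom : ∀ j : ℕ, Real.exp (-t * γ) * ρ ^ (n₁ + j * I)
      = (Real.exp (-t*γ) * ρ ^ n₁) * (ρ ^ I) ^ j := by
    intro j; rw [pow_add, pow_mul]; ring
  have hρI : ρ ^ I < 1 := pow_lt_one₀ hρ0.le hρ1 (by omega)
  have hsumgeo : Summable (fun j : ℕ => Real.exp (-t * γ) * ρ ^ (n₁ + j * I)) := by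
    have h : Summable (fun j : ℕ => (Real.exp (-t*γ) * ρ ^ n₁) * (ρ ^ I) ^ j) :=
      (summable_geometric_of_lt_one (by positivity) hρI).mul_left _
    exact h.congr fun j => (hgeom j).symm
  have hsumE : ∑' j, μ (Eset f γ n₁ I j) ≠ ⊤ := by
    have hb : ∀ j, μ (Eset f γ n₁ I j) ≤ ENNReal.ofReal (Real.exp (-t * γ) * ρ ^ (n₁ + j * I)) := by
      intro j
      rw [← ENNReal.ofReal_toReal (measure_ne_top μ (Eset f γ n₁ I j))]
      exact ENNReal.ofReal_le_ofReal (hEchern j)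
    refine ne_top_of_le_ne_top ?_ (ENNReal.tsum_le_tsum hb)
    rw [← ENNReal.ofReal_tsum_of_nonneg (fun j => by positivity) hsumgeo]
    exact ENNReal.ofReal_ne_top
  -- part 1
  have h1 : μ {ω | ∀ j : ℕ, Ssum f (n₁ + j * I) ω < γ} = 0 := by
    have hbb : ∀ j : ℕ, (μ {ω | ∀ i : ℕ, Ssum f (n₁ + i * I) ω < γ}).toReal
        ≤ (Real.exp (-t*γ) * ρ ^ n₁) * (ρ ^ I) ^ j := by
      intro j
      rw [← hgeom j]
      refine le_trans (ENNReal.toReal_mono (measure_ne_top μ _) (measure_mono ?_)) (hchern _)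
      exact fun ω hω => (hω j).le
    have htend : Filter.Tendsto (fun j : ℕ => (Real.exp (-t*γ) * ρ ^ n₁) * (ρ ^ I) ^ j)
        Filter.atTop (nhds 0) := by
      rw [show (0:ℝ) = (Real.exp (-t*γ) * ρ ^ n₁) * 0 by ring]
      exact (tendsto_pow_atTop_nhds_zero_of_lt_one (by positivity) hρI).const_mul _
    have h0 : (μ {ω | ∀ i : ℕ, Ssum f (n₁ + i * I) ω < γ}).toReal ≤ 0 :=
      ge_of_tendsto' htend hbb
    have h00 : (μ {ω | ∀ i : ℕ, Ssum f (n₁ + i * I) ω < γ}).toReal = 0 :=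
      le_antisymm h0 ENNReal.toReal_nonneg
    exact ((ENNReal.toReal_eq_zero_iff _).1 h00).resolve_right (measure_ne_top μ _)
  -- basic facts about tau
  have htau_lt : ∀ ω, {j : ℕ | γ ≤ Ssum f (n₁ + j * I) ω}.Nonempty →
      ∀ j : ℕ, (j < tau f γ n₁ I ω ↔ ∀ j' ≤ j, Ssum f (n₁ + j' * I) ω < γ) := by
    intro ω hne j
    constructor
    · intro hj j' hj'
      by_contra hcon
      push_neg at hcon
      have h2 : tau f γ n₁ I ω ≤ j' := Nat.sInf_le hcon
      omega
    · intro hall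
      by_contra hcon
      push_neg at hcon
      have hmem : γ ≤ Ssum f (n₁ + tau f γ n₁ I ω * I) ω := Nat.sInf_mem hne
      exact absurd hmem (not_le.2 (hall _ hcon))
  have htau0 : ∀ ω, ¬ {j : ℕ | γ ≤ Ssum f (n₁ + j * I) ω}.Nonempty → tau f γ n₁ I ω = 0 := by
    intro ω hne
    simp only [tau, Set.not_nonempty_iff_eq_empty.1 hne, Nat.sInf_empty]
  have hEiff : ∀ ω, {j : ℕ | γ ≤ Ssum f (n₁ + j * I) ω}.Nonempty →
      ∀ j, (ω ∈ Eset f γ n₁ I j ↔ j < tau f γ n₁ I ω) := by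
    intro ω hne j
    simpa [Eset, Set.mem_setOf_eq] using (htau_lt ω hne j).symm
  have hchi : ∀ ω, {j : ℕ | γ ≤ Ssum f (n₁ + j * I) ω}.Nonempty →
      ∀ j, chi f γ n₁ I j ω = if j < tau f γ n₁ I ω then 1 else 0 := by
    intro ω hne j
    by_cases h : j < tau f γ n₁ I ω
    · rw [if_pos h]; exact Set.indicator_of_mem ((hEiff ω hne j).2 h) _
    · rw [if_neg h]; exact Set.indicator_of_notMem (fun hm => h ((hEiff ω hne j).1 hm)) _
  have hchiE : ∀ ω, ¬ {j : ℕ | γ ≤ Ssum f (n₁ + j * I) ω}.Nonempty →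
      ∀ j, chi f γ n₁ I j ω = 1 := by
    intro ω hne j
    refine Set.indicator_of_mem ?_ _
    intro j' _
    by_contra hcon; push_neg at hcon; exact hne ⟨j', hcon⟩
  have htau_tsum : ∀ ω, (tau f γ n₁ I ω : ℝ) = ∑' j, chi f γ n₁ I j ω := by
    intro ω
    by_cases hne : {j : ℕ | γ ≤ Ssum f (n₁ + j * I) ω}.Nonempty
    · rw [tsum_eq_sum (s := Finset.range (tau f γ n₁ I ω))
        (fun j hj => by rw [hchi ω hne j, if_neg (fun h => hj (Finset.mem_range.2 h))])]
      rw [Finset.sum_congr rfl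
        (fun j hj => by rw [hchi ω hne j, if_pos (Finset.mem_range.1 hj)])]
      simp
    · have hns : ¬ Summable (fun _ : ℕ => (1:ℝ)) := by
        rw [summable_const_iff]; norm_num
      rw [htau0 ω hne, tsum_congr (hchiE ω hne), tsum_eq_zero_of_not_summable hns]
      simp
  -- measurability of tau
  have htaumeas : Measurable (tau f γ n₁ I) := by
    refine measurable_to_countable' fun m => ?_
    rcases Nat.eq_zero_or_pos m with hm | hm
    · subst hm
      have hkey : tau f γ n₁ I ⁻¹' {0} =
          {ω | γ ≤ Ssum f (n₁ + 0 * I) ω} ∪ {ω | ∀ j : ℕ, Ssum f (n₁ + j * I) ω < γ} := by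
        ext ω
        simp only [Set.mem_preimage, Set.mem_singleton_iff, Set.mem_union, Set.mem_setOf_eq]
        constructor
        · intro h0
          by_cases hne : {j : ℕ | γ ≤ Ssum f (n₁ + j * I) ω}.Nonempty
          · left
            have hmem : γ ≤ Ssum f (n₁ + tau f γ n₁ I ω * I) ω := Nat.sInf_mem hne
            rwa [h0] at hmem
          · right
            intro j
            by_contra hcon; push_neg at hcon; exact hne ⟨j, hcon⟩
        · rintro (h | h)
          · exact Nat.eq_zero_of_le_zero (Nat.sInf_le h)
          · exact htau0 ω (fun ⟨j, hj⟩ => absurd hj (not_le.2 (h j)))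
      have hset : {ω | ∀ j : ℕ, Ssum f (n₁ + j * I) ω < γ}
          = ⋂ (j : ℕ), {ω | Ssum f (n₁ + j * I) ω < γ} := by
        ext ω; simp
      rw [hkey, hset]
      exact (measurableSet_le measurable_const (hSmeas _)).union
        (MeasurableSet.iInter fun j => measurableSet_lt (hSmeas _) measurable_const)
    · have hkey : tau f γ n₁ I ⁻¹' {m} =
          {ω | γ ≤ Ssum f (n₁ + m * I) ω} ∩
            ⋂ (j : ℕ) (_ : j < m), {ω | Ssum f (n₁ + j * I) ω < γ} := by
        ext ω
        simp only [Set.mem_preimage, Set.mem_singleton_iff, Set.mem_inter_iff,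
          Set.mem_iInter, Set.mem_setOf_eq]
        constructor
        · intro h0
          have hne : {j : ℕ | γ ≤ Ssum f (n₁ + j * I) ω}.Nonempty := by
            by_contra hne
            rw [htau0 ω hne] at h0
            omega
          have hmem : γ ≤ Ssum f (n₁ + tau f γ n₁ I ω * I) ω := Nat.sInf_mem hne
          rw [h0] at hmem
          refine ⟨hmem, fun j hj => ?_⟩
          by_contra hcon; push_neg at hcon
          have h9 : tau f γ n₁ I ω ≤ j :=
            Nat.sInf_le (show j ∈ {i : ℕ | γ ≤ Ssum f (n₁ + i * I) ω} from hcon)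
          omega
        · rintro ⟨hmem, hlt⟩
          refine le_antisymm (Nat.sInf_le hmem) ?_
          by_contra hcon; push_neg at hcon
          have hmem2 : γ ≤ Ssum f (n₁ + tau f γ n₁ I ω * I) ω :=
            Nat.sInf_mem (⟨m, hmem⟩ : Set.Nonempty {i : ℕ | γ ≤ Ssum f (n₁ + i * I) ω})
          exact absurd hmem2 (not_le.2 (hlt _ hcon))
      rw [hkey]
      exact (measurableSet_le measurable_const (hSmeas _)).inter
        (MeasurableSet.iInter fun j => MeasurableSet.iInter fun _ =>
          measurableSet_lt (hSmeas _) measurable_const)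
  
  -- integrability of tau
  have htauRmeas : Measurable (fun ω => (tau f γ n₁ I ω : ℝ)) :=
    Measurable.comp (g := fun n : ℕ => (n : ℝ)) Measurable.of_discrete htaumeas
  have hchimeas : ∀ j, Measurable (chi f γ n₁ I j) := fun j =>
    measurable_const.indicator (hEmeas j)
  have hchiint : ∀ j, Integrable (chi f γ n₁ I j) μ := fun j =>
    (integrable_const 1).indicator (hEmeas j)
  have hchival : ∀ j, ∫ ω, chi f γ n₁ I j ω ∂μ = (μ (Eset f γ n₁ I j)).toReal := by
    intro j
    have h : ∫ ω, chi f γ n₁ I j ω ∂μ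
        = ∫ ω, (Eset f γ n₁ I j).indicator (fun _ => (1:ℝ)) ω ∂μ := rfl
    rw [h, integral_indicator_const (1:ℝ) (hEmeas j)]
    simp [Measure.real]
  have hchinorm : ∀ j, ∫⁻ ω, ‖chi f γ n₁ I j ω‖₊ ∂μ ≤ μ (Eset f γ n₁ I j) := by
    intro j
    have hb : ∀ ω, (‖chi f γ n₁ I j ω‖₊ : ℝ≥0∞)
        ≤ (Eset f γ n₁ I j).indicator (fun _ => (1:ℝ≥0∞)) ω := by
      intro ω
      by_cases h : ω ∈ Eset f γ n₁ I j
      · simp [chi, Set.indicator_of_mem h]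
      · simp [chi, Set.indicator_of_notMem h]
    refine le_trans (lintegral_mono hb) ?_
    rw [lintegral_indicator_const (hEmeas j), one_mul]
  have hlin : ∀ ω, ((tau f γ n₁ I ω : ℕ) : ℝ≥0∞)
      ≤ ∑' j, (Eset f γ n₁ I j).indicator (fun _ => (1:ℝ≥0∞)) ω := by
    intro ω
    have hsub : ∀ j, j < tau f γ n₁ I ω → ω ∈ Eset f γ n₁ I j := by
      intro j hj
      have hne : {i : ℕ | γ ≤ Ssum f (n₁ + i * I) ω}.Nonempty := by
        by_contra hcon
        rw [htau0 ω hcon] at hj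
        omega
      exact (hEiff ω hne j).2 hj
    calc ((tau f γ n₁ I ω : ℕ) : ℝ≥0∞)
        = ∑ j ∈ Finset.range (tau f γ n₁ I ω),
            (Eset f γ n₁ I j).indicator (fun _ => (1:ℝ≥0∞)) ω := by
          rw [Finset.sum_congr rfl
            (fun j hj => Set.indicator_of_mem (hsub j (Finset.mem_range.1 hj)) _)]
          simp
      _ ≤ _ := ENNReal.sum_le_tsum _
  have htauint : Integrable (fun ω => (tau f γ n₁ I ω : ℝ)) μ := by
    refine ⟨htauRmeas.aestronglyMeasurable, ?_⟩
    have hnorm : ∀ ω, (‖(tau f γ n₁ I ω : ℝ)‖₊ : ℝ≥0∞) = ((tau f γ n₁ I ω : ℕ) : ℝ≥0∞) := by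
      intro ω
      rw [← enorm_eq_nnnorm, Real.enorm_eq_ofReal_abs, abs_of_nonneg (by positivity), ENNReal.ofReal_natCast]
    have hfin : ∫⁻ ω, (‖(tau f γ n₁ I ω : ℝ)‖₊ : ℝ≥0∞) ∂μ ≤ ∑' j, μ (Eset f γ n₁ I j) := by
      calc ∫⁻ ω, (‖(tau f γ n₁ I ω : ℝ)‖₊ : ℝ≥0∞) ∂μ
          = ∫⁻ ω, ((tau f γ n₁ I ω : ℕ) : ℝ≥0∞) ∂μ := by
            exact lintegral_congr hnorm
        _ ≤ ∫⁻ ω, ∑' j, (Eset f γ n₁ I j).indicator (fun _ => (1:ℝ≥0∞)) ω ∂μ :=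
            lintegral_mono hlin
        _ = ∑' j, ∫⁻ ω, (Eset f γ n₁ I j).indicator (fun _ => (1:ℝ≥0∞)) ω ∂μ :=
            lintegral_tsum fun j => (measurable_const.indicator (hEmeas j)).aemeasurable
        _ = ∑' j, μ (Eset f γ n₁ I j) := by
            refine tsum_congr fun j => ?_
            rw [lintegral_indicator_const (hEmeas j), one_mul]
    exact lt_of_le_of_lt hfin (lt_top_iff_ne_top.2 hsumE)
  have hFeq : (fun ω => ((n₁ + tau f γ n₁ I ω * I : ℕ) : ℝ))
      = fun ω => (n₁ : ℝ) + (tau f γ n₁ I ω : ℝ) * I := by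
    funext ω; push_cast; ring
  have hFint : Integrable (fun ω => ((n₁ + tau f γ n₁ I ω * I : ℕ) : ℝ)) μ := by
    rw [hFeq]
    exact (integrable_const _).add (htauint.mul_const _)
  have hinttau : ∫ ω, (tau f γ n₁ I ω : ℝ) ∂μ = ∑' j, (μ (Eset f γ n₁ I j)).toReal := by
    have h : (fun ω => (tau f γ n₁ I ω : ℝ)) = fun ω => ∑' j, chi f γ n₁ I j ω :=
      funext htau_tsum
    rw [h, integral_tsum (fun j => (hchimeas j).aestronglyMeasurable)
      (ne_top_of_le_ne_top hsumE (ENNReal.tsum_le_tsum hchinorm))]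
    exact tsum_congr hchival
  
  -- block sums
  have hDmeas : ∀ j, Measurable (Dblk f n₁ I j) := fun j =>
    Finset.measurable_sum _ fun k _ => hmeas k
  have hDint : ∀ j, Integrable (Dblk f n₁ I j) μ := fun j =>
    integrable_finset_sum _ fun k _ => hfint k
  have hcard : ∀ j : ℕ, (Finset.Ico (n₁ + j * I) (n₁ + (j + 1) * I)).card = I := by
    intro j
    rw [Nat.card_Ico]
    have : n₁ + (j + 1) * I = (n₁ + j * I) + I := by ring
    omega
  have hDmean : ∀ j, ∫ ω, Dblk f n₁ I j ω ∂μ = I * C := by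
    intro j
    simp only [Dblk]
    rw [integral_finset_sum _ fun k _ => hfint k,
      Finset.sum_congr rfl fun k _ => hmean k, Finset.sum_const, hcard, nsmul_eq_mul]
  have hDbd : ∀ j ω, |Dblk f n₁ I j ω| ≤ I * B := by
    intro j ω
    calc |Dblk f n₁ I j ω|
        ≤ ∑ k ∈ Finset.Ico (n₁ + j * I) (n₁ + (j + 1) * I), |f k ω| :=
          Finset.abs_sum_le_sum_abs _ _
      _ ≤ ∑ k ∈ Finset.Ico (n₁ + j * I) (n₁ + (j + 1) * I), B :=
          Finset.sum_le_sum fun k _ => hbd k ω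
      _ = I * B := by rw [Finset.sum_const, hcard, nsmul_eq_mul]
  -- independence of block sum and failure event
  have hindepDchi : ∀ j, IndepFun (Dblk f n₁ I j) (chi f γ n₁ I j) μ := by
    intro j
    obtain ⟨Sb, hSb⟩ : ∃ Sb : Finset ℕ, Sb = Finset.Ico (n₁ + j * I) (n₁ + (j + 1) * I) := ⟨_, rfl⟩
    obtain ⟨Tb, hTb⟩ : ∃ Tb : Finset ℕ, Tb = Finset.range (n₁ + j * I) := ⟨_, rfl⟩
    have hdisj : Disjoint Sb Tb := by
      rw [Finset.disjoint_left]
      intro k hk hk'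
      rw [hSb, Finset.mem_Ico] at hk
      rw [hTb, Finset.mem_range] at hk'
      omega
    have base := hindep.indepFun_finset Sb Tb hdisj hmeas
    have hmulle : ∀ j', j' ≤ j → n₁ + j' * I ≤ n₁ + j * I := by
      intro j' hj'
      have := Nat.mul_le_mul_right I hj'
      omega
    have hsumeq : ∀ (a : Ω) (j' : ℕ), j' ≤ j →
        (∑ i ∈ Tb.attach, if (i : ℕ) < n₁ + j' * I then f i a else 0)
          = Ssum f (n₁ + j' * I) a := by
      intro a j' hj'
      rw [Finset.sum_attach Tb (fun k => if k < n₁ + j' * I then f k a else 0),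
        ← Finset.sum_filter]
      simp only [Ssum]
      congr 1
      ext k
      simp only [Finset.mem_filter, Finset.mem_range, hTb]
      constructor
      · exact fun h => h.2
      · intro h; exact ⟨lt_of_lt_of_le h (hmulle j' hj'), h⟩
    have hφ : Measurable (fun v : ((i : Sb) → ℝ) => ∑ i ∈ Sb.attach, v i) :=
      Finset.measurable_sum _ fun i _ => measurable_pi_apply i
    have hψ : Measurable (fun v : ((i : Tb) → ℝ) =>
        ({v : (i : Tb) → ℝ | ∀ j' ≤ j,
          (∑ i ∈ Tb.attach, if (i : ℕ) < n₁ + j' * I then v i else 0) < γ}).indicator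
          (fun _ => (1:ℝ)) v) := by
      refine measurable_const.indicator ?_
      have hset : {v : (i : Tb) → ℝ | ∀ j' ≤ j,
            (∑ i ∈ Tb.attach, if (i : ℕ) < n₁ + j' * I then v i else 0) < γ}
          = ⋂ (j' : ℕ) (_ : j' ≤ j),
            {v | (∑ i ∈ Tb.attach, if (i : ℕ) < n₁ + j' * I then v i else 0) < γ} := by
        ext v; simp
      rw [hset]
      refine MeasurableSet.iInter fun j' => MeasurableSet.iInter fun _ => ?_
      refine measurableSet_lt ?_ measurable_const
      refine Finset.measurable_sum _ fun i _ => ?_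
      by_cases h : (i : ℕ) < n₁ + j' * I
      · simpa [h] using measurable_pi_apply i
      · simpa [h] using measurable_const
    have hcomp := base.comp hφ hψ
    have heq1 : (fun v : ((i : Sb) → ℝ) => ∑ i ∈ Sb.attach, v i)
        ∘ (fun a (i : Sb) => f i a) = Dblk f n₁ I j := by
      funext a
      simp only [Function.comp_apply, Dblk]
      rw [Finset.sum_attach Sb (fun k => f k a), hSb]
    have heq2 : (fun v : ((i : Tb) → ℝ) =>
        ({v : (i : Tb) → ℝ | ∀ j' ≤ j,
          (∑ i ∈ Tb.attach, if (i : ℕ) < n₁ + j' * I then v i else 0) < γ}).indicator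
          (fun _ => (1:ℝ)) v) ∘ (fun a (i : Tb) => f i a) = chi f γ n₁ I j := by
      funext a
      simp only [Function.comp_apply, chi]
      by_cases hmem : a ∈ Eset f γ n₁ I j
      · rw [Set.indicator_of_mem hmem, Set.indicator_of_mem]
        simp only [Set.mem_setOf_eq]
        intro j' hj'
        rw [hsumeq a j' hj']
        exact hmem j' hj'
      · have hnm : (fun i : Tb => f i a) ∉ {v : (i : Tb) → ℝ | ∀ j' ≤ j,
            (∑ i ∈ Tb.attach, if (i : ℕ) < n₁ + j' * I then v i else 0) < γ} := by
          intro hv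
          exact hmem fun j' hj' => by rw [← hsumeq a j' hj']; exact hv j' hj'
        rw [Set.indicator_of_notMem hnm, Set.indicator_of_notMem hmem]
    rw [heq1, heq2] at hcomp
    exact hcomp
  have hDchiint : ∀ j, ∫ ω, Dblk f n₁ I j ω * chi f γ n₁ I j ω ∂μ
      = (I * C) * (μ (Eset f γ n₁ I j)).toReal := by
    intro j
    have h := (hindepDchi j).integral_mul_eq_mul_integral (hDmeas j).aestronglyMeasurable
      (hchimeas j).aestronglyMeasurable
    have h2 : ∫ ω, Dblk f n₁ I j ω * chi f γ n₁ I j ω ∂μ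
        = integral μ (Dblk f n₁ I j * chi f γ n₁ I j) := rfl
    rw [h2, h, hDmean j, hchival j]
  
  -- telescoping
  have htel : ∀ (m : ℕ) (ω : Ω), Ssum f (n₁ + m * I) ω
      = Ssum f n₁ ω + ∑ j ∈ Finset.range m, Dblk f n₁ I j ω := by
    intro m ω
    induction m with
    | zero => simp
    | succ m ih =>
      have hle : n₁ + m * I ≤ n₁ + (m + 1) * I := by
        have : m * I ≤ (m + 1) * I := Nat.mul_le_mul_right I (by omega)
        omega
      have hstep : Ssum f (n₁ + (m + 1) * I) ω
          = Ssum f (n₁ + m * I) ω + Dblk f n₁ I m ω := by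
        simp only [Ssum, Dblk, Finset.range_eq_Ico]
        rw [← Finset.sum_Ico_consecutive (fun k => f k ω) (Nat.zero_le (n₁ + m * I)) hle]
      rw [Finset.sum_range_succ, hstep, ih]
      ring
  -- pathwise identity on the good set
  have hGpath : ∀ ω, {i : ℕ | γ ≤ Ssum f (n₁ + i * I) ω}.Nonempty →
      (∑' j, Dblk f n₁ I j ω * chi f γ n₁ I j ω)
        = Ssum f (n₁ + tau f γ n₁ I ω * I) ω - Ssum f n₁ ω := by
    intro ω hne
    rw [tsum_eq_sum (s := Finset.range (tau f γ n₁ I ω))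
      (fun j hj => by rw [hchi ω hne j, if_neg (fun h => hj (Finset.mem_range.2 h)), mul_zero])]
    rw [Finset.sum_congr rfl (fun j hj => by
      rw [hchi ω hne j, if_pos (Finset.mem_range.1 hj), mul_one])]
    rw [htel (tau f γ n₁ I ω) ω]
    ring
  have hGae : (fun ω => ∑' j, Dblk f n₁ I j ω * chi f γ n₁ I j ω)
      =ᵐ[μ] (fun ω => Ssum f (n₁ + tau f γ n₁ I ω * I) ω - Ssum f n₁ ω) := by
    have hae : ∀ᵐ ω ∂μ, {i : ℕ | γ ≤ Ssum f (n₁ + i * I) ω}.Nonempty := by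
      rw [ae_iff]
      refine measure_mono_null ?_ h1
      intro ω hω j
      by_contra hcon
      push_neg at hcon
      exact hω ⟨j, hcon⟩
    filter_upwards [hae] with ω hω
    exact hGpath ω hω
  -- measurability and integrability of the stopped sum
  have hSnτmeas : Measurable (fun ω => Ssum f (n₁ + tau f γ n₁ I ω * I) ω) := by
    have huncur : Measurable (fun p : Ω × ℕ => Ssum f (n₁ + p.2 * I) p.1) :=
      measurable_from_prod_countable_left fun m => hSmeas (n₁ + m * I)
    exact huncur.comp (measurable_id.prodMk htaumeas)
  have hSnτbd : ∀ ω, ‖Ssum f (n₁ + tau f γ n₁ I ω * I) ω‖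
      ≤ B * ((n₁ + tau f γ n₁ I ω * I : ℕ) : ℝ) := by
    intro ω
    rw [Real.norm_eq_abs]
    exact le_of_le_of_eq (hSbd _ ω) (mul_comm _ _)
  have hSnτint : Integrable (fun ω => Ssum f (n₁ + tau f γ n₁ I ω * I) ω) μ :=
    Integrable.mono' (hFint.const_mul B) hSnτmeas.aestronglyMeasurable
      (Filter.Eventually.of_forall hSnτbd)
  -- pathwise upper bound for the stopped sum
  have hupper : ∀ ω, Ssum f (n₁ + tau f γ n₁ I ω * I) ω ≤ γ + ((max n₁ I : ℕ) : ℝ) * B := by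
    intro ω
    rcases Nat.eq_zero_or_pos (tau f γ n₁ I ω) with h0 | hpos
    · have h00 : n₁ + tau f γ n₁ I ω * I = n₁ := by rw [h0]; ring
      rw [h00]
      have hs := (le_abs_self _).trans (hSbd n₁ ω)
      have hles : (n₁ : ℝ) ≤ ((max n₁ I : ℕ) : ℝ) := by
        exact_mod_cast Nat.cast_le.2 (le_max_left n₁ I)
      nlinarith [hB.le, mul_nonneg (sub_nonneg.2 hles) hB.le]
    · obtain ⟨m, hm⟩ : ∃ m, tau f γ n₁ I ω = m + 1 := ⟨tau f γ n₁ I ω - 1, by omega⟩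
      have hne : {i : ℕ | γ ≤ Ssum f (n₁ + i * I) ω}.Nonempty := by
        by_contra hcon
        rw [htau0 ω hcon] at hm
        omega
      have hmlt : Ssum f (n₁ + m * I) ω < γ := by
        have hlt : m < tau f γ n₁ I ω := by omega
        exact ((htau_lt ω hne m).1 hlt) m le_rfl
      have hstep : Ssum f (n₁ + (m + 1) * I) ω
          = Ssum f (n₁ + m * I) ω + Dblk f n₁ I m ω := by
        rw [htel (m + 1) ω, htel m ω, Finset.sum_range_succ]
        ring
      rw [hm, hstep]
      have hd := (le_abs_self _).trans (hDbd m ω)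
      have hile : (I : ℝ) ≤ ((max n₁ I : ℕ) : ℝ) := by
        exact_mod_cast Nat.cast_le.2 (le_max_right n₁ I)
      nlinarith [hB.le, mul_nonneg (sub_nonneg.2 hile) hB.le]
  have hSnτle : ∫ ω, Ssum f (n₁ + tau f γ n₁ I ω * I) ω ∂μ
      ≤ γ + ((max n₁ I : ℕ) : ℝ) * B := by
    calc ∫ ω, Ssum f (n₁ + tau f γ n₁ I ω * I) ω ∂μ
        ≤ ∫ _ω, (γ + ((max n₁ I : ℕ) : ℝ) * B) ∂μ :=
          integral_mono hSnτint (integrable_const _) hupper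
      _ = γ + ((max n₁ I : ℕ) : ℝ) * B := by simp
  -- interchange of sum and integral for the Wald identity
  have hGnorm : ∀ j, ∫⁻ ω, ‖Dblk f n₁ I j ω * chi f γ n₁ I j ω‖₊ ∂μ
      ≤ ENNReal.ofReal (I * B) * μ (Eset f γ n₁ I j) := by
    intro j
    have hb : ∀ ω, (‖Dblk f n₁ I j ω * chi f γ n₁ I j ω‖₊ : ℝ≥0∞)
        ≤ (Eset f γ n₁ I j).indicator (fun _ => ENNReal.ofReal (I * B)) ω := by
      intro ω
      by_cases h : ω ∈ Eset f γ n₁ I j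
      · have hone : chi f γ n₁ I j ω = 1 := Set.indicator_of_mem h _
        rw [Set.indicator_of_mem h, hone, mul_one, ← enorm_eq_nnnorm, Real.enorm_eq_ofReal_abs]
        exact ENNReal.ofReal_le_ofReal (hDbd j ω)
      · have hzero : chi f γ n₁ I j ω = 0 := Set.indicator_of_notMem h _
        rw [Set.indicator_of_notMem h, hzero, mul_zero]
        simp
    refine le_trans (lintegral_mono hb) ?_
    rw [lintegral_indicator_const (hEmeas j)]
  have hGsum_ne : ∑' j, ∫⁻ ω, ‖Dblk f n₁ I j ω * chi f γ n₁ I j ω‖₊ ∂μ ≠ ⊤ := by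
    refine ne_top_of_le_ne_top ?_ (ENNReal.tsum_le_tsum hGnorm)
    rw [ENNReal.tsum_mul_left]
    exact ENNReal.mul_ne_top ENNReal.ofReal_ne_top hsumE
  have hGint_eq : ∫ ω, (∑' j, Dblk f n₁ I j ω * chi f γ n₁ I j ω) ∂μ
      = (I * C) * ∑' j, (μ (Eset f γ n₁ I j)).toReal := by
    rw [integral_tsum (f := fun j ω => Dblk f n₁ I j ω * chi f γ n₁ I j ω) (fun j => ((hDmeas j).mul (hchimeas j)).aestronglyMeasurable) hGsum_ne,
      tsum_congr hDchiint]
    exact tsum_mul_left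
  have hGint_eq2 : ∫ ω, (∑' j, Dblk f n₁ I j ω * chi f γ n₁ I j ω) ∂μ
      = ∫ ω, Ssum f (n₁ + tau f γ n₁ I ω * I) ω ∂μ - (n₁ : ℝ) * C := by
    rw [integral_congr_ae hGae, integral_sub hSnτint (hSint n₁), hSmean n₁]
  have hwald := hGint_eq.symm.trans hGint_eq2
  -- final computation
  have hIF : ∫ ω, ((n₁ + tau f γ n₁ I ω * I : ℕ) : ℝ) ∂μ
      = (n₁ : ℝ) + (∑' j, (μ (Eset f γ n₁ I j)).toReal) * I := by
    rw [hFeq, integral_add (integrable_const _) (htauint.mul_const _), integral_const,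
      integral_mul_const, hinttau]
    simp
  have hkey : C * ∫ ω, ((n₁ + tau f γ n₁ I ω * I : ℕ) : ℝ) ∂μ
      = ∫ ω, Ssum f (n₁ + tau f γ n₁ I ω * I) ω ∂μ := by
    rw [hIF]
    have hexp : C * ((n₁ : ℝ) + (∑' j, (μ (Eset f γ n₁ I j)).toReal) * I)
        = (n₁ : ℝ) * C + (I * C) * ∑' j, (μ (Eset f γ n₁ I j)).toReal := by ring
    rw [hexp, hwald]
    ring
  have h3 : ∫ ω, ((n₁ + tau f γ n₁ I ω * I : ℕ) : ℝ) ∂μ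
      ≤ (γ + ((max n₁ I : ℕ) : ℝ) * B) / C := by
    rw [le_div_iff₀ hC]
    calc (∫ ω, ((n₁ + tau f γ n₁ I ω * I : ℕ) : ℝ) ∂μ) * C
        = C * ∫ ω, ((n₁ + tau f γ n₁ I ω * I : ℕ) : ℝ) ∂μ := mul_comm _ _
      _ = ∫ ω, Ssum f (n₁ + tau f γ n₁ I ω * I) ω ∂μ := hkey
      _ ≤ γ + ((max n₁ I : ℕ) : ℝ) * B := hSnτle
  exact ⟨h1, hFint, h3⟩

/-- For `n₁ ≥ 1`, `I ≥ 1`, `γ ≥ 0`, with decoding times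
`n_j = n₁ + (j−1)·I` (here indexed so that `n_j = n₁ + j·I`, `j : ℕ`) and hitting
time `τ₀ = inf{j : S_{n_j} ≥ γ}`: `τ₀ < ∞` a.s., `n_{τ₀}` is integrable, and
`E[n_{τ₀}] ≤ (γ + max(n₁, I)·B)/C`. -/
theorem stmt12 {𝒳 𝒴 : Type*} [Fintype 𝒳] [Nonempty 𝒳] [Fintype 𝒴] [Nonempty 𝒴]
    [MeasurableSpace 𝒳] [DiscreteMeasurableSpace 𝒳]
    [MeasurableSpace 𝒴] [DiscreteMeasurableSpace 𝒴]
    (pX : 𝒳 → ℝ) (hpXpos : ∀ x, 0 < pX x) (hpXsum : ∑ x, pX x = 1)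
    (W : 𝒳 → 𝒴 → ℝ) (hWpos : ∀ x y, 0 < W x y) (hWsum : ∀ x, ∑ y, W x y = 1)
    (C B : ℝ)
    (hCdef : C = ∑ x, ∑ y, pX x * W x y * infoDen pX W x y)
    -- `P_{XY} ≠ P_X ⊗ P_Y`, equivalently `C > 0`:
    (hC : 0 < C)
    (hBdef : B = ⨆ x : 𝒳, ⨆ y : 𝒴, |infoDen pX W x y|)
    {Ω : Type*} [MeasurableSpace Ω] (μ : Measure Ω) [IsProbabilityMeasure μ]
    (X : ℕ → Ω → 𝒳) (Y : ℕ → Ω → 𝒴)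
    (hXm : ∀ k, Measurable (X k)) (hYm : ∀ k, Measurable (Y k))
    -- `((X_k, Y_k))_k` is an i.i.d. sequence with law `P_{XY}`:
    (hXYindep : iIndepFun (fun k ω => (X k ω, Y k ω)) μ)
    (hXYlaw : ∀ k x y, μ {ω | X k ω = x ∧ Y k ω = y} = ENNReal.ofReal (pX x * W x y))
    (n₁ I : ℕ) (hn₁ : 1 ≤ n₁) (hI : 1 ≤ I) (γ : ℝ) (hγ : 0 ≤ γ) :
    -- `τ₀ < ∞` almost surely:
    μ {ω | ∀ j : ℕ, (∑ k ∈ Finset.range (n₁ + j * I), infoDen pX W (X k ω) (Y k ω)) < γ} = 0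
    -- `n_{τ₀}` is integrable:
    ∧ Integrable (fun ω => ((n₁ + (sInf {j : ℕ |
        γ ≤ ∑ k ∈ Finset.range (n₁ + j * I), infoDen pX W (X k ω) (Y k ω)}) * I : ℕ) : ℝ)) μ
    -- `E[n_{τ₀}] ≤ (γ + max(n₁, I)·B)/C`:
    ∧ ∫ ω, ((n₁ + (sInf {j : ℕ |
          γ ≤ ∑ k ∈ Finset.range (n₁ + j * I), infoDen pX W (X k ω) (Y k ω)}) * I : ℕ) : ℝ) ∂μ
        ≤ (γ + (max n₁ I : ℕ) * B) / C := by
  have hmeasg : Measurable (fun p : 𝒳 × 𝒴 => infoDen pX W p.1 p.2) := Measurable.of_discrete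
  have hfmeas : ∀ k, Measurable (fun ω => infoDen pX W (X k ω) (Y k ω)) := fun k =>
    hmeasg.comp ((hXm k).prodMk (hYm k))
  have hindepf : iIndepFun
      (fun k ω => infoDen pX W (X k ω) (Y k ω)) μ := by
    exact hXYindep.comp (fun _ p => infoDen pX W p.1 p.2) (fun _ => hmeasg)
  have hbd : ∀ x y, |infoDen pX W x y| ≤ B := by
    intro x y
    rw [hBdef]
    have h1 : |infoDen pX W x y| ≤ ⨆ y', |infoDen pX W x y'| :=
      le_ciSup (f := fun y' => |infoDen pX W x y'|)
        (Set.Finite.bddAbove (Set.finite_range _)) y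
    exact h1.trans (le_ciSup (f := fun x' => ⨆ y', |infoDen pX W x' y'|)
      (Set.Finite.bddAbove (Set.finite_range _)) x)
  have hCB : C ≤ B := by
    rw [hCdef]
    calc ∑ x, ∑ y, pX x * W x y * infoDen pX W x y
        ≤ ∑ x, ∑ y, pX x * W x y * B := by
          refine Finset.sum_le_sum fun x _ => Finset.sum_le_sum fun y _ => ?_
          exact mul_le_mul_of_nonneg_left ((le_abs_self _).trans (hbd x y))
            (mul_nonneg (hpXpos x).le (hWpos x y).le)
      _ = B := by
          have hx : ∀ x, ∑ y, pX x * W x y * B = pX x * B := by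
            intro x
            rw [← Finset.sum_mul, ← Finset.mul_sum, hWsum x, mul_one]
          rw [Finset.sum_congr rfl fun x _ => hx x, ← Finset.sum_mul, hpXsum, one_mul]
  have hms : ∀ (k : ℕ) (p : 𝒳 × 𝒴), MeasurableSet {ω' | X k ω' = p.1 ∧ Y k ω' = p.2} := by
    intro k p
    have h : {ω' | X k ω' = p.1 ∧ Y k ω' = p.2}
        = (X k ⁻¹' {p.1}) ∩ (Y k ⁻¹' {p.2}) := rfl
    rw [h]
    exact ((hXm k) (measurableSet_singleton _)).inter ((hYm k) (measurableSet_singleton _))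
  have hmean : ∀ k, ∫ ω, infoDen pX W (X k ω) (Y k ω) ∂μ = C := by
    intro k
    have hrep : (fun ω => infoDen pX W (X k ω) (Y k ω))
        = fun ω => ∑ p : 𝒳 × 𝒴,
            ({ω' | X k ω' = p.1 ∧ Y k ω' = p.2}).indicator
              (fun _ => infoDen pX W p.1 p.2) ω := by
      funext ω
      rw [Finset.sum_eq_single (X k ω, Y k ω)]
      · rw [Set.indicator_of_mem (by exact ⟨rfl, rfl⟩)]
      · intro p _ hp
        refine Set.indicator_of_notMem (fun hm => hp ?_) _
        obtain ⟨h1, h2⟩ := hm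
        cases p
        simp_all
      · intro h; exact absurd (Finset.mem_univ _) h
    rw [hrep]
    rw [integral_finset_sum _ (fun p _ => (integrable_const _).indicator (hms k p))]
    have hterm : ∀ p : 𝒳 × 𝒴, ∫ ω, ({ω' | X k ω' = p.1 ∧ Y k ω' = p.2}).indicator
        (fun _ => infoDen pX W p.1 p.2) ω ∂μ
          = pX p.1 * W p.1 p.2 * infoDen pX W p.1 p.2 := by
      intro p
      rw [integral_indicator_const _ (hms k p), Measure.real, hXYlaw k p.1 p.2,
        ENNReal.toReal_ofReal (mul_nonneg (hpXpos p.1).le (hWpos p.1 p.2).le), smul_eq_mul]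
    rw [Finset.sum_congr rfl fun p _ => hterm p, hCdef, Fintype.sum_prod_type]
  exact wald_aux μ (fun k ω => infoDen pX W (X k ω) (Y k ω)) hfmeas hindepf C B hC hCB
    (fun k ω => hbd _ _) hmean n₁ I hn₁ hI γ hγ
end
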